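/- arXiv:1706.04858 — 5 statements merged into one kernel-verified Lean document; each statement's English description precedes it below -/
import Mathlib

section
/- Let (M_i, φ_{ij}) be a surjective inverse system of local Moufang sets over a directed set I admitting a cofinal sequence. Then every projection map p_j : lim← X_i → X_j is surjective; in particular the quotient set lim← X_i has more than 2 equivalence classes and the inverse limit lim← M_i exists as a local Moufang set. -/
/-!
Local Moufang sets, following E. Rijcken, "Local Moufang sets".
A local Moufang set is a set `X` with an equivalence relation (a `Setoid`)
having more than 2 classes, together with root groups `U x` of
equivalence-preserving permutations, satisfying (LM0), (LM1), (LM1'), (LM2).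
We use left actions; the paper's right-composition word `a₁a₂⋯aₙ` corresponds
to our product `aₙ * ⋯ * a₁`, and the paper's conjugation `g^h = h⁻¹gh`
corresponds to `h * g * h⁻¹` (i.e. `MulAut.conj h g`).
-/

variable {X : Type*}

/-- A permutation of `X` preserves the equivalence relation `r`. -/
def PreservesRel (r : Setoid X) (g : Equiv.Perm X) : Prop :=
  ∀ a b : X, r.r a b ↔ r.r (g a) (g b)

/-- A local pre-Moufang set: axioms (LM0), (LM1), (LM1'). -/
structure IsLocalPreMoufangSet (r : Setoid X) (U : X → Subgroup (Equiv.Perm X)) : Prop where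
  /-- `X` has more than two equivalence classes. -/
  big : ∃ a b c : X, ¬ r.r a b ∧ ¬ r.r a c ∧ ¬ r.r b c
  /-- root groups consist of equivalence-preserving permutations -/
  preserves : ∀ x : X, ∀ g ∈ U x, PreservesRel r g
  /-- (LM0): if `x ∼ y` then the induced actions of `U x` and `U y` on the quotient agree -/
  lm0 : ∀ x y : X, r.r x y → ∀ g ∈ U x, ∃ h ∈ U y, ∀ a : X, r.r (g a) (h a)
  /-- (LM1): `U x` fixes `x` ... -/
  fixes : ∀ x : X, ∀ g ∈ U x, g x = x
  /-- (LM1): ... and acts sharply transitively on the complement of the class of `x` -/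
  lm1 : ∀ x a b : X, ¬ r.r a x → ¬ r.r b x → ∃! g : Equiv.Perm X, g ∈ U x ∧ g a = b
  /-- (LM1'): the induced action on the quotient is transitive away from the class of `x` ... -/
  lm1'_trans : ∀ x a b : X, ¬ r.r a x → ¬ r.r b x → ∃ g ∈ U x, r.r (g a) b
  /-- (LM1'): ... and sharply so -/
  lm1'_sharp : ∀ x : X, ∀ g ∈ U x, ∀ h ∈ U x, ∀ a : X, ¬ r.r a x →
    r.r (g a) (h a) → ∀ b : X, r.r (g b) (h b)

/-- A local Moufang set: a local pre-Moufang set satisfying (LM2). -/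
structure IsLocalMoufangSet (r : Setoid X) (U : X → Subgroup (Equiv.Perm X))
    extends IsLocalPreMoufangSet r U : Prop where
  /-- (LM2): `U x ^ g = U (x g)` for all `g` in the little projective group `⟨U y : y⟩` -/
  lm2 : ∀ x : X, ∀ g ∈ (⨆ y : X, U y), (U x).map (MulAut.conj g).toMonoidHom = U (g x)

/-- A homomorphism of local Moufang sets `(X, r, U) → (Y, s, V)`: an
equivalence-and-nonequivalence-preserving map `φ` with `U_x φ ⊆ φ V_{xφ}`, i.e.
every `u ∈ U x` is intertwined by `φ` with some `v ∈ V (φ x)`. -/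
def IsLMSHom {X Y : Type*} (r : Setoid X) (s : Setoid Y)
    (U : X → Subgroup (Equiv.Perm X)) (V : Y → Subgroup (Equiv.Perm Y))
    (φ : X → Y) : Prop :=
  (∀ a b : X, r.r a b ↔ s.r (φ a) (φ b)) ∧
  ∀ x : X, ∀ u ∈ U x, ∃ v ∈ V (φ x), ∀ p : X, φ (u p) = v (φ p)

variable {I : Type*} [Preorder I]

/-- The inverse limit set of an inverse system of sets `Xf i` with transition maps
`φf i j : Xf i → Xf j` for `j ≤ i`. -/
def InvLim (Xf : I → Type*) (φf : ∀ i j : I, j ≤ i → Xf i → Xf j) : Type _ :=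
  {x : ∀ i, Xf i // ∀ (i j : I) (h : j ≤ i), φf i j h (x i) = x j}

/-- The equivalence relation on the inverse limit: two threads are equivalent iff
they are equivalent in every (equivalently, by surjectivity and directedness,
in some) component. -/
def invLimSetoid (Xf : I → Type*) (rf : ∀ i, Setoid (Xf i))
    (φf : ∀ i j : I, j ≤ i → Xf i → Xf j) : Setoid (InvLim Xf φf) :=
  ⟨fun x y => ∀ i : I, (rf i).r (x.1 i) (y.1 i),
    ⟨fun _ i => (rf i).iseqv.refl _,
     fun h i => (rf i).iseqv.symm (h i),
     fun h h' i => (rf i).iseqv.trans (h i) (h' i)⟩⟩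


section Aux
variable {Xf : I → Type*}

/-- A family of permutations compatible with the transition maps. -/
def IsCompat (φf : ∀ i j : I, j ≤ i → Xf i → Xf j) (u : ∀ i, Equiv.Perm (Xf i)) : Prop :=
  ∀ (i j : I) (h : j ≤ i) (p : Xf i), φf i j h (u i p) = u j (φf i j h p)

variable {φf : ∀ i j : I, j ≤ i → Xf i → Xf j}

theorem IsCompat.inv {u : ∀ i, Equiv.Perm (Xf i)} (hu : IsCompat φf u) :
    IsCompat φf (fun i => (u i)⁻¹) := by
  intro i j h p
  have := hu i j h ((u i)⁻¹ p)
  simp only [Equiv.Perm.coe_inv, Equiv.apply_symm_apply] at this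
  simp only [this, Equiv.Perm.coe_inv, Equiv.symm_apply_apply]

/-- The permutation of the inverse limit induced by a compatible family. -/
def compatPerm (u : ∀ i, Equiv.Perm (Xf i)) (hu : IsCompat φf u) :
    Equiv.Perm (InvLim Xf φf) where
  toFun p := ⟨fun i => u i (p.1 i), fun i j h => by rw [hu i j h, p.2]⟩
  invFun p := ⟨fun i => (u i)⁻¹ (p.1 i), fun i j h => by rw [hu.inv i j h, p.2]⟩
  left_inv p := Subtype.ext (funext fun i => by simp)
  right_inv p := Subtype.ext (funext fun i => by simp)

/-- The root groups on the inverse limit: permutations induced componentwise by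
compatible families of root-group elements. -/
def WGrp (Uf : ∀ i, Xf i → Subgroup (Equiv.Perm (Xf i)))
    (φf : ∀ i j : I, j ≤ i → Xf i → Xf j) (x : InvLim Xf φf) :
    Subgroup (Equiv.Perm (InvLim Xf φf)) where
  carrier := {g | ∃ u : ∀ i, Equiv.Perm (Xf i),
    (∀ i, u i ∈ Uf i (x.1 i)) ∧ IsCompat φf u ∧
    ∀ (p : InvLim Xf φf) (i : I), (g p).1 i = u i (p.1 i)}
  one_mem' := ⟨fun _ => 1, fun i => (Uf i _).one_mem, fun _ _ _ _ => rfl, fun _ _ => rfl⟩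
  mul_mem' := by
    rintro g h ⟨u, hu1, hu2, hu3⟩ ⟨v, hv1, hv2, hv3⟩
    refine ⟨fun i => u i * v i, fun i => mul_mem (hu1 i) (hv1 i), fun i j hle p => ?_,
      fun p i => ?_⟩
    · simp only [Equiv.Perm.mul_apply]; rw [hu2, hv2]
    · simp only [Equiv.Perm.mul_apply]; rw [hu3, hv3]
  inv_mem' := by
    rintro g ⟨u, hu1, hu2, hu3⟩
    refine ⟨fun i => (u i)⁻¹, fun i => inv_mem (hu1 i), hu2.inv, fun p i => ?_⟩
    have := hu3 (g⁻¹ p) i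
    simp only [Equiv.Perm.coe_inv, Equiv.apply_symm_apply] at this
    simp only [this, Equiv.Perm.coe_inv, Equiv.symm_apply_apply]

theorem mem_WGrp_of {Uf : ∀ i, Xf i → Subgroup (Equiv.Perm (Xf i))} {x : InvLim Xf φf}
    {u : ∀ i, Equiv.Perm (Xf i)} (hm : ∀ i, u i ∈ Uf i (x.1 i)) (hu : IsCompat φf u) :
    compatPerm u hu ∈ WGrp Uf φf x :=
  ⟨u, hm, hu, fun _ _ => rfl⟩

theorem WGrp_inv_apply {g : Equiv.Perm (InvLim Xf φf)} {u : ∀ i, Equiv.Perm (Xf i)}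
    (hu3 : ∀ (p : InvLim Xf φf) (i : I), (g p).1 i = u i (p.1 i))
    (p : InvLim Xf φf) (i : I) : (g⁻¹ p).1 i = (u i)⁻¹ (p.1 i) := by
  have := hu3 (g⁻¹ p) i
  simp only [Equiv.Perm.coe_inv, Equiv.apply_symm_apply] at this
  simp only [this, Equiv.Perm.coe_inv, Equiv.symm_apply_apply]

end Aux

/-- for a surjective inverse system of local Moufang sets over a
directed set with a cofinal sequence, all projection maps from the inverse limit are
surjective; in particular the limit has more than two equivalence classes, and the
inverse limit exists as a local Moufang set (there are root groups on the limit set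
making it a local Moufang set for which all projections are homomorphisms of local
Moufang sets). -/
theorem statement10 [IsDirected I (· ≤ ·)]
    (Xf : I → Type*) (rf : ∀ i, Setoid (Xf i))
    (Uf : ∀ i, Xf i → Subgroup (Equiv.Perm (Xf i)))
    (φf : ∀ i j : I, j ≤ i → Xf i → Xf j)
    (hLMS : ∀ i, IsLocalMoufangSet (rf i) (Uf i))
    (hid : ∀ (i : I) (x : Xf i), φf i i le_rfl x = x)
    (hcomp : ∀ (i j k : I) (hji : j ≤ i) (hkj : k ≤ j) (x : Xf i),
      φf j k hkj (φf i j hji x) = φf i k (hkj.trans hji) x)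
    (hhom : ∀ (i j : I) (h : j ≤ i), IsLMSHom (rf i) (rf j) (Uf i) (Uf j) (φf i j h))
    (hsurj : ∀ (i j : I) (h : j ≤ i), Function.Surjective (φf i j h))
    (f : ℕ → I) (hmono : Monotone f) (hcof : ∀ i : I, ∃ n : ℕ, i ≤ f n) :
    (∀ j : I, Function.Surjective (fun x : InvLim Xf φf => x.1 j)) ∧
    (∃ a b c : InvLim Xf φf,
      ¬ (invLimSetoid Xf rf φf).r a b ∧ ¬ (invLimSetoid Xf rf φf).r a c ∧
      ¬ (invLimSetoid Xf rf φf).r b c) ∧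
    (∃ W : InvLim Xf φf → Subgroup (Equiv.Perm (InvLim Xf φf)),
      IsLocalMoufangSet (invLimSetoid Xf rf φf) W ∧
      ∀ j : I, IsLMSHom (invLimSetoid Xf rf φf) (rf j) W (Uf j)
        (fun x => x.1 j)) := by
  classical
  -- Transfer of the relation between indices
  have hrelmono : ∀ (a b : InvLim Xf φf) (i j : I) (h : j ≤ i),
      ((rf i).r (a.1 i) (b.1 i) ↔ (rf j).r (a.1 j) (b.1 j)) := by
    intro a b i j h
    have := (hhom i j h).1 (a.1 i) (b.1 i)
    rwa [a.2 i j h, b.2 i j h] at this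
  have hrel : ∀ (a b : InvLim Xf φf) (j : I),
      ((invLimSetoid Xf rf φf).r a b ↔ (rf j).r (a.1 j) (b.1 j)) := by
    intro a b j
    refine ⟨fun h => h j, fun h i => ?_⟩
    obtain ⟨k, hik, hjk⟩ := directed_of (· ≤ ·) i j
    exact (hrelmono a b k i hik).1 ((hrelmono a b k j hjk).2 h)
  -- Surjectivity of the projections
  have hproj : ∀ j : I, Function.Surjective (fun x : InvLim Xf φf => x.1 j) := by
    intro j x0
    obtain ⟨n0, hn0⟩ := hcof j
    let z : ∀ n : ℕ, Xf (f (n0 + n)) := fun n =>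
      Nat.rec (motive := fun n => Xf (f (n0 + n))) ((hsurj (f n0) j hn0 x0).choose)
        (fun n zn => (hsurj (f (n0 + (n + 1))) (f (n0 + n)) (hmono (by omega)) zn).choose) n
    have hz0 : φf (f (n0 + 0)) j hn0 (z 0) = x0 := (hsurj (f n0) j hn0 x0).choose_spec
    have hzs : ∀ n : ℕ, φf (f (n0 + (n + 1))) (f (n0 + n)) (hmono (by omega)) (z (n + 1)) = z n :=
      fun n => (hsurj (f (n0 + (n + 1))) (f (n0 + n)) (hmono (by omega)) (z n)).choose_spec
    have hL : ∀ (n m : ℕ), n ≤ m → ∀ (i : I) (hi : i ≤ f (n0 + n)) (hi' : i ≤ f (n0 + m)),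
        φf (f (n0 + m)) i hi' (z m) = φf (f (n0 + n)) i hi (z n) := by
      intro n m hnm
      induction m, hnm using Nat.le_induction with
      | base => intro i hi hi'; rfl
      | succ m hnm ih =>
        intro i hi hi'
        have h2 : f (n0 + m) ≤ f (n0 + (m + 1)) := hmono (by omega)
        have him : i ≤ f (n0 + m) := hi.trans (hmono (by omega))
        calc φf (f (n0 + (m + 1))) i hi' (z (m + 1))
            = φf (f (n0 + m)) i him (φf (f (n0 + (m + 1))) (f (n0 + m)) h2 (z (m + 1))) :=
              (hcomp _ _ _ h2 him _).symm
          _ = φf (f (n0 + m)) i him (z m) := congrArg _ (hzs m)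
          _ = φf (f (n0 + n)) i hi (z n) := ih i hi him
    have key : ∀ (i : I) (n : ℕ) (hi : i ≤ f (n0 + n)),
        φf (f (n0 + n)) i hi (z n) =
        φf (f (n0 + (hcof i).choose)) i
          ((hcof i).choose_spec.trans (hmono (Nat.le_add_left _ _))) (z (hcof i).choose) := by
      intro i n hi
      have hi2 : i ≤ f (n0 + (hcof i).choose) :=
        (hcof i).choose_spec.trans (hmono (Nat.le_add_left _ _))
      rcases le_total n (hcof i).choose with h | h
      · exact (hL n (hcof i).choose h i hi hi2).symm
      · exact hL (hcof i).choose n h i hi2 hi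
    refine ⟨⟨fun i => φf (f (n0 + (hcof i).choose)) i
        ((hcof i).choose_spec.trans (hmono (Nat.le_add_left _ _))) (z (hcof i).choose), ?_⟩, ?_⟩
    · intro i j' h
      have hji : j' ≤ f (n0 + (hcof i).choose) :=
        h.trans ((hcof i).choose_spec.trans (hmono (Nat.le_add_left _ _)))
      calc φf i j' h (φf (f (n0 + (hcof i).choose)) i
            ((hcof i).choose_spec.trans (hmono (Nat.le_add_left _ _))) (z (hcof i).choose))
          = φf (f (n0 + (hcof i).choose)) j' hji (z (hcof i).choose) := hcomp _ _ _ _ h _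
        _ = _ := key j' (hcof i).choose hji
    · exact ((key j 0 hn0).symm.trans hz0 : _)
  -- More than two classes in the limit
  have hbig : ∃ a b c : InvLim Xf φf, ¬ (invLimSetoid Xf rf φf).r a b ∧
      ¬ (invLimSetoid Xf rf φf).r a c ∧ ¬ (invLimSetoid Xf rf φf).r b c := by
    obtain ⟨a0, b0, c0, hab, hac, hbc⟩ := (hLMS (f 0)).big
    obtain ⟨A, hA⟩ := hproj (f 0) a0
    obtain ⟨B, hB⟩ := hproj (f 0) b0
    obtain ⟨C, hC⟩ := hproj (f 0) c0
    exact ⟨A, B, C,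
      fun h => hab (by rw [← hA, ← hB]; exact h (f 0)),
      fun h => hac (by rw [← hA, ← hC]; exact h (f 0)),
      fun h => hbc (by rw [← hB, ← hC]; exact h (f 0))⟩
  have hexnot : ∀ x : InvLim Xf φf, ∃ a : InvLim Xf φf, ¬ (invLimSetoid Xf rf φf).r a x := by
    intro x
    obtain ⟨A, B, C, hAB, hAC, hBC⟩ := hbig
    by_cases h : (invLimSetoid Xf rf φf).r A x
    · exact ⟨B, fun hB => hAB ((invLimSetoid Xf rf φf).iseqv.trans h
        ((invLimSetoid Xf rf φf).iseqv.symm hB))⟩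
    · exact ⟨A, h⟩
  -- (LM1) in the limit
  have hlm1 : ∀ x a b : InvLim Xf φf, ¬ (invLimSetoid Xf rf φf).r a x →
      ¬ (invLimSetoid Xf rf φf).r b x →
      ∃! g : Equiv.Perm (InvLim Xf φf), g ∈ WGrp Uf φf x ∧ g a = b := by
    intro x a b ha hb
    have hai : ∀ i, ¬ (rf i).r (a.1 i) (x.1 i) := fun i h => ha ((hrel a x i).2 h)
    have hbi : ∀ i, ¬ (rf i).r (b.1 i) (x.1 i) := fun i h => hb ((hrel b x i).2 h)
    have hex := fun i => (hLMS i).lm1 (x.1 i) (a.1 i) (b.1 i) (hai i) (hbi i)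
    have huu : ∀ i, (hex i).choose ∈ Uf i (x.1 i) ∧ (hex i).choose (a.1 i) = b.1 i :=
      fun i => (hex i).choose_spec.1
    have huniq : ∀ (i : I) (v : Equiv.Perm (Xf i)), v ∈ Uf i (x.1 i) → v (a.1 i) = b.1 i →
        v = (hex i).choose := fun i v h1 h2 => (hex i).choose_spec.2 v ⟨h1, h2⟩
    have hcompat : IsCompat φf (fun i => (hex i).choose) := by
      intro i j h p
      obtain ⟨v, hv1, hv2⟩ := (hhom i j h).2 (x.1 i) (hex i).choose (huu i).1
      have hvx : v ∈ Uf j (x.1 j) := by rwa [x.2 i j h] at hv1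
      have hva : v (a.1 j) = b.1 j := by
        rw [← a.2 i j h, ← hv2, (huu i).2, b.2 i j h]
      rw [hv2 p, huniq j v hvx hva]
    refine ⟨compatPerm _ hcompat, ⟨mem_WGrp_of (fun i => (huu i).1) hcompat, ?_⟩, ?_⟩
    · exact Subtype.ext (funext fun i => (huu i).2)
    · rintro g ⟨⟨u', h1, h2, h3⟩, hgab⟩
      have hu' : ∀ i, u' i = (hex i).choose := by
        intro i
        refine huniq i (u' i) (h1 i) ?_
        rw [← h3 a i, hgab]
      refine Equiv.ext fun p => Subtype.ext (funext fun i => ?_)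
      rw [h3 p i, hu' i]; rfl
  -- preserves
  have hpres : ∀ x : InvLim Xf φf, ∀ g ∈ WGrp Uf φf x,
      PreservesRel (invLimSetoid Xf rf φf) g := by
    rintro x g ⟨u, hu1, hu2, hu3⟩ a b
    constructor
    · intro h i
      rw [hu3 a i, hu3 b i]
      exact ((hLMS i).preserves (x.1 i) (u i) (hu1 i) (a.1 i) (b.1 i)).1 (h i)
    · intro h i
      have hh := h i
      rw [hu3 a i, hu3 b i] at hh
      exact ((hLMS i).preserves (x.1 i) (u i) (hu1 i) (a.1 i) (b.1 i)).2 hh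
  -- fixes
  have hfix : ∀ x : InvLim Xf φf, ∀ g ∈ WGrp Uf φf x, g x = x := by
    rintro x g ⟨u, hu1, hu2, hu3⟩
    exact Subtype.ext (funext fun i => by
      rw [hu3 x i]; exact (hLMS i).fixes (x.1 i) (u i) (hu1 i))
  -- (LM0) in the limit
  have hlm0 : ∀ x y : InvLim Xf φf, (invLimSetoid Xf rf φf).r x y →
      ∀ g ∈ WGrp Uf φf x, ∃ h ∈ WGrp Uf φf y, ∀ a : InvLim Xf φf,
        (invLimSetoid Xf rf φf).r (g a) (h a) := by
    intro x y hxy g hg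
    obtain ⟨u, hu1, hu2, hu3⟩ := hg
    obtain ⟨a, hax⟩ := hexnot x
    have hay : ¬ (invLimSetoid Xf rf φf).r a y := fun h =>
      hax ((invLimSetoid Xf rf φf).iseqv.trans h ((invLimSetoid Xf rf φf).iseqv.symm hxy))
    have hgax : ¬ (invLimSetoid Xf rf φf).r (g a) x := by
      intro h
      apply hax
      intro i
      apply ((hLMS i).preserves (x.1 i) (u i) (hu1 i) (a.1 i) (x.1 i)).2
      rw [(hLMS i).fixes (x.1 i) (u i) (hu1 i), ← hu3 a i]
      exact h i
    have hgay : ¬ (invLimSetoid Xf rf φf).r (g a) y := fun h =>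
      hgax ((invLimSetoid Xf rf φf).iseqv.trans h ((invLimSetoid Xf rf φf).iseqv.symm hxy))
    obtain ⟨h', ⟨hh'W, hh'a⟩, -⟩ := hlm1 y a (g a) hay hgay
    refine ⟨h', hh'W, ?_⟩
    obtain ⟨v, hv1, hv2, hv3⟩ := hh'W
    intro b i
    rw [hu3 b i, hv3 b i]
    obtain ⟨w, hw1, hw2⟩ := (hLMS i).lm0 (x.1 i) (y.1 i) (hxy i) (u i) (hu1 i)
    have heq : u i (a.1 i) = v i (a.1 i) := by
      rw [← hu3 a i, ← hh'a]; exact hv3 a i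
    have hwa : (rf i).r (w (a.1 i)) (v i (a.1 i)) := heq ▸ (rf i).iseqv.symm (hw2 (a.1 i))
    have hs := (hLMS i).lm1'_sharp (y.1 i) w hw1 (v i) (hv1 i) (a.1 i)
      (fun hh => hay ((hrel a y i).2 hh)) hwa (b.1 i)
    exact (rf i).iseqv.trans (hw2 (b.1 i)) hs
  -- (LM1') in the limit
  have hlm1't : ∀ x a b : InvLim Xf φf, ¬ (invLimSetoid Xf rf φf).r a x →
      ¬ (invLimSetoid Xf rf φf).r b x →
      ∃ g ∈ WGrp Uf φf x, (invLimSetoid Xf rf φf).r (g a) b := by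
    intro x a b ha hb
    obtain ⟨g, ⟨hg, hgab⟩, -⟩ := hlm1 x a b ha hb
    exact ⟨g, hg, by rw [hgab]⟩
  have hlm1's : ∀ x : InvLim Xf φf, ∀ g ∈ WGrp Uf φf x, ∀ h ∈ WGrp Uf φf x,
      ∀ a : InvLim Xf φf, ¬ (invLimSetoid Xf rf φf).r a x →
      (invLimSetoid Xf rf φf).r (g a) (h a) →
      ∀ b : InvLim Xf φf, (invLimSetoid Xf rf φf).r (g b) (h b) := by
    rintro x g ⟨u, hu1, hu2, hu3⟩ h ⟨v, hv1, hv2, hv3⟩ a hax hgh b i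
    have h1 := hgh i
    rw [hu3 a i, hv3 a i] at h1
    rw [hu3 b i, hv3 b i]
    exact (hLMS i).lm1'_sharp (x.1 i) (u i) (hu1 i) (v i) (hv1 i) (a.1 i)
      (fun hh => hax ((hrel a x i).2 hh)) h1 (b.1 i)
  -- conjugation lemma
  have hconj : ∀ (y : InvLim Xf φf) (g : Equiv.Perm (InvLim Xf φf)), g ∈ WGrp Uf φf y →
      ∀ (x : InvLim Xf φf) (k : Equiv.Perm (InvLim Xf φf)), k ∈ WGrp Uf φf x →
      g * k * g⁻¹ ∈ WGrp Uf φf (g x) := by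
    rintro y g ⟨u, hu1, hu2, hu3⟩ x k ⟨v, hv1, hv2, hv3⟩
    have huinv : ∀ (i j : I) (h : j ≤ i) (p : Xf i),
        φf i j h ((u i)⁻¹ p) = (u j)⁻¹ (φf i j h p) := fun i j h p => hu2.inv i j h p
    refine ⟨fun i => u i * v i * (u i)⁻¹, fun i => ?_, fun i j hle p => ?_, fun p i => ?_⟩
    · have h2 := (hLMS i).lm2 (x.1 i) (u i) (Subgroup.mem_iSup_of_mem (y.1 i) (hu1 i))
      rw [hu3 x i, ← h2]
      exact ⟨v i, hv1 i, rfl⟩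
    · simp only [Equiv.Perm.mul_apply]
      rw [hu2 i j hle, hv2 i j hle, huinv i j hle]
    · simp only [Equiv.Perm.mul_apply]
      rw [hu3, hv3, WGrp_inv_apply hu3]
  -- (LM2) in the limit
  have hP : ∀ g ∈ (⨆ y : InvLim Xf φf, WGrp Uf φf y), ∀ x : InvLim Xf φf,
      (WGrp Uf φf x).map (MulAut.conj g).toMonoidHom = WGrp Uf φf (g x) := by
    intro g hg
    refine Subgroup.iSup_induction (C := fun g => ∀ x : InvLim Xf φf,
      (WGrp Uf φf x).map (MulAut.conj g).toMonoidHom = WGrp Uf φf (g x)) _ hg ?_ ?_ ?_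
    · intro y g hgy x
      ext k
      simp only [Subgroup.mem_map]
      constructor
      · rintro ⟨k', hk', rfl⟩
        have := hconj y g hgy x k' hk'
        simpa [MulAut.conj_apply] using this
      · intro hk
        refine ⟨g⁻¹ * k * g, ?_, ?_⟩
        · have h1 := hconj y g⁻¹ (inv_mem hgy) (g x) k hk
          have h2 : (g⁻¹ : Equiv.Perm (InvLim Xf φf)) (g x) = x := g.symm_apply_apply x
          rw [h2] at h1
          simpa using h1
        · simp only [MulAut.conj_apply, MulEquiv.coe_toMonoidHom]
          group
    · intro x
      ext k
      simp only [Subgroup.mem_map]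
      constructor
      · rintro ⟨k', hk', rfl⟩
        simpa [MulAut.conj_apply] using hk'
      · intro hk
        exact ⟨k, by simpa using hk, by simp [MulAut.conj_apply]⟩
    · intro g h hg hh x
      have hmulhom : (MulAut.conj (g * h)).toMonoidHom =
          ((MulAut.conj g).toMonoidHom.comp (MulAut.conj h).toMonoidHom) := by
        ext z
        simp only [MulAut.conj_apply, MulEquiv.coe_toMonoidHom, MonoidHom.comp_apply]
        group
      rw [hmulhom, ← Subgroup.map_map, hh x, hg (h x)]
      rfl
  refine ⟨hproj, hbig, WGrp Uf φf, ⟨⟨hbig, hpres, hlm0, hfix, hlm1, hlm1't, hlm1's⟩,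
    fun x g hg => hP g hg x⟩, ?_⟩
  intro j
  refine ⟨fun a b => hrel a b j, ?_⟩
  rintro x w ⟨u, hu1, hu2, hu3⟩
  exact ⟨u j, hu1 j, fun p => hu3 p j⟩
end

section
/- Let M be a special local Moufang set, n ∈ ℕ, and x a unit such that x·k is a unit for all 1 ≤ k ≤ n. Then there is a unique y with y·n = x; moreover (x·n)τ = (xτ)·(1/n) and (x·(1/n))τ = (xτ)·n for any μ-map τ. -/
/-!
Local Moufang sets, following E. Rijcken, "Local Moufang sets".
A local Moufang set is a set `X` with an equivalence relation (a `Setoid`)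
having more than 2 classes, together with root groups `U x` of
equivalence-preserving permutations, satisfying (LM0), (LM1), (LM1'), (LM2).
We use left actions; the paper's right-composition word `a₁a₂⋯aₙ` corresponds
to our product `aₙ * ⋯ * a₁`, and the paper's conjugation `g^h = h⁻¹gh`
corresponds to `h * g * h⁻¹` (i.e. `MulAut.conj h g`).
-/

variable {X : Type*}

/-- `μ` is the μ-map of the point `x` w.r.t. the basis `(o, i) = (0, ∞)`:
it lies in the double coset `U 0 · α_x · U 0` (where `α_x` is the unique element
of `U ∞` with `0 · α_x = x`) and interchanges `0` and `∞`. -/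
def IsMuMap (U : X → Subgroup (Equiv.Perm X)) (o i x : X) (μ : Equiv.Perm X) : Prop :=
  ∃ a : Equiv.Perm X, a ∈ U i ∧ a o = x ∧
    (∃ u ∈ U o, ∃ v ∈ U o, μ = u * a * v) ∧ μ o = i ∧ μ i = o

/-- The Hua subgroup `H = ⟨μ_x μ_y : x, y units⟩` w.r.t. the basis `(o, i) = (0, ∞)`. -/
def HuaSubgroup (r : Setoid X) (U : X → Subgroup (Equiv.Perm X)) (o i : X) :
    Subgroup (Equiv.Perm X) :=
  Subgroup.closure {g | ∃ x y μx μy, (¬ r.r x o ∧ ¬ r.r x i) ∧ (¬ r.r y o ∧ ¬ r.r y i) ∧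
    IsMuMap U o i x μx ∧ IsMuMap U o i y μy ∧ g = μx * μy}

set_option linter.unusedSectionVars false
set_option linter.unusedVariables false

namespace LMS11

section basics
variable {r : Setoid X} {U : X → Subgroup (Equiv.Perm X)}

lemma nr_symm {a b : X} (h : ¬ r.r a b) : ¬ r.r b a := fun h' => h (r.iseqv.symm h')

lemma pres_nr {g : Equiv.Perm X} (hg : PreservesRel r g) {a b : X} (h : ¬ r.r a b) :
    ¬ r.r (g a) (g b) := fun h' => h ((hg a b).2 h')

lemma pres_r {g : Equiv.Perm X} (hg : PreservesRel r g) {a b : X} (h : r.r a b) :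
    r.r (g a) (g b) := (hg a b).1 h

/-- the subgroup of relation preserving permutations -/
def presSub (r : Setoid X) : Subgroup (Equiv.Perm X) where
  carrier := {g | PreservesRel r g}
  one_mem' := by intro a b; simp only [Equiv.Perm.coe_one, id_eq]
  mul_mem' := by
    intro g h hg hh a b
    simpa only [Equiv.Perm.mul_apply] using (hh a b).trans (hg (h a) (h b))
  inv_mem' := by
    intro g hg a b
    have := (hg (g⁻¹ a) (g⁻¹ b)).symm
    simpa only [(Equiv.Perm.eq_inv_iff_eq.mp rfl : g (g⁻¹ a) = a), (Equiv.Perm.eq_inv_iff_eq.mp rfl : g (g⁻¹ b) = b)] using this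

lemma pres_of_memG (hM : IsLocalMoufangSet r U) {g : Equiv.Perm X}
    (hg : g ∈ ⨆ y : X, U y) : PreservesRel r g := by
  have hle : (⨆ y : X, U y) ≤ presSub r := iSup_le (fun y u hu => hM.preserves y u hu)
  exact hle hg

lemma memG {c : X} {g : Equiv.Perm X} (hg : g ∈ U c) : g ∈ ⨆ y : X, U y := (le_iSup U c) hg

lemma val_nr (hM : IsLocalMoufangSet r U) {c : X} {g : Equiv.Perm X} (hg : g ∈ U c)
    {a : X} (ha : ¬ r.r a c) : ¬ r.r (g a) c := by
  have := pres_nr (hM.preserves c g hg) ha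
  rwa [hM.fixes c g hg] at this

lemma Ueq (hM : IsLocalMoufangSet r U) {c : X} {g h : Equiv.Perm X} (hg : g ∈ U c)
    (hh : h ∈ U c) {a : X} (ha : ¬ r.r a c) (he : g a = h a) : g = h :=
  (hM.lm1 c a (g a) ha (val_nr hM hg ha)).unique ⟨hg, rfl⟩ ⟨hh, he.symm⟩

lemma conj_mem (hM : IsLocalMoufangSet r U) {g : Equiv.Perm X} (hg : g ∈ ⨆ y : X, U y)
    {c : X} {u : Equiv.Perm X} (hu : u ∈ U c) : g * u * g⁻¹ ∈ U (g c) := by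
  rw [← hM.lm2 c g hg]
  exact Subgroup.mem_map.2 ⟨u, hu, rfl⟩

lemma fix_inv {c : X} {g : Equiv.Perm X} (h : g c = c) : g⁻¹ c = c := by
  conv_lhs => rw [← h]
  exact Equiv.symm_apply_apply g c

/-- iterate a relation `g a ∼ a` -/
lemma rel_iter {g : Equiv.Perm X} (hg : PreservesRel r g) {a : X} (h : r.r (g a) a) :
    ∀ k : ℕ, r.r ((g ^ k) a) a := by
  intro k
  induction k with
  | zero => simpa using r.iseqv.refl a
  | succ m ih =>
      have h1 : r.r (g ((g ^ m) a)) (g a) := pres_r hg ih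
      have : r.r (g ((g ^ m) a)) a := r.iseqv.trans h1 h
      simpa [pow_succ', Equiv.Perm.mul_apply] using this

end basics
end LMS11

namespace LMS11

section maps
variable {r : Setoid X} {U : X → Subgroup (Equiv.Perm X)}
variable (hM : IsLocalMoufangSet r U) {o i : X} (hoi : ¬ r.r o i)

open Classical in
/-- `Cm z` is the unique element of `U o` with `i ↦ z` (for `z ≁ o`), else `1`. -/
noncomputable def Cm (z : X) : Equiv.Perm X :=
  if h : ¬ r.r z o then (hM.lm1 o i z (nr_symm hoi) h).exists.choose else 1

include hM hoi

lemma Cm_spec {z : X} (hz : ¬ r.r z o) :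
    Cm hM hoi z ∈ U o ∧ (Cm hM hoi z) i = z := by
  rw [Cm, dif_pos hz]
  exact (hM.lm1 o i z (nr_symm hoi) hz).exists.choose_spec

lemma Cm_mem {z : X} (hz : ¬ r.r z o) : Cm hM hoi z ∈ U o := (Cm_spec hM hoi hz).1

lemma Cm_i {z : X} (hz : ¬ r.r z o) : (Cm hM hoi z) i = z := (Cm_spec hM hoi hz).2

variable {α : X → Equiv.Perm X} (hα : ∀ y : X, ¬ r.r y i → α y ∈ U i ∧ α y o = y)

lemma Ui_val_nr {u : Equiv.Perm X} (hu : u ∈ U i) : ¬ r.r (u o) i := val_nr hM hu hoi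

include hα

lemma Ui_repr {u : Equiv.Perm X} (hu : u ∈ U i) : u = α (u o) :=
  Ueq hM hu (hα (u o) (Ui_val_nr hM hoi hu)).1 hoi ((hα (u o) (Ui_val_nr hM hoi hu)).2).symm

omit hα

lemma Uo_val_nr {u : Equiv.Perm X} (hu : u ∈ U o) : ¬ r.r (u i) o := val_nr hM hu (nr_symm hoi)

lemma Uo_repr {u : Equiv.Perm X} (hu : u ∈ U o) : u = Cm hM hoi (u i) :=
  Ueq hM hu (Cm_mem hM hoi (Uo_val_nr hM hoi hu)) (nr_symm hoi)
    (Cm_i hM hoi (Uo_val_nr hM hoi hu)).symm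

end maps

section points
variable {r : Setoid X} {U : X → Subgroup (Equiv.Perm X)}
variable (hM : IsLocalMoufangSet r U) {o i : X} (hoi : ¬ r.r o i)
variable {α : X → Equiv.Perm X} (hα : ∀ y : X, ¬ r.r y i → α y ∈ U i ∧ α y o = y)
include hM hoi hα

/-- `Pp y s = y · s`, the `s`-th power point. -/
def Pp (α : X → Equiv.Perm X) (o : X) (y : X) (s : ℤ) : X := ((α y) ^ s) o

/-- `Wp z s`, the `s`-th "root point" (`z/s` morally). -/
noncomputable def Wp (z : X) (s : ℤ) : X := ((Cm hM hoi z) ^ s) i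

lemma Pp_nr_i {y : X} (hyi : ¬ r.r y i) (s : ℤ) : ¬ r.r (Pp α o y s) i :=
  val_nr hM (zpow_mem (hα y hyi).1 s) hoi

lemma Wp_nr_o {z : X} (hz : ¬ r.r z o) (s : ℤ) : ¬ r.r (Wp hM hoi z s) o :=
  val_nr hM (zpow_mem (Cm_mem hM hoi hz) s) (nr_symm hoi)

lemma alpha_Pp {y : X} (hyi : ¬ r.r y i) (s : ℤ) : α (Pp α o y s) = (α y) ^ s :=
  (Ui_repr hM hoi hα (zpow_mem (hα y hyi).1 s)).symm

lemma Cm_Wp {z : X} (hz : ¬ r.r z o) (s : ℤ) :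
    Cm hM hoi (Wp hM hoi z s) = (Cm hM hoi z) ^ s :=
  (Uo_repr hM hoi (zpow_mem (Cm_mem hM hoi hz) s)).symm

lemma Pp_zero (y : X) : Pp α o y 0 = o := by simp [Pp]

lemma Pp_one {y : X} (hyi : ¬ r.r y i) : Pp α o y 1 = y := by
  simp [Pp, (hα y hyi).2]

lemma Wp_one {z : X} (hz : ¬ r.r z o) : Wp hM hoi z 1 = z := by
  simp [Wp, Cm_i hM hoi hz]

lemma Pp_add (y : X) (s t : ℤ) : Pp α o y (s + t) = ((α y) ^ s) (Pp α o y t) := by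
  simp [Pp, zpow_add, Equiv.Perm.mul_apply]

/-- negation `-y` -/
def ng (α : X → Equiv.Perm X) (o : X) (y : X) : X := (α y)⁻¹ o

lemma ng_eq_Pp (y : X) : ng α o y = Pp α o y (-1) := by simp [ng, Pp]

lemma alpha_ng {y : X} (hyi : ¬ r.r y i) : α (ng α o y) = (α y)⁻¹ := by
  rw [ng_eq_Pp hM hoi hα, alpha_Pp hM hoi hα hyi]; simp

lemma ng_nr_i {y : X} (hyi : ¬ r.r y i) : ¬ r.r (ng α o y) i := by
  rw [ng_eq_Pp hM hoi hα]; exact Pp_nr_i hM hoi hα hyi (-1)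

lemma ng_nr_o {y : X} (hyo : ¬ r.r y o) (hyi : ¬ r.r y i) : ¬ r.r (ng α o y) o := by
  intro h
  have hp : PreservesRel r (α y) := hM.preserves i (α y) (hα y hyi).1
  have h2 := pres_r hp h
  simp only [ng, (Equiv.Perm.eq_inv_iff_eq.mp rfl : (α y) ((α y)⁻¹ o) = o), (hα y hyi).2] at h2
  exact hyo (r.iseqv.symm h2)

lemma apply_ng (y : X) : α y (ng α o y) = o := Equiv.apply_symm_apply (α y) o

lemma ng_ng {y : X} (hyi : ¬ r.r y i) : ng α o (ng α o y) = y := by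
  rw [ng, alpha_ng hM hoi hα hyi, inv_inv, (hα y hyi).2]

omit hM hoi hα in
lemma conj_eval {g u v : Equiv.Perm X} (h : g * u * g⁻¹ = v) (a : X) : g (u a) = v (g a) := by
  have := congrArg (fun w : Equiv.Perm X => w (g a)) h
  simpa [Equiv.Perm.mul_apply] using this

omit hM hoi hα in
lemma inv_apply_of_apply {g : Equiv.Perm X} {a b : X} (h : g a = b) : g⁻¹ b = a := by
  rw [← h]; simp

variable {g : Equiv.Perm X} (hg : g ∈ ⨆ y : X, U y)
include hg

lemma conjA (hgo : g o = i) (hgi : g i = o) {p : X} (hp : ¬ r.r p i) :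
    g * α p * g⁻¹ = Cm hM hoi (g p) := by
  have hmem : g * α p * g⁻¹ ∈ U o := by
    have := conj_mem hM hg (hα p hp).1; rwa [hgi] at this
  have hval : (g * α p * g⁻¹) i = g p := by
    simp [Equiv.Perm.mul_apply, inv_apply_of_apply hgo, (hα p hp).2]
  rw [Uo_repr hM hoi hmem, hval]

lemma conjC (hgo : g o = i) (hgi : g i = o) {z : X} (hz : ¬ r.r z o) :
    g * Cm hM hoi z * g⁻¹ = α (g z) := by
  have hmem : g * Cm hM hoi z * g⁻¹ ∈ U i := by
    have := conj_mem hM hg (Cm_mem hM hoi hz); rwa [hgo] at this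
  have hval : (g * Cm hM hoi z * g⁻¹) o = g z := by
    simp [Equiv.Perm.mul_apply, inv_apply_of_apply hgi, Cm_i hM hoi hz]
  rw [Ui_repr hM hoi hα hmem, hval]

lemma conjA_h (hgo : g o = o) (hgi : g i = i) {p : X} (hp : ¬ r.r p i) :
    g * α p * g⁻¹ = α (g p) := by
  have hmem : g * α p * g⁻¹ ∈ U i := by
    have := conj_mem hM hg (hα p hp).1; rwa [hgi] at this
  have hval : (g * α p * g⁻¹) o = g p := by
    simp [Equiv.Perm.mul_apply, inv_apply_of_apply hgo, (hα p hp).2]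
  rw [Ui_repr hM hoi hα hmem, hval]

lemma conjC_h (hgo : g o = o) (hgi : g i = i) {z : X} (hz : ¬ r.r z o) :
    g * Cm hM hoi z * g⁻¹ = Cm hM hoi (g z) := by
  have hmem : g * Cm hM hoi z * g⁻¹ ∈ U o := by
    have := conj_mem hM hg (Cm_mem hM hoi hz); rwa [hgo] at this
  have hval : (g * Cm hM hoi z * g⁻¹) i = g z := by
    simp [Equiv.Perm.mul_apply, inv_apply_of_apply hgi, Cm_i hM hoi hz]
  rw [Uo_repr hM hoi hmem, hval]

end points
end LMS11

namespace LMS11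

section mu
variable {r : Setoid X} {U : X → Subgroup (Equiv.Perm X)}
variable (hM : IsLocalMoufangSet r U) {o i : X} (hoi : ¬ r.r o i)
variable {α : X → Equiv.Perm X} (hα : ∀ y : X, ¬ r.r y i → α y ∈ U i ∧ α y o = y)
variable (hstar : ∀ z : X, ¬ r.r z o → ¬ r.r z i → (Cm hM hoi z)⁻¹ i = ng α o z)

/-- the μ-map of the unit `z` -/
noncomputable def mu (α : X → Equiv.Perm X) (z : X) : Equiv.Perm X :=
  (Cm hM hoi z)⁻¹ * α z * (Cm hM hoi z)⁻¹

include hM hoi hα hstar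

lemma Cm_ng {z : X} (hzo : ¬ r.r z o) (hzi : ¬ r.r z i) :
    Cm hM hoi (ng α o z) = (Cm hM hoi z)⁻¹ := by
  have h1 : (Cm hM hoi z)⁻¹ ∈ U o := inv_mem (Cm_mem hM hoi hzo)
  have := Uo_repr hM hoi h1
  rwa [hstar z hzo hzi, eq_comm] at this

variable {y : X} (hyo : ¬ r.r y o) (hyi : ¬ r.r y i)
include hyo hyi

lemma mu_memG : mu hM hoi α y ∈ ⨆ c : X, U c := by
  have h1 : (Cm hM hoi y)⁻¹ ∈ ⨆ c : X, U c := memG (inv_mem (Cm_mem hM hoi hyo))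
  exact mul_mem (mul_mem h1 (memG (hα y hyi).1)) h1

lemma mu_o : mu hM hoi α y o = i := by
  have h1 : (Cm hM hoi y)⁻¹ o = o := fix_inv (hM.fixes o _ (Cm_mem hM hoi hyo))
  have h2 : (Cm hM hoi y)⁻¹ y = i := inv_apply_of_apply (Cm_i hM hoi hyo)
  simp [mu, Equiv.Perm.mul_apply, h1, (hα y hyi).2, h2]

lemma mu_i : mu hM hoi α y i = o := by
  have h1 : (Cm hM hoi y)⁻¹ i = ng α o y := hstar y hyo hyi
  have h2 : (Cm hM hoi y)⁻¹ o = o := fix_inv (hM.fixes o _ (Cm_mem hM hoi hyo))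
  simp only [mu, Equiv.Perm.mul_apply, h1]
  rw [apply_ng hM hoi hα y]
  exact h2

lemma mu_y : mu hM hoi α y y = ng α o y := by
  have h1 : (Cm hM hoi y)⁻¹ y = i := inv_apply_of_apply (Cm_i hM hoi hyo)
  have h2 : α y i = i := hM.fixes i _ (hα y hyi).1
  have h3 : (Cm hM hoi y)⁻¹ i = ng α o y := hstar y hyo hyi
  simp [mu, Equiv.Perm.mul_apply, h1, h2, h3]

lemma muA : mu hM hoi α y * α y * (mu hM hoi α y)⁻¹ = (Cm hM hoi y)⁻¹ := by
  rw [conjA hM hoi hα (mu_memG hM hoi hα hstar hyo hyi) (mu_o hM hoi hα hstar hyo hyi)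
    (mu_i hM hoi hα hstar hyo hyi) hyi, mu_y hM hoi hα hstar hyo hyi,
    Cm_ng hM hoi hα hstar hyo hyi]

lemma muC : mu hM hoi α y * Cm hM hoi y * (mu hM hoi α y)⁻¹ = (α y)⁻¹ := by
  rw [conjC hM hoi hα (mu_memG hM hoi hα hstar hyo hyi) (mu_o hM hoi hα hstar hyo hyi)
    (mu_i hM hoi hα hstar hyo hyi) hyo, mu_y hM hoi hα hstar hyo hyi,
    alpha_ng hM hoi hα hyi]

lemma muA_z (s : ℤ) : mu hM hoi α y * (α y) ^ s * (mu hM hoi α y)⁻¹ = (Cm hM hoi y) ^ (-s) := by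
  have := congrArg (fun w : Equiv.Perm X => w ^ s) (muA hM hoi hα hstar hyo hyi)
  simp only [conj_zpow] at this
  rw [this, inv_zpow, ← zpow_neg]

lemma muC_z (s : ℤ) : mu hM hoi α y * (Cm hM hoi y) ^ s * (mu hM hoi α y)⁻¹ = (α y) ^ (-s) := by
  have := congrArg (fun w : Equiv.Perm X => w ^ s) (muC hM hoi hα hstar hyo hyi)
  simp only [conj_zpow] at this
  rw [this, inv_zpow, ← zpow_neg]

lemma mu_P (s : ℤ) : mu hM hoi α y (Pp α o y s) = Wp hM hoi y (-s) := by
  have := conj_eval (muA_z hM hoi hα hstar hyo hyi s) o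
  rwa [mu_o hM hoi hα hstar hyo hyi] at this

lemma mu_W (s : ℤ) : mu hM hoi α y (Wp hM hoi y s) = Pp α o y (-s) := by
  have := conj_eval (muC_z hM hoi hα hstar hyo hyi s) i
  rwa [mu_i hM hoi hα hstar hyo hyi] at this

lemma mu_inv_W (s : ℤ) : (mu hM hoi α y)⁻¹ (Wp hM hoi y s) = Pp α o y (-s) := by
  have h := mu_P hM hoi hα hstar hyo hyi (-s)
  rw [neg_neg] at h
  exact inv_apply_of_apply h

lemma mu_inv_P (s : ℤ) : (mu hM hoi α y)⁻¹ (Pp α o y s) = Wp hM hoi y (-s) := by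
  have h := mu_W hM hoi hα hstar hyo hyi (-s)
  rw [neg_neg] at h
  exact inv_apply_of_apply h

omit hstar

omit hyo in
lemma Pp_neg_class (s : ℤ) : r.r (Pp α o y (-s)) o ↔ r.r (Pp α o y s) o := by
  simp only [Pp]
  have hp : PreservesRel r ((α y) ^ s) := pres_of_memG hM (memG (zpow_mem (hα y hyi).1 s))
  have hcan : ((α y) ^ s) (((α y) ^ (-s)) o) = o := by
    rw [← Equiv.Perm.mul_apply, ← zpow_add, add_neg_cancel, zpow_zero, Equiv.Perm.one_apply]
  constructor
  · intro h
    have h2 := pres_r hp h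
    rw [hcan] at h2
    exact r.iseqv.symm h2
  · intro h
    have hp' : PreservesRel r ((α y) ^ (-s)) :=
      pres_of_memG hM (memG (zpow_mem (hα y hyi).1 (-s)))
    have h2 := pres_r hp' h
    have hcan' : ((α y) ^ (-s)) (((α y) ^ s) o) = o := by
      rw [← Equiv.Perm.mul_apply, ← zpow_add, neg_add_cancel, zpow_zero, Equiv.Perm.one_apply]
    rw [hcan'] at h2
    exact r.iseqv.symm h2

include hstar

lemma Wclass (s : ℤ) : r.r (Wp hM hoi y s) i ↔ r.r (Pp α o y s) o := by
  have h1 : mu hM hoi α y (Pp α o y (-s)) = Wp hM hoi y s := by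
    rw [mu_P hM hoi hα hstar hyo hyi (-s), neg_neg]
  have hpres : PreservesRel r (mu hM hoi α y) :=
    pres_of_memG hM (mu_memG hM hoi hα hstar hyo hyi)
  have h2 := hpres (Pp α o y (-s)) o
  rw [h1, mu_o hM hoi hα hstar hyo hyi] at h2
  exact h2.symm.trans (Pp_neg_class hM hoi hα hyi s)

lemma W_nr_i {s : ℤ} (hs : ¬ r.r (Pp α o y s) o) : ¬ r.r (Wp hM hoi y s) i := by
  rw [Wclass hM hoi hα hstar hyo hyi s]; exact hs

omit hyo hyi

omit hstar in
lemma Pp_comp {y : X} (hyi : ¬ r.r y i) (p s : ℤ) :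
    Pp α o (Pp α o y p) s = Pp α o y (p * s) := by
  have h := alpha_Pp hM hoi hα hyi p
  simp only [Pp] at h ⊢
  rw [h, ← zpow_mul]

/-- key transfer lemma: powers of the root point `Wp y p` relate to powers of `y`. -/
lemma transfer {y : X} (hyo : ¬ r.r y o) (hyi : ¬ r.r y i) {p : ℤ}
    (hpu : ¬ r.r (Pp α o y p) o) (s : ℤ) :
    (r.r (Pp α o (Wp hM hoi y p) s) o ↔ r.r (Pp α o y (p * s)) o) := by
  set w := Wp hM hoi y p with hw
  have hwi : ¬ r.r w i := W_nr_i hM hoi hα hstar hyo hyi hpu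
  have hwo : ¬ r.r w o := Wp_nr_o hM hoi hα hyo p
  set c' := Pp α o y p with hc'
  have hc'i : ¬ r.r c' i := Pp_nr_i hM hoi hα hyi p
  have hkey : mu hM hoi α y * α w * (mu hM hoi α y)⁻¹ = (Cm hM hoi c')⁻¹ := by
    rw [conjA hM hoi hα (mu_memG hM hoi hα hstar hyo hyi) (mu_o hM hoi hα hstar hyo hyi)
      (mu_i hM hoi hα hstar hyo hyi) hwi]
    rw [hw, mu_W hM hoi hα hstar hyo hyi p]
    have hng : Pp α o y (-p) = ng α o c' := by
      rw [ng, alpha_Pp hM hoi hα hyi p]; simp [Pp]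
    rw [hng, Cm_ng hM hoi hα hstar hpu hc'i]
  have hkeyz : ∀ t : ℤ, mu hM hoi α y * (α w) ^ t * (mu hM hoi α y)⁻¹ =
      (Cm hM hoi c') ^ (-t) := by
    intro t
    have := congrArg (fun u : Equiv.Perm X => u ^ t) hkey
    simp only [conj_zpow] at this
    rw [this, inv_zpow, ← zpow_neg]
  have heval : mu hM hoi α y (Pp α o w s) = Wp hM hoi c' (-s) := by
    have := conj_eval (hkeyz s) o
    rwa [mu_o hM hoi hα hstar hyo hyi] at this
  have hpres : PreservesRel r (mu hM hoi α y) :=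
    pres_of_memG hM (mu_memG hM hoi hα hstar hyo hyi)
  calc r.r (Pp α o w s) o
      ↔ r.r (mu hM hoi α y (Pp α o w s)) (mu hM hoi α y o) := hpres _ o
    _ ↔ r.r (Wp hM hoi c' (-s)) i := by rw [heval, mu_o hM hoi hα hstar hyo hyi]
    _ ↔ r.r (Pp α o c' (-s)) o := Wclass hM hoi hα hstar hpu hc'i (-s)
    _ ↔ r.r (Pp α o c' s) o := Pp_neg_class hM hoi hα hc'i s
    _ ↔ r.r (Pp α o y (p * s)) o := by rw [hc', Pp_comp hM hoi hα hyi p s]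

end mu
end LMS11


namespace LMS11

/-- pure arithmetic kill -/
lemma arith {q K j : ℕ} (hK : 2 ≤ K) (hj1 : 1 ≤ j) (hjK : j ≤ K - 1)
    (hfac : ∀ p : ℕ, p.Prime → p ∣ q → q ≠ 0 → ¬ p < K)
    (hqK : ¬ q ∣ K) : ¬ q ∣ (K - 1) * (K * j) := by
  intro h
  have hq0 : q ≠ 0 := by
    rintro rfl
    have h0 : (K - 1) * (K * j) = 0 := Nat.eq_zero_of_zero_dvd h
    have h1 : K - 1 ≠ 0 := by omega
    have h2 : K * j ≠ 0 := by positivity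
    exact (Nat.mul_ne_zero h1 h2) h0
  have hq1 : q ≠ 1 := fun e => hqK (e ▸ one_dvd K)
  have hfK : ∀ p', p'.Prime → p' ∣ q → p' = K := by
    intro p' hp' hp'q
    have hKp' : K ≤ p' := not_lt.mp (hfac p' hp' hp'q hq0)
    have hd : p' ∣ (K - 1) * (K * j) := hp'q.trans h
    rcases (Nat.Prime.dvd_mul hp').mp hd with h1 | h2
    · exact absurd (Nat.le_of_dvd (by omega) h1) (by omega)
    · rcases (Nat.Prime.dvd_mul hp').mp h2 with h3 | h4
      · exact le_antisymm (Nat.le_of_dvd (by omega) h3) hKp'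
      · have := Nat.le_of_dvd (by omega) h4
        omega
  obtain ⟨p, hp, hpq⟩ := Nat.exists_prime_and_dvd hq1
  have hpK : p = K := hfK p hp hpq
  have hKprime : Nat.Prime K := hpK ▸ hp
  have hKq : K ∣ q := hpK ▸ hpq
  obtain ⟨M, hMq⟩ := hKq
  have hM1 : M ≠ 1 := fun e => hqK (by rw [hMq, e, mul_one])
  obtain ⟨p', hp', hp'M⟩ := Nat.exists_prime_and_dvd hM1
  have hp'q : p' ∣ q := hp'M.trans ⟨K, by rw [hMq, mul_comm]⟩
  have hp'K : p' = K := hfK p' hp' hp'q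
  have hKM : K ∣ M := hp'K ▸ hp'M
  have hKKq : K * K ∣ q := by
    obtain ⟨M', hM'⟩ := hKM
    exact ⟨M', by rw [hMq, hM', mul_assoc]⟩
  have hKdvd : K ∣ (K - 1) * j := by
    have h2 : K * K ∣ K * ((K - 1) * j) := by
      have he : K * ((K - 1) * j) = (K - 1) * (K * j) := by ring
      rw [he]
      exact hKKq.trans h
    exact (mul_dvd_mul_iff_left (by omega : K ≠ 0)).mp h2
  rcases (Nat.Prime.dvd_mul hKprime).mp hKdvd with h1 | h2
  · have := Nat.le_of_dvd (by omega) h1; omega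
  · have := Nat.le_of_dvd (by omega) h2; omega

section period
variable {r : Setoid X} {U : X → Subgroup (Equiv.Perm X)}
variable (hM : IsLocalMoufangSet r U) {o i : X} (hoi : ¬ r.r o i)
variable {α : X → Equiv.Perm X} (hα : ∀ y : X, ¬ r.r y i → α y ∈ U i ∧ α y o = y)
include hM hoi hα

/-- existence of a period: the set of `s` with `y·s ∼ o` is `qℤ`. -/
lemma exists_period (y : X) (hyi : ¬ r.r y i) :
    ∃ q : ℕ, ∀ s : ℤ, r.r (Pp α o y s) o ↔ (q : ℤ) ∣ s := by
  let H : AddSubgroup ℤ :=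
  { carrier := {s : ℤ | r.r (Pp α o y s) o}
    zero_mem' := by
      show r.r (Pp α o y 0) o
      rw [Pp_zero hM hoi hα y]
    add_mem' := by
      intro s t hs ht
      show r.r (Pp α o y (s + t)) o
      have hp : PreservesRel r ((α y) ^ s) := pres_of_memG hM (memG (zpow_mem (hα y hyi).1 s))
      have h1 : r.r (((α y) ^ s) (Pp α o y t)) (((α y) ^ s) o) := pres_r hp ht
      rw [← Pp_add hM hoi hα y s t] at h1
      exact r.iseqv.trans h1 hs
    neg_mem' := by
      intro s hs
      show r.r (Pp α o y (-s)) o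
      exact (Pp_neg_class hM hoi hα hyi s).mpr hs }
  obtain ⟨a, ha⟩ := Int.subgroup_cyclic H
  refine ⟨a.natAbs, fun s => ?_⟩
  have hmem : r.r (Pp α o y s) o ↔ s ∈ H := Iff.rfl
  rw [hmem, ha, AddSubgroup.mem_closure_singleton]
  constructor
  · rintro ⟨n, rfl⟩
    exact Int.natAbs_dvd.mpr ⟨n, by rw [smul_eq_mul, mul_comm]⟩
  · intro hdvd
    obtain ⟨c, hc⟩ := Int.natAbs_dvd.mp hdvd
    exact ⟨c, by rw [smul_eq_mul, mul_comm, ← hc]⟩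

end period
end LMS11

namespace LMS11

section corearg
variable {r : Setoid X} {U : X → Subgroup (Equiv.Perm X)}
variable (hM : IsLocalMoufangSet r U) {o i : X} (hoi : ¬ r.r o i)
variable {α : X → Equiv.Perm X} (hα : ∀ y : X, ¬ r.r y i → α y ∈ U i ∧ α y o = y)
variable (hstar : ∀ z : X, ¬ r.r z o → ¬ r.r z i → (Cm hM hoi z)⁻¹ i = ng α o z)
include hM hoi hα hstar

/-- conversion: from the root identity at `v` to the power identity. -/
lemma coreC {v : X} (hvo : ¬ r.r v o) (hvi : ¬ r.r v i)
    {Kv : ℕ} (hKu : ¬ r.r (Pp α o v (Kv:ℤ)) o)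
    (hgoal : (α (Wp hM hoi v (Kv:ℤ))) ^ Kv = α v) :
    (Cm hM hoi (Pp α o v (Kv:ℤ))) ^ Kv = Cm hM hoi v := by
  set D := Wp hM hoi v (Kv:ℤ) with hD
  have hDi : ¬ r.r D i := W_nr_i hM hoi hα hstar hvo hvi hKu
  have hconj : mu hM hoi α v * α D * (mu hM hoi α v)⁻¹ = (Cm hM hoi (Pp α o v (Kv:ℤ)))⁻¹ := by
    rw [conjA hM hoi hα (mu_memG hM hoi hα hstar hvo hvi) (mu_o hM hoi hα hstar hvo hvi)
      (mu_i hM hoi hα hstar hvo hvi) hDi, hD, mu_W hM hoi hα hstar hvo hvi (Kv:ℤ)]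
    have hng : Pp α o v (-(Kv:ℤ)) = ng α o (Pp α o v (Kv:ℤ)) := by
      rw [ng, alpha_Pp hM hoi hα hvi (Kv:ℤ)]
      simp [Pp]
    rw [hng, Cm_ng hM hoi hα hstar hKu (Pp_nr_i hM hoi hα hvi (Kv:ℤ))]
  have hpow := congrArg (fun u : Equiv.Perm X => u ^ Kv) hconj
  simp only [conj_pow] at hpow
  rw [hgoal, muA hM hoi hα hstar hvo hvi, inv_pow] at hpow
  exact (inv_injective hpow).symm

/-- **the core induction**: the `K`-th root of a unit with unit chain is `Wp y K`. -/
theorem core : ∀ K : ℕ, 1 ≤ K → ∀ y : X, ¬ r.r y o → ¬ r.r y i →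
    (∀ j : ℕ, 1 ≤ j → j ≤ K → ¬ r.r (Pp α o y (j:ℤ)) o) →
    (α (Wp hM hoi y (K:ℤ))) ^ K = α y := by
  intro K
  induction K using Nat.strong_induction_on with
  | _ K IH =>
  intro hK1 y hyo hyi hchain
  rcases eq_or_lt_of_le hK1 with h1 | hK2'
  · obtain rfl : K = 1 := h1.symm
    rw [show ((1:ℕ):ℤ) = (1:ℤ) by norm_num, Wp_one hM hoi hα hyo, pow_one]
  · have hK2 : 2 ≤ K := hK2'
    set Km := K - 1 with hKmdef
    have hKm1 : 1 ≤ Km := by omega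
    have hKmK : Km < K := by omega
    have hcast : (Km:ℤ) + 1 = (K:ℤ) := by push_cast [hKmdef]; omega
    have hchain' : ∀ j : ℕ, 1 ≤ j → j ≤ Km → ¬ r.r (Pp α o y (j:ℤ)) o :=
      fun j hj1 hj2 => hchain j hj1 (by omega)
    have hcK : ¬ r.r (Pp α o y (K:ℤ)) o := hchain K hK1 le_rfl
    have hcKm : ¬ r.r (Pp α o y (Km:ℤ)) o := hchain Km hKm1 (by omega)
    -- IH at y, level Km
    have IH1 : (α (Wp hM hoi y (Km:ℤ))) ^ Km = α y := IH Km hKmK hKm1 y hyo hyi hchain'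
    set w := Wp hM hoi y (Km:ℤ) with hwdef
    have hwo : ¬ r.r w o := Wp_nr_o hM hoi hα hyo (Km:ℤ)
    have hwi : ¬ r.r w i := W_nr_i hM hoi hα hstar hyo hyi hcKm
    set wK := Wp hM hoi y (K:ℤ) with hwKdef
    have hwKo : ¬ r.r wK o := Wp_nr_o hM hoi hα hyo (K:ℤ)
    have hwKi : ¬ r.r wK i := W_nr_i hM hoi hα hstar hyo hyi hcK
    set c := Pp α o y (K:ℤ) with hcdef
    have hci : ¬ r.r c i := Pp_nr_i hM hoi hα hyi (K:ℤ)
    -- the translated point R = y + w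
    set R := (α y) w with hRdef
    have hRi : ¬ r.r R i := by
      have hp : PreservesRel r (α y) := hM.preserves i (α y) (hα y hyi).1
      have h := pres_nr hp hwi
      rwa [hM.fixes i (α y) (hα y hyi).1] at h
    have hARmul : α R = α y * α w := by
      have hmem : α y * α w ∈ U i := mul_mem (hα y hyi).1 (hα w hwi).1
      have hval : (α y * α w) o = R := by
        rw [Equiv.Perm.mul_apply, (hα w hwi).2, hRdef]
      rw [Ui_repr hM hoi hα hmem, hval]
    have hAR : α R = (α w) ^ K := by
      have hs : Km + 1 = K := by omega
      rw [hARmul, ← IH1, ← pow_succ, hs]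
    -- period of y
    obtain ⟨q, hq⟩ := exists_period hM hoi hα y hyi
    have hqK : ¬ q ∣ K := by
      intro hd
      exact hcK ((hq (K:ℤ)).mpr (by exact_mod_cast hd))
    have hfac : ∀ p : ℕ, p.Prime → p ∣ q → q ≠ 0 → ¬ p < K := by
      intro p hp hpq hq0 hpK
      have hp2 : 2 ≤ p := hp.two_le
      have hcp : ¬ r.r (Pp α o y (p:ℤ)) o := hchain p (by omega) (by omega)
      have hchainp : ∀ j : ℕ, 1 ≤ j → j ≤ p → ¬ r.r (Pp α o y (j:ℤ)) o :=
        fun j h1 h2 => hchain j h1 (by omega)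
      have IHp : (α (Wp hM hoi y (p:ℤ))) ^ p = α y := IH p hpK (by omega) y hyo hyi hchainp
      obtain ⟨m, hm⟩ := hpq
      have hm0 : m ≠ 0 := by rintro rfl; rw [mul_zero] at hm; exact hq0 hm
      set h := Wp hM hoi y (p:ℤ) with hhdef
      have key : Pp α o y (m:ℤ) = Pp α o h (q:ℤ) := by
        show ((α y) ^ (m:ℤ)) o = ((α h) ^ (q:ℤ)) o
        rw [← IHp, ← zpow_natCast (α h) p, ← zpow_mul]
        congr 2
        push_cast [hm]
        ring
      have hPhq : r.r (Pp α o h (q:ℤ)) o := by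
        rw [hhdef, transfer hM hoi hα hstar hyo hyi hcp (q:ℤ)]
        exact (hq ((p:ℤ)*(q:ℤ))).mpr ⟨(p:ℤ), by ring⟩
      have hrm : r.r (Pp α o y (m:ℤ)) o := key ▸ hPhq
      have hqm : q ∣ m := by exact_mod_cast (hq (m:ℤ)).mp hrm
      have hqlem : q ≤ m := Nat.le_of_dvd (by omega) hqm
      have h2m : 2 * m ≤ q := by rw [hm]; exact Nat.mul_le_mul_right m hp2
      omega
    -- chain at R
    have hRchain : ∀ j : ℕ, 1 ≤ j → j ≤ Km → ¬ r.r (Pp α o R (j:ℤ)) o := by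
      intro j hj1 hj2
      have hPR : Pp α o R (j:ℤ) = Pp α o w ((K:ℤ)*(j:ℤ)) := by
        show ((α R) ^ (j:ℤ)) o = ((α w) ^ ((K:ℤ)*(j:ℤ))) o
        rw [hAR, ← zpow_natCast (α w) K, ← zpow_mul]
      rw [hPR, hwdef, transfer hM hoi hα hstar hyo hyi hcKm ((K:ℤ)*(j:ℤ))]
      intro hrel
      have hdvd : (q:ℤ) ∣ (Km:ℤ) * ((K:ℤ)*(j:ℤ)) := (hq _).mp hrel
      have hdvdn : q ∣ Km * (K * j) := by exact_mod_cast hdvd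
      rw [hKmdef] at hdvdn
      exact arith hK2 hj1 (by omega) hfac hqK hdvdn
    have hRo : ¬ r.r R o := by
      have h := hRchain 1 le_rfl hKm1
      rwa [show ((1:ℕ):ℤ) = (1:ℤ) by norm_num, Pp_one hM hoi hα hRi] at h
    -- IH at R, level Km, and conversion
    have IH2 : (α (Wp hM hoi R (Km:ℤ))) ^ Km = α R := IH Km hKmK hKm1 R hRo hRi hRchain
    have hC1 : (Cm hM hoi (Pp α o R (Km:ℤ))) ^ Km = Cm hM hoi R :=
      coreC hM hoi hα hstar hRo hRi (hRchain Km hKm1 le_rfl) IH2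
    have hPRKm : Pp α o R (Km:ℤ) = c := by
      rw [hcdef]
      show ((α R) ^ (Km:ℤ)) o = ((α y) ^ (K:ℤ)) o
      rw [hAR, ← IH1, ← zpow_natCast (α w) K, ← zpow_natCast (α w) Km, ← zpow_mul, ← zpow_mul,
        mul_comm ((K:ℕ):ℤ) ((Km:ℕ):ℤ)]
    have hC2 : (Cm hM hoi c) ^ Km = Cm hM hoi R := by rw [← hPRKm]; exact hC1
    -- the bridge
    have hmuyc : mu hM hoi α y c = Wp hM hoi y (-(K:ℤ)) := by
      rw [hcdef]; exact mu_P hM hoi hα hstar hyo hyi (K:ℤ)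
    have hWneg : Wp hM hoi y (-(K:ℤ)) = ng α o wK := by
      have h1 : Cm hM hoi wK = (Cm hM hoi y) ^ (K:ℤ) := by
        rw [hwKdef]; exact Cm_Wp hM hoi hα hyo (K:ℤ)
      have h2 : (Cm hM hoi y) ^ (-(K:ℤ)) = (Cm hM hoi wK)⁻¹ := by rw [h1, zpow_neg]
      show ((Cm hM hoi y) ^ (-(K:ℤ))) i = ng α o wK
      rw [h2]
      exact hstar wK hwKo hwKi
    have hAm : α (Wp hM hoi y (-(K:ℤ))) = (α wK)⁻¹ := by
      rw [hWneg, alpha_ng hM hoi hα hwKi]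
    have hCmm : Cm hM hoi (Wp hM hoi y (-(K:ℤ))) = (Cm hM hoi wK)⁻¹ := by
      rw [hWneg, Cm_ng hM hoi hα hstar hwKo hwKi]
    have hnu : mu hM hoi α y * mu hM hoi α c * (mu hM hoi α y)⁻¹
        = α wK * (Cm hM hoi wK)⁻¹ * α wK := by
      have e1 : mu hM hoi α y * Cm hM hoi c * (mu hM hoi α y)⁻¹ = (α wK)⁻¹ := by
        rw [conjC hM hoi hα (mu_memG hM hoi hα hstar hyo hyi) (mu_o hM hoi hα hstar hyo hyi)
          (mu_i hM hoi hα hstar hyo hyi) hcK, hmuyc, hAm]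
      have e2 : mu hM hoi α y * α c * (mu hM hoi α y)⁻¹ = (Cm hM hoi wK)⁻¹ := by
        rw [conjA hM hoi hα (mu_memG hM hoi hα hstar hyo hyi) (mu_o hM hoi hα hstar hyo hyi)
          (mu_i hM hoi hα hstar hyo hyi) hci, hmuyc, hCmm]
      have e1' : mu hM hoi α y * (Cm hM hoi c)⁻¹ * (mu hM hoi α y)⁻¹ = α wK := by
        have hh : mu hM hoi α y * (Cm hM hoi c)⁻¹ * (mu hM hoi α y)⁻¹
            = (mu hM hoi α y * Cm hM hoi c * (mu hM hoi α y)⁻¹)⁻¹ := by group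
        rw [hh, e1, inv_inv]
      have hdecomp : mu hM hoi α y * mu hM hoi α c * (mu hM hoi α y)⁻¹
          = (mu hM hoi α y * (Cm hM hoi c)⁻¹ * (mu hM hoi α y)⁻¹) *
            (mu hM hoi α y * α c * (mu hM hoi α y)⁻¹) *
            (mu hM hoi α y * (Cm hM hoi c)⁻¹ * (mu hM hoi α y)⁻¹) := by
        simp only [mu]; group
      rw [hdecomp, e1', e2]
    -- the correcting element l, trivial on the wK-orbit
    set nu := α wK * (Cm hM hoi wK)⁻¹ * α wK with hnudef
    set l := nu * mu hM hoi α wK with hldef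
    have hCwKi : Cm hM hoi wK i = wK := Cm_i hM hoi hwKo
    have hfixi : α wK i = i := hM.fixes i (α wK) (hα wK hwKi).1
    have hfixo : (Cm hM hoi wK)⁻¹ o = o := fix_inv (hM.fixes o _ (Cm_mem hM hoi hwKo))
    have hlo : l o = o := by
      have h1 : mu hM hoi α wK o = i := mu_o hM hoi hα hstar hwKo hwKi
      have h2 : (Cm hM hoi wK)⁻¹ i = ng α o wK := hstar wK hwKo hwKi
      have h3 : α wK (ng α o wK) = o := apply_ng hM hoi hα wK
      simp only [hldef, hnudef, Equiv.Perm.mul_apply, h1, hfixi, h2, h3]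
    have hli : l i = i := by
      have h1 : mu hM hoi α wK i = o := mu_i hM hoi hα hstar hwKo hwKi
      have h2 : α wK o = wK := (hα wK hwKi).2
      have h3 : (Cm hM hoi wK)⁻¹ wK = i := inv_apply_of_apply hCwKi
      simp only [hldef, hnudef, Equiv.Perm.mul_apply, h1, h2, h3, hfixi]
    have hlw : l wK = wK := by
      have h1 : mu hM hoi α wK wK = ng α o wK := mu_y hM hoi hα hstar hwKo hwKi
      have h2 : α wK (ng α o wK) = o := apply_ng hM hoi hα wK
      have h3 : α wK o = wK := (hα wK hwKi).2
      simp only [hldef, hnudef, Equiv.Perm.mul_apply, h1, h2, hfixo, h3]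
    have hlG : l ∈ ⨆ z : X, U z := by
      exact mul_mem (mul_mem (mul_mem (memG (hα wK hwKi).1)
        (memG (inv_mem (Cm_mem hM hoi hwKo)))) (memG (hα wK hwKi).1))
        (mu_memG hM hoi hα hstar hwKo hwKi)
    have hlC : l * Cm hM hoi wK * l⁻¹ = Cm hM hoi wK :=by
      rw [conjC_h hM hoi hα hlG hlo hli hwKo, hlw]
    have hcomm : Commute l (Cm hM hoi wK) := mul_inv_eq_iff_eq_mul.mp hlC
    have hlfix : l (Wp hM hoi wK (Km:ℤ)) = Wp hM hoi wK (Km:ℤ) := by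
      have hcommz := (hcomm.zpow_right (Km:ℤ)).eq
      show l (((Cm hM hoi wK) ^ ((Km:ℕ):ℤ)) i) = ((Cm hM hoi wK) ^ ((Km:ℕ):ℤ)) i
      rw [← Equiv.Perm.mul_apply, hcommz, Equiv.Perm.mul_apply, hli]
    have hWwK : Wp hM hoi wK (Km:ℤ) = Wp hM hoi y ((K:ℤ)*(Km:ℤ)) := by
      show ((Cm hM hoi wK) ^ ((Km:ℕ):ℤ)) i = ((Cm hM hoi y) ^ ((K:ℤ)*(Km:ℤ))) i
      rw [hwKdef, Cm_Wp hM hoi hα hyo (K:ℤ), ← zpow_mul]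
    have hmuyR : mu hM hoi α y R = (α y)⁻¹ wK := by
      have h1 : mu hM hoi α y ((α y) w) = (Cm hM hoi y)⁻¹ (mu hM hoi α y w) :=
        conj_eval (muA hM hoi hα hstar hyo hyi) w
      have h2 : mu hM hoi α y w = Pp α o y (-(Km:ℤ)) := by
        rw [hwdef]; exact mu_W hM hoi hα hstar hyo hyi (Km:ℤ)
      have hA : α y = Cm hM hoi y * mu hM hoi α y * Cm hM hoi y := by
        simp only [mu]; group
      have hstep : (Cm hM hoi y)⁻¹ (Wp hM hoi y ((Km:ℤ)+1)) = Wp hM hoi y (Km:ℤ) := by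
        show (Cm hM hoi y)⁻¹ (((Cm hM hoi y) ^ ((Km:ℤ)+1)) i) = ((Cm hM hoi y) ^ ((Km:ℕ):ℤ)) i
        rw [← Equiv.Perm.mul_apply]
        congr 1
        rw [← zpow_neg_one, ← zpow_add]
        congr 1
        ring
      have hstep2 : (mu hM hoi α y)⁻¹ (Wp hM hoi y (Km:ℤ)) = Pp α o y (-(Km:ℤ)) :=
        mu_inv_W hM hoi hα hstar hyo hyi (Km:ℤ)
      have h3 : (Cm hM hoi y)⁻¹ (Pp α o y (-(Km:ℤ))) = (α y)⁻¹ (Wp hM hoi y ((Km:ℤ)+1)) := by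
        conv_rhs => rw [hA]
        simp only [mul_inv_rev, Equiv.Perm.mul_apply]
        rw [hstep, hstep2]
      rw [hRdef, h1, h2, h3, hcast, ← hwKdef]
    have hbridge : Pp α o wK (-(Km:ℤ)) = (α y)⁻¹ wK := by
      have h1 : mu hM hoi α wK (Wp hM hoi wK (Km:ℤ)) = Pp α o wK (-(Km:ℤ)) :=
        mu_W hM hoi hα hstar hwKo hwKi (Km:ℤ)
      have hmu_eq : mu hM hoi α wK = nu⁻¹ * l := by rw [hldef]; group
      have h2 : Pp α o wK (-(Km:ℤ)) = nu⁻¹ (Wp hM hoi wK (Km:ℤ)) := by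
        rw [← h1, hmu_eq, Equiv.Perm.mul_apply, hlfix]
      have hnuinv : nu⁻¹ = mu hM hoi α y * (mu hM hoi α c)⁻¹ * (mu hM hoi α y)⁻¹ := by
        rw [← hnu]; group
      have h3 : (mu hM hoi α y)⁻¹ (Wp hM hoi y ((K:ℤ)*(Km:ℤ))) = Pp α o y (-((K:ℤ)*(Km:ℤ))) :=
        mu_inv_W hM hoi hα hstar hyo hyi _
      have h4 : Pp α o y (-((K:ℤ)*(Km:ℤ))) = Pp α o c (-(Km:ℤ)) := by
        rw [hcdef, Pp_comp hM hoi hα hyi (K:ℤ) (-(Km:ℤ))]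
        congr 1
        ring
      have h5 : (mu hM hoi α c)⁻¹ (Pp α o c (-(Km:ℤ))) = Wp hM hoi c (Km:ℤ) := by
        have hh := mu_inv_P hM hoi hα hstar hcK hci (-(Km:ℤ))
        rwa [neg_neg] at hh
      have h6 : Wp hM hoi c (Km:ℤ) = R := by
        show ((Cm hM hoi c) ^ ((Km:ℕ):ℤ)) i = R
        rw [zpow_natCast, hC2, Cm_i hM hoi hRo]
      rw [h2, hnuinv, hWwK]
      simp only [Equiv.Perm.mul_apply]
      rw [h3, h4, h5, h6]
      exact hmuyR
    -- finale
    have hfin : ((α wK) ^ (-(Km:ℤ))) o = ((α y)⁻¹ * α wK) o := by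
      have hr : ((α y)⁻¹ * α wK) o = (α y)⁻¹ wK := by
        rw [Equiv.Perm.mul_apply, (hα wK hwKi).2]
      rw [hr]
      exact hbridge
    have heq : (α wK) ^ (-(Km:ℤ)) = (α y)⁻¹ * α wK :=
      Ueq hM (zpow_mem (hα wK hwKi).1 _) (mul_mem (inv_mem (hα y hyi).1) (hα wK hwKi).1)
        hoi hfin
    have hfin2 : α y = (α wK) ^ ((K:ℕ):ℤ) := by
      have h7 : α y * ((α wK) ^ (-(Km:ℤ))) = α wK := by
        rw [heq]; group
      calc α y = α y * ((α wK) ^ (-(Km:ℤ))) * ((α wK) ^ ((Km:ℕ):ℤ)) := by group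
        _ = α wK * ((α wK) ^ ((Km:ℕ):ℤ)) := by rw [h7]
        _ = ((α wK) ^ (1:ℤ)) * ((α wK) ^ ((Km:ℕ):ℤ)) := by rw [zpow_one]
        _ = (α wK) ^ (1 + ((Km:ℕ):ℤ)) := by rw [← zpow_add]
        _ = (α wK) ^ ((K:ℕ):ℤ) := by rw [show (1:ℤ) + ((Km:ℕ):ℤ) = ((K:ℕ):ℤ) by omega]
    rw [← zpow_natCast (α wK) K]
    exact hfin2.symm

end corearg
end LMS11

namespace LMS11

section finale
variable {r : Setoid X} {U : X → Subgroup (Equiv.Perm X)}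
variable (hM : IsLocalMoufangSet r U) {o i : X} (hoi : ¬ r.r o i)
variable {α : X → Equiv.Perm X} (hα : ∀ y : X, ¬ r.r y i → α y ∈ U i ∧ α y o = y)
include hM hoi hα

lemma star_of_special {τ : Equiv.Perm X} (hτG : τ ∈ ⨆ y : X, U y)
    (hτo : τ o = i) (hτi : τ i = o)
    (hspecial : ∀ y : X, ¬ r.r y o → ¬ r.r y i → τ ((α y)⁻¹ o) = (α (τ y))⁻¹ o) :
    ∀ z : X, ¬ r.r z o → ¬ r.r z i → (Cm hM hoi z)⁻¹ i = ng α o z := by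
  intro z hzo hzi
  set y := τ⁻¹ z with hydef
  have hty : τ y = z := by rw [hydef]; simp
  have htpres : PreservesRel r τ := pres_of_memG hM hτG
  have hyo : ¬ r.r y o := by
    intro h
    have h2 := pres_r htpres h
    rw [hty, hτo] at h2
    exact hzi h2
  have hyi : ¬ r.r y i := by
    intro h
    have h2 := pres_r htpres h
    rw [hty, hτi] at h2
    exact hzo h2
  have hsp := hspecial y hyo hyi
  have hconj : τ * α y * τ⁻¹ = Cm hM hoi z := by
    rw [conjA hM hoi hα hτG hτo hτi hyi, hty]
  have hLHS : τ ((α y)⁻¹ o) = (Cm hM hoi z)⁻¹ i := by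
    have hc : τ * (α y)⁻¹ * τ⁻¹ = (Cm hM hoi z)⁻¹ := by
      rw [← hconj]; group
    have h3 := conj_eval hc o
    rwa [hτo] at h3
  rw [hLHS, hty] at hsp
  exact hsp

variable (hstar : ∀ z : X, ¬ r.r z o → ¬ r.r z i → (Cm hM hoi z)⁻¹ i = ng α o z)
include hstar

/-- uniqueness: any `n`-th root of a unit with unit chain equals `Wp x n`. -/
lemma root_eq {n : ℕ} (hn : 1 ≤ n) {x : X} (hxo : ¬ r.r x o) (hxi : ¬ r.r x i)
    (hchain : ∀ j : ℕ, 1 ≤ j → j ≤ n → ¬ r.r (Pp α o x (j:ℤ)) o)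
    {y' : X} (hy'i : ¬ r.r y' i) (heq : (α y' ^ n) o = x) :
    y' = Wp hM hoi x (n:ℤ) := by
  have hy'o : ¬ r.r y' o := by
    intro h
    have hpr : PreservesRel r (α y') := hM.preserves i (α y') (hα y' hy'i).1
    have h0 : r.r (α y' o) o := by rw [(hα y' hy'i).2]; exact h
    have h1 := rel_iter hpr h0 n
    rw [heq] at h1
    exact hxo h1
  have hAy' : α y' ^ n = α x :=
    Ueq hM (pow_mem (hα y' hy'i).1 n) (hα x hxi).1 hoi (by rw [heq, (hα x hxi).2])
  have hchainy : ∀ j : ℕ, 1 ≤ j → j ≤ n → ¬ r.r (Pp α o y' (j:ℤ)) o := by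
    intro j hj1 hj2 hcon
    have hPp : Pp α o y' (j:ℤ) = (α y' ^ j) o := by
      show ((α y') ^ ((j:ℕ):ℤ)) o = _
      rw [zpow_natCast]
    rw [hPp] at hcon
    have hpr : PreservesRel r (α y' ^ j) := pres_of_memG hM (memG (pow_mem (hα y' hy'i).1 j))
    have hit := rel_iter hpr hcon n
    have hpw : ((α y' ^ j) ^ n) o = ((α x) ^ j) o := by
      rw [← pow_mul, mul_comm, pow_mul, hAy']
    rw [hpw] at hit
    have hc := hchain j hj1 hj2
    rw [show Pp α o x (j:ℤ) = ((α x) ^ j) o from by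
      show ((α x) ^ ((j:ℕ):ℤ)) o = _; rw [zpow_natCast]] at hc
    exact hc hit
  have hcore := core hM hoi hα hstar n hn y' hy'o hy'i hchainy
  have hPx : Pp α o y' (n:ℤ) = x := by
    show ((α y') ^ ((n:ℕ):ℤ)) o = x
    rw [zpow_natCast, heq]
  have hKu : ¬ r.r (Pp α o y' (n:ℤ)) o := by rw [hPx]; exact hxo
  have hCy' := coreC hM hoi hα hstar hy'o hy'i hKu hcore
  rw [hPx] at hCy'
  have hy'eq : y' = (Cm hM hoi y') i := (Cm_i hM hoi hy'o).symm
  rw [hy'eq, ← hCy']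
  show ((Cm hM hoi x) ^ (n:ℕ)) i = ((Cm hM hoi x) ^ ((n:ℕ):ℤ)) i
  rw [zpow_natCast]

end finale
end LMS11


open LMS11

/-- unique `n`-divisibility of units in a special local Moufang
set.  Here `(o, i) = (0, ∞)`, `α y` is the unique element of `U ∞` with
`0 · α_y = y` (for `y ≁ ∞`), `x · k := 0 · α_x ^ k`, `τ = μ_e` is a μ-map, and
`M` is special: `(-y)τ = -(yτ)` for all units `y`, where `-y = (α_y)⁻¹ 0`.
If `x · k` is a unit for all `1 ≤ k ≤ n`, then there is a unique `y` with
`y · n = x`; moreover `(x · n)τ = (xτ) · (1/n)` (i.e. `(xτ) · n`-th roots land on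
`(x·n)τ`) and `(x · (1/n))τ = (xτ) · n`. -/
theorem statement11 (r : Setoid X) (U : X → Subgroup (Equiv.Perm X))
    (hM : IsLocalMoufangSet r U) (o i : X) (hoi : ¬ r.r o i)
    (α : X → Equiv.Perm X) (hα : ∀ y : X, ¬ r.r y i → α y ∈ U i ∧ α y o = y)
    (τ : Equiv.Perm X) (e : X) (heo : ¬ r.r e o) (hei : ¬ r.r e i)
    (hτ : IsMuMap U o i e τ)
    (hspecial : ∀ y : X, ¬ r.r y o → ¬ r.r y i → τ ((α y)⁻¹ o) = (α (τ y))⁻¹ o)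
    (n : ℕ) (hn : 1 ≤ n) (x : X) (hxo : ¬ r.r x o) (hxi : ¬ r.r x i)
    (hpow : ∀ k : ℕ, 1 ≤ k → k ≤ n →
      ¬ r.r ((α x ^ k) o) o ∧ ¬ r.r ((α x ^ k) o) i) :
    (∃! y : X, ¬ r.r y i ∧ (α y ^ n) o = x) ∧
    (∀ z : X, ¬ r.r z i → (α z ^ n) o = τ x → τ ((α x ^ n) o) = z) ∧
    (∀ y : X, ¬ r.r y i → (α y ^ n) o = x → τ y = (α (τ x) ^ n) o) := by
  obtain ⟨a, haU, hao, ⟨u, hu, v, hv, hτeq⟩, hτo, hτi⟩ := hτ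
  have hτG : τ ∈ ⨆ y : X, U y := by
    rw [hτeq]
    exact mul_mem (mul_mem (memG hu) (memG haU)) (memG hv)
  have hstar := star_of_special hM hoi hα hτG hτo hτi hspecial
  have hτinvo : τ⁻¹ o = i := inv_apply_of_apply hτi
  have hτinvi : τ⁻¹ i = o := inv_apply_of_apply hτo
  have hchain : ∀ j : ℕ, 1 ≤ j → j ≤ n → ¬ r.r (Pp α o x (j:ℤ)) o := by
    intro j h1 h2
    have h3 := (hpow j h1 h2).1
    rwa [show Pp α o x (j:ℤ) = (α x ^ j) o from by
      show ((α x) ^ ((j:ℕ):ℤ)) o = _; rw [zpow_natCast]]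
  have hcn : ¬ r.r (Pp α o x (n:ℤ)) o := hchain n hn le_rfl
  set y₀ := Wp hM hoi x (n:ℤ) with hy₀def
  have hy₀i : ¬ r.r y₀ i := W_nr_i hM hoi hα hstar hxo hxi hcn
  have hcore := core hM hoi hα hstar n hn x hxo hxi hchain
  have hy₀root : (α y₀ ^ n) o = x := by
    rw [hcore, (hα x hxi).2]
  refine ⟨⟨y₀, ⟨hy₀i, hy₀root⟩, ?_⟩, ?_, ?_⟩
  · rintro y' ⟨hy'i, hy'eq⟩
    exact root_eq hM hoi hα hstar hn hxo hxi hchain hy'i hy'eq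
  · intro z hzi hzeq
    have hx'o : ¬ r.r (τ x) o := by
      intro h
      have h3 := pres_r (pres_of_memG hM (inv_mem hτG)) h
      rw [(Equiv.Perm.inv_eq_iff_eq.mpr rfl : τ⁻¹ (τ x) = x), hτinvo] at h3
      exact hxi h3
    have hx'i : ¬ r.r (τ x) i := by
      intro h
      have h3 := pres_r (pres_of_memG hM (inv_mem hτG)) h
      rw [(Equiv.Perm.inv_eq_iff_eq.mpr rfl : τ⁻¹ (τ x) = x), hτinvi] at h3
      exact hxo h3
    have hconjA : τ * α x * τ⁻¹ = Cm hM hoi (τ x) := conjA hM hoi hα hτG hτo hτi hxi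
    have hconjC : τ * Cm hM hoi x * τ⁻¹ = α (τ x) := conjC hM hoi hα hτG hτo hτi hxo
    have hchain' : ∀ j : ℕ, 1 ≤ j → j ≤ n → ¬ r.r (Pp α o (τ x) (j:ℤ)) o := by
      intro j h1 h2
      have hcz : (α (τ x)) ^ (j:ℕ) = τ * (Cm hM hoi x) ^ j * τ⁻¹ := by
        rw [← hconjC, conj_pow]
      have hPp : Pp α o (τ x) (j:ℤ) = τ (((Cm hM hoi x) ^ j) i) := by
        show ((α (τ x)) ^ ((j:ℕ):ℤ)) o = _
        rw [zpow_natCast, hcz]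
        simp [Equiv.Perm.mul_apply, hτinvo]
      rw [hPp]
      intro hrel
      have h3 := pres_r (pres_of_memG hM (inv_mem hτG)) hrel
      rw [(Equiv.Perm.inv_eq_iff_eq.mpr rfl : τ⁻¹ (τ ((Cm hM hoi x ^ j) i)) = (Cm hM hoi x ^ j) i), hτinvo] at h3
      have hW : r.r (Wp hM hoi x (j:ℤ)) i := by
        rw [show Wp hM hoi x (j:ℤ) = ((Cm hM hoi x) ^ j) i from by
          show ((Cm hM hoi x) ^ ((j:ℕ):ℤ)) i = _; rw [zpow_natCast]]
        exact h3
      rw [Wclass hM hoi hα hstar hxo hxi (j:ℤ)] at hW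
      exact hchain j h1 h2 hW
    have hz := root_eq hM hoi hα hstar hn hx'o hx'i hchain' hzi hzeq
    have hWτ : Wp hM hoi (τ x) (n:ℤ) = τ ((α x ^ n) o) := by
      have hcz : (Cm hM hoi (τ x)) ^ (n:ℕ) = τ * (α x) ^ n * τ⁻¹ := by
        rw [← hconjA, conj_pow]
      show ((Cm hM hoi (τ x)) ^ ((n:ℕ):ℤ)) i = _
      rw [zpow_natCast, hcz]
      simp [Equiv.Perm.mul_apply, hτinvi]
    rw [hz, hWτ]
  · intro y hyi hyeq
    have hy := root_eq hM hoi hα hstar hn hxo hxi hchain hyi hyeq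
    rw [hy]
    have hconjC : τ * Cm hM hoi x * τ⁻¹ = α (τ x) := conjC hM hoi hα hτG hτo hτi hxo
    have hcz : (α (τ x)) ^ (n:ℕ) = τ * (Cm hM hoi x) ^ n * τ⁻¹ := by
      rw [← hconjC, conj_pow]
    show τ (((Cm hM hoi x) ^ ((n:ℕ):ℤ)) i) = ((α (τ x)) ^ n) o
    rw [zpow_natCast, hcz]
    simp [Equiv.Perm.mul_apply, hτinvo]
end

section
/- Let M be a special local Moufang set with abelian root group U_∞ and n ∈ ℕ. If for every unit x and every 1 ≤ k ≤ n, x·k is also a unit, then the group U_∞ is uniquely k-divisible for all 1 ≤ k ≤ n. -/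
/-!
Local Moufang sets, following E. Rijcken, "Local Moufang sets".
A local Moufang set is a set `X` with an equivalence relation (a `Setoid`)
having more than 2 classes, together with root groups `U x` of
equivalence-preserving permutations, satisfying (LM0), (LM1), (LM1'), (LM2).
We use left actions; the paper's right-composition word `a₁a₂⋯aₙ` corresponds
to our product `aₙ * ⋯ * a₁`, and the paper's conjugation `g^h = h⁻¹gh`
corresponds to `h * g * h⁻¹` (i.e. `MulAut.conj h g`).
-/

variable {X : Type*}

theorem Equiv.Perm.apply_inv_self {α : Type*} (f : Equiv.Perm α) (x : α) : f (f⁻¹ x) = x :=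
  f.apply_symm_apply x

theorem Equiv.Perm.inv_apply_self {α : Type*} (f : Equiv.Perm α) (x : α) : f⁻¹ (f x) = x :=
  f.symm_apply_apply x

namespace LMS12

open Equiv

/-- Context packaging all data for Statement 12. -/
structure Ctx (X : Type*) where
  r : Setoid X
  U : X → Subgroup (Equiv.Perm X)
  hM : IsLocalMoufangSet r U
  o : X
  i : X
  hoi : ¬ r.r o i
  α : X → Equiv.Perm X
  hα : ∀ y : X, ¬ r.r y i → α y ∈ U i ∧ α y o = y
  τ : Equiv.Perm X
  hτmem : τ ∈ ⨆ y : X, U y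
  hτpres : PreservesRel r τ
  hτo : τ o = i
  hτi : τ i = o
  hspecial : ∀ y : X, ¬ r.r y o → ¬ r.r y i → τ ((α y)⁻¹ o) = (α (τ y))⁻¹ o
  habel : ∀ a ∈ U i, ∀ b ∈ U i, a * b = b * a

namespace Ctx

variable {X : Type*} (C : Ctx X)

lemma rsymm {a b : X} (h : C.r.r a b) : C.r.r b a := C.r.iseqv.symm h
lemma rtrans {a b c : X} (h1 : C.r.r a b) (h2 : C.r.r b c) : C.r.r a c :=
  C.r.iseqv.trans h1 h2
lemma rrefl (a : X) : C.r.r a a := C.r.iseqv.refl a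
lemma hio : ¬ C.r.r C.i C.o := fun h => C.hoi (C.rsymm h)

/-- A unit: a point not equivalent to `o` nor to `i`. -/
def unit (y : X) : Prop := ¬ C.r.r y C.o ∧ ¬ C.r.r y C.i

lemma memSup {x : X} {g : Equiv.Perm X} (hg : g ∈ C.U x) : g ∈ ⨆ y : X, C.U y :=
  (le_iSup C.U x) hg

/-- image of a non-`x`-class point under an element of `U x` stays off the class. -/
lemma U_img {x : X} {g : Equiv.Perm X} (hg : g ∈ C.U x) {a : X} (ha : ¬ C.r.r a x) :
    ¬ C.r.r (g a) x := by
  intro h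
  have hp := C.hM.preserves x g hg a x
  rw [C.hM.fixes x g hg] at hp
  exact ha (hp.mpr h)

/-- Elements of `U i` agreeing at a point off the class of `i` are equal. -/
lemma eq_of_Ui {g g' : Equiv.Perm X} (hg : g ∈ C.U C.i) (hg' : g' ∈ C.U C.i)
    {a : X} (ha : ¬ C.r.r a C.i) (h : g a = g' a) : g = g' := by
  have hga : ¬ C.r.r (g a) C.i := C.U_img hg ha
  obtain ⟨w, _, huniq⟩ := C.hM.lm1 C.i a (g a) ha hga
  have h1 := huniq g ⟨hg, rfl⟩
  have h2 := huniq g' ⟨hg', h.symm⟩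
  rw [h1, h2]

lemma eq_of_Uo {g g' : Equiv.Perm X} (hg : g ∈ C.U C.o) (hg' : g' ∈ C.U C.o)
    {a : X} (ha : ¬ C.r.r a C.o) (h : g a = g' a) : g = g' := by
  have hga : ¬ C.r.r (g a) C.o := C.U_img hg ha
  obtain ⟨w, _, huniq⟩ := C.hM.lm1 C.o a (g a) ha hga
  have h1 := huniq g ⟨hg, rfl⟩
  have h2 := huniq g' ⟨hg', h.symm⟩
  rw [h1, h2]

lemma αmem {y : X} (hy : ¬ C.r.r y C.i) : C.α y ∈ C.U C.i := (C.hα y hy).1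
lemma αo {y : X} (hy : ¬ C.r.r y C.i) : C.α y C.o = y := (C.hα y hy).2

lemma α_eq {y : X} (hy : ¬ C.r.r y C.i) {g : Equiv.Perm X} (hg : g ∈ C.U C.i)
    (h : g C.o = y) : g = C.α y :=
  C.eq_of_Ui hg (C.αmem hy) C.hoi (by rw [h, C.αo hy])

lemma α_apply_not_i {p q : X} (hp : ¬ C.r.r p C.i) (hq : ¬ C.r.r q C.i) :
    ¬ C.r.r (C.α p q) C.i := C.U_img (C.αmem hp) hq

/-- `α` of a point moved by an element of `U i`. -/
lemma α_apply {g : Equiv.Perm X} (hg : g ∈ C.U C.i) {p : X} (hp : ¬ C.r.r p C.i) :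
    C.α (g p) = g * C.α p := by
  refine (C.α_eq (C.U_img hg hp) (mul_mem hg (C.αmem hp)) ?_).symm
  rw [Equiv.Perm.mul_apply, C.αo hp]

lemma α_point {p q : X} (hp : ¬ C.r.r p C.i) (hq : ¬ C.r.r q C.i) :
    C.α (C.α p q) = C.α p * C.α q := C.α_apply (C.αmem hp) hq

lemma α_comm_pt {p q : X} (hp : ¬ C.r.r p C.i) (hq : ¬ C.r.r q C.i) :
    C.α p q = C.α q p := by
  have h1 : C.α p q = (C.α p * C.α q) C.o := by
    rw [Equiv.Perm.mul_apply, C.αo hq]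
  have h2 : C.α q p = (C.α q * C.α p) C.o := by
    rw [Equiv.Perm.mul_apply, C.αo hp]
  rw [h1, h2, C.habel (C.α p) (C.αmem hp) (C.α q) (C.αmem hq)]

/-- negation -/
def neg (y : X) : X := (C.α y)⁻¹ C.o

lemma neg_not_i {y : X} (hy : ¬ C.r.r y C.i) : ¬ C.r.r (C.neg y) C.i :=
  C.U_img (inv_mem (C.αmem hy)) C.hoi

lemma neg_not_o {y : X} (hy : C.unit y) : ¬ C.r.r (C.neg y) C.o := by
  intro h
  have hp := C.hM.preserves C.i (C.α y) (C.αmem hy.2) (C.neg y) C.o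
  rw [show C.α y (C.neg y) = C.o from Equiv.Perm.apply_inv_self _ _, C.αo hy.2] at hp
  exact hy.1 (C.rsymm (hp.mp h))

lemma neg_unit {y : X} (hy : C.unit y) : C.unit (C.neg y) :=
  ⟨C.neg_not_o hy, C.neg_not_i hy.2⟩

lemma α_neg {y : X} (hy : ¬ C.r.r y C.i) : C.α (C.neg y) = (C.α y)⁻¹ :=
  (C.α_eq (C.neg_not_i hy) (inv_mem (C.αmem hy)) rfl).symm

lemma neg_neg {y : X} (hy : ¬ C.r.r y C.i) : C.neg (C.neg y) = y := by
  show (C.α (C.neg y))⁻¹ C.o = y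
  rw [C.α_neg hy, inv_inv, C.αo hy]

lemma neg_inj {p q : X} (hp : ¬ C.r.r p C.i) (hq : ¬ C.r.r q C.i)
    (h : C.neg p = C.neg q) : p = q := by
  rw [← C.neg_neg hp, ← C.neg_neg hq, h]

lemma neg_α {p q : X} (hp : ¬ C.r.r p C.i) (hq : ¬ C.r.r q C.i) :
    C.neg (C.α p q) = C.α (C.neg p) (C.neg q) := by
  show (C.α (C.α p q))⁻¹ C.o = (C.α (C.neg p)) (C.neg q)
  rw [C.α_point hp hq, C.α_neg hp, mul_inv_rev,
    C.habel _ (inv_mem (C.αmem hq)) _ (inv_mem (C.αmem hp)), Equiv.Perm.mul_apply]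
  rfl

end Ctx
end LMS12

namespace LMS12
namespace Ctx

variable {X : Type*} (C : Ctx X)

open Classical in
/-- the element of `U o` carrying `i` to `y`. -/
noncomputable def bb (y : X) : Equiv.Perm X :=
  if h : ¬ C.r.r y C.o then Classical.choose (C.hM.lm1 C.o C.i y C.hio h) else 1

lemma bb_spec {y : X} (hy : ¬ C.r.r y C.o) :
    C.bb y ∈ C.U C.o ∧ C.bb y C.i = y := by
  unfold bb
  rw [dif_pos hy]
  exact (Classical.choose_spec (C.hM.lm1 C.o C.i y C.hio hy)).1

lemma bbmem {y : X} (hy : ¬ C.r.r y C.o) : C.bb y ∈ C.U C.o := (C.bb_spec hy).1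
lemma bbi {y : X} (hy : ¬ C.r.r y C.o) : C.bb y C.i = y := (C.bb_spec hy).2

lemma bb_eq {y : X} (hy : ¬ C.r.r y C.o) {g : Equiv.Perm X} (hg : g ∈ C.U C.o)
    (h : g C.i = y) : g = C.bb y :=
  C.eq_of_Uo hg (C.bbmem hy) C.hio (by rw [h, C.bbi hy])

lemma bb_inj {p q : X} (hp : ¬ C.r.r p C.o) (hq : ¬ C.r.r q C.o)
    (h : C.bb p = C.bb q) : p = q := by
  rw [← C.bbi hp, ← C.bbi hq, h]

/- τ basics -/
lemma τinv_o : C.τ⁻¹ C.o = C.i := by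
  rw [← C.hτi]; exact Equiv.Perm.inv_apply_self _ _
lemma τinv_i : C.τ⁻¹ C.i = C.o := by
  rw [← C.hτo]; exact Equiv.Perm.inv_apply_self _ _

lemma pres_inv {g : Equiv.Perm X} (hg : PreservesRel C.r g) : PreservesRel C.r g⁻¹ := by
  intro a b
  have := hg (g⁻¹ a) (g⁻¹ b)
  rw [Equiv.Perm.apply_inv_self, Equiv.Perm.apply_inv_self] at this
  exact this.symm

lemma τunit {y : X} (hy : C.unit y) : C.unit (C.τ y) := by
  constructor
  · intro h
    have := (C.hτpres y C.i).mpr (by rwa [C.hτi])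
    exact hy.2 this
  · intro h
    have := (C.hτpres y C.o).mpr (by rwa [C.hτo])
    exact hy.1 this

lemma τinvunit {y : X} (hy : C.unit y) : C.unit (C.τ⁻¹ y) := by
  have hp := C.pres_inv C.hτpres
  constructor
  · intro h
    have := (hp y C.i).mpr (by rwa [C.τinv_i])
    exact hy.2 this
  · intro h
    have := (hp y C.o).mpr (by rwa [C.τinv_o])
    exact hy.1 this

/- conjugation -/
lemma conj_mem {x : X} {g h : Equiv.Perm X} (hg : g ∈ ⨆ y : X, C.U y)
    (hh : h ∈ C.U x) : g * h * g⁻¹ ∈ C.U (g x) := by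
  rw [← C.hM.lm2 x g hg]
  refine Subgroup.mem_map.mpr ⟨h, hh, ?_⟩
  simp [MulAut.conj_apply]

/-- conjugation of `α p` by an `o`-`i`-swapping element gives a `bb`. -/
lemma conj_α_swap {g : Equiv.Perm X} (hgmem : g ∈ ⨆ y : X, C.U y)
    (hgpres : PreservesRel C.r g) (hgo : g C.o = C.i) (hgi : g C.i = C.o)
    {p : X} (hp : ¬ C.r.r p C.i) :
    g * C.α p * g⁻¹ = C.bb (g p) := by
  have hmem : g * C.α p * g⁻¹ ∈ C.U C.o := by
    have := C.conj_mem hgmem (C.αmem hp)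
    rwa [hgi] at this
  refine C.bb_eq ?_ hmem ?_
  · intro h
    exact hp ((hgpres p C.i).mpr (by rwa [hgi]))
  · have hginvi : g⁻¹ C.i = C.o := by rw [← hgo, Equiv.Perm.inv_apply_self]
    rw [Equiv.Perm.mul_apply, Equiv.Perm.mul_apply, hginvi, C.αo hp]

lemma conj_bb_swap {g : Equiv.Perm X} (hgmem : g ∈ ⨆ y : X, C.U y)
    (hgpres : PreservesRel C.r g) (hgo : g C.o = C.i) (hgi : g C.i = C.o)
    {q : X} (hq : ¬ C.r.r q C.o) :
    g * C.bb q * g⁻¹ = C.α (g q) := by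
  have hmem : g * C.bb q * g⁻¹ ∈ C.U C.i := by
    have := C.conj_mem hgmem (C.bbmem hq)
    rwa [hgo] at this
  refine C.α_eq ?_ hmem ?_
  · intro h
    exact hq ((hgpres q C.o).mpr (by rwa [hgo]))
  · have hginvo : g⁻¹ C.o = C.i := by rw [← hgi, Equiv.Perm.inv_apply_self]
    rw [Equiv.Perm.mul_apply, Equiv.Perm.mul_apply, hginvo, C.bbi hq]

lemma bb_τ_form {y : X} (hy : C.unit y) :
    C.bb y = C.τ * C.α (C.τ⁻¹ y) * C.τ⁻¹ := by
  have h := C.conj_α_swap C.hτmem C.hτpres C.hτo C.hτi (C.τinvunit hy).2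
  rw [Equiv.Perm.apply_inv_self] at h
  exact h.symm

/-- the special identity (S): `(bb w)⁻¹ i = -w` for units `w`. -/
lemma S1 {w : X} (hw : C.unit w) : (C.bb w)⁻¹ C.i = C.neg w := by
  have hy := C.τinvunit hw
  have hform := C.bb_τ_form hw
  have : (C.bb w)⁻¹ = C.τ * (C.α (C.τ⁻¹ w))⁻¹ * C.τ⁻¹ := by
    rw [hform]; group
  rw [this, Equiv.Perm.mul_apply, Equiv.Perm.mul_apply, C.τinv_i]
  have hs := C.hspecial (C.τ⁻¹ w) hy.1 hy.2
  rw [hs, Equiv.Perm.apply_inv_self]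
  rfl

lemma bb_neg {w : X} (hw : C.unit w) : C.bb (C.neg w) = (C.bb w)⁻¹ :=
  (C.bb_eq (C.neg_not_o hw) (inv_mem (C.bbmem hw.1)) (C.S1 hw)).symm

end Ctx
end LMS12

namespace LMS12
namespace Ctx

variable {X : Type*} (C : Ctx X)

open Classical in
/-- the element of `U o` carrying `z` to `i`. -/
noncomputable def uu (z : X) : Equiv.Perm X :=
  if h : ¬ C.r.r z C.o then Classical.choose (C.hM.lm1 C.o z C.i h C.hio) else 1

lemma uu_spec {z : X} (hz : ¬ C.r.r z C.o) :
    C.uu z ∈ C.U C.o ∧ C.uu z z = C.i := by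
  unfold uu
  rw [dif_pos hz]
  exact (Classical.choose_spec (C.hM.lm1 C.o z C.i hz C.hio)).1

lemma uu_eq_bb_inv {z : X} (hz : ¬ C.r.r z C.o) : C.uu z = (C.bb z)⁻¹ := by
  have h1 : (C.uu z)⁻¹ C.i = z := by
    rw [← (C.uu_spec hz).2, Equiv.Perm.inv_apply_self]
  have h2 : (C.uu z)⁻¹ = C.bb z := C.bb_eq hz (inv_mem (C.uu_spec hz).1) h1
  rw [← h2, inv_inv]

/-- the μ-map of a unit `z`. -/
noncomputable def mu (z : X) : Equiv.Perm X := C.uu z * C.α z * C.bb (C.neg z)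

lemma mu_form {z : X} (hz : C.unit z) :
    C.mu z = (C.bb z)⁻¹ * C.α z * (C.bb z)⁻¹ := by
  unfold mu
  rw [C.uu_eq_bb_inv hz.1, C.bb_neg hz]

lemma mu_o {z : X} (hz : C.unit z) : C.mu z C.o = C.i := by
  unfold mu
  rw [Equiv.Perm.mul_apply, Equiv.Perm.mul_apply,
    C.hM.fixes C.o _ (C.bbmem (C.neg_not_o hz)), C.αo hz.2]
  exact (C.uu_spec hz.1).2

lemma mu_i {z : X} (hz : C.unit z) : C.mu z C.i = C.o := by
  unfold mu
  rw [Equiv.Perm.mul_apply, Equiv.Perm.mul_apply, C.bbi (C.neg_not_o hz)]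
  have h1 : C.α z (C.neg z) = C.o := Equiv.Perm.apply_inv_self _ _
  rw [h1]
  exact C.hM.fixes C.o _ (C.uu_spec hz.1).1

lemma mu_mem {z : X} (hz : C.unit z) : C.mu z ∈ ⨆ y : X, C.U y := by
  unfold mu
  exact mul_mem (mul_mem (C.memSup (C.uu_spec hz.1).1) (C.memSup (C.αmem hz.2)))
    (C.memSup (C.bbmem (C.neg_not_o hz)))

lemma pres_mul {g h : Equiv.Perm X} (hg : PreservesRel C.r g) (hh : PreservesRel C.r h) :
    PreservesRel C.r (g * h) := by
  intro a b
  rw [Equiv.Perm.mul_apply, Equiv.Perm.mul_apply]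
  exact (hh a b).trans (hg _ _)

lemma mu_pres {z : X} (hz : C.unit z) : PreservesRel C.r (C.mu z) := by
  unfold mu
  exact C.pres_mul (C.pres_mul (C.hM.preserves _ _ (C.uu_spec hz.1).1)
    (C.hM.preserves _ _ (C.αmem hz.2))) (C.hM.preserves _ _ (C.bbmem (C.neg_not_o hz)))

lemma mu_unit {z : X} (hz : C.unit z) {p : X} (hp : C.unit p) : C.unit (C.mu z p) := by
  constructor
  · intro h
    have := (C.mu_pres hz p C.i).mpr (by rwa [C.mu_i hz])
    exact hp.2 this
  · intro h
    have := (C.mu_pres hz p C.o).mpr (by rwa [C.mu_o hz])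
    exact hp.1 this

lemma mu_inv {z : X} (hz : C.unit z) : (C.mu z)⁻¹ = C.mu (C.neg z) := by
  have h1 : C.mu (C.neg z) = C.bb z * C.α (C.neg z) * C.bb z := by
    unfold mu
    rw [C.uu_eq_bb_inv (C.neg_not_o hz), C.bb_neg hz, inv_inv, C.neg_neg hz.2]
  have h2 : (C.mu z)⁻¹ = C.bb z * C.α (C.neg z) * C.bb z := by
    rw [C.mu_form hz, C.α_neg hz.2]
    group
  rw [h1, h2]

lemma mu_z_z {z : X} (hz : C.unit z) : C.mu z z = C.neg z := by
  have h1 : C.mu z z = (C.bb z)⁻¹ (C.α z ((C.bb z)⁻¹ z)) := by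
    rw [C.mu_form hz]; rfl
  have h2 : (C.bb z)⁻¹ z = C.i := by
    rw [← C.uu_eq_bb_inv hz.1]; exact (C.uu_spec hz.1).2
  rw [h1, h2, C.hM.fixes C.i _ (C.αmem hz.2)]
  exact C.S1 hz

lemma conj_α_mu {z : X} (hz : C.unit z) {p : X} (hp : ¬ C.r.r p C.i) :
    C.mu z * C.α p * (C.mu z)⁻¹ = C.bb (C.mu z p) :=
  C.conj_α_swap (C.mu_mem hz) (C.mu_pres hz) (C.mu_o hz) (C.mu_i hz) hp

lemma conj_bb_mu {z : X} (hz : C.unit z) {q : X} (hq : ¬ C.r.r q C.o) :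
    C.mu z * C.bb q * (C.mu z)⁻¹ = C.α (C.mu z q) :=
  C.conj_bb_swap (C.mu_mem hz) (C.mu_pres hz) (C.mu_o hz) (C.mu_i hz) hq

lemma mu_neg_pt {z : X} (hz : C.unit z) {p : X} (hp : C.unit p) :
    C.mu z (C.neg p) = C.neg (C.mu z p) := by
  have h1 : C.mu z * (C.α p)⁻¹ * (C.mu z)⁻¹ = (C.bb (C.mu z p))⁻¹ := by
    rw [← C.conj_α_mu hz hp.2]; group
  have h2 : C.mu z (C.neg p) = (C.mu z * (C.α p)⁻¹ * (C.mu z)⁻¹) (C.mu z C.o) := by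
    show C.mu z ((C.α p)⁻¹ C.o) = _
    simp [Equiv.Perm.mul_apply, Equiv.Perm.inv_apply_self]
  rw [h2, h1, C.mu_o hz]
  exact C.S1 (C.mu_unit hz hp)

lemma mu_z_negz {z : X} (hz : C.unit z) : C.mu z (C.neg z) = z := by
  rw [C.mu_neg_pt hz hz, C.mu_z_z hz, C.neg_neg hz.2]

/-- the key fact `ν_z = μ_z⁻¹`, i.e. `bb z = α z * (mu z)⁻¹ * α z`. -/
lemma nu_eq {z : X} (hz : C.unit z) :
    C.α (C.neg z) * C.bb z * C.α (C.neg z) = (C.mu z)⁻¹ := by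
  have hconjα : C.mu z * C.α (C.neg z) * (C.mu z)⁻¹ = C.bb z := by
    rw [C.conj_α_mu hz (C.neg_not_i hz.2), C.mu_z_negz hz]
  have hconjb : C.mu z * C.bb z * (C.mu z)⁻¹ = C.α (C.neg z) := by
    rw [C.conj_bb_mu hz hz.1, C.mu_z_z hz]
  have hmuinv : C.bb z * C.α (C.neg z) * C.bb z = (C.mu z)⁻¹ := by
    have h1 : C.mu (C.neg z) = C.bb z * C.α (C.neg z) * C.bb z := by
      unfold mu
      rw [C.uu_eq_bb_inv (C.neg_not_o hz), C.bb_neg hz, inv_inv, C.neg_neg hz.2]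
    rw [← h1, C.mu_inv hz]
  have hconj : C.mu z * (C.α (C.neg z) * C.bb z * C.α (C.neg z)) * (C.mu z)⁻¹
      = (C.mu z)⁻¹ := by
    have expand : C.mu z * (C.α (C.neg z) * C.bb z * C.α (C.neg z)) * (C.mu z)⁻¹
        = (C.mu z * C.α (C.neg z) * (C.mu z)⁻¹) * (C.mu z * C.bb z * (C.mu z)⁻¹)
          * (C.mu z * C.α (C.neg z) * (C.mu z)⁻¹) := by group
    rw [expand, hconjα, hconjb, hmuinv]
  -- from  X ν X⁻¹ = X⁻¹  conclude  ν = X⁻¹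
  have := mul_left_cancel (a := C.mu z)
    (b := (C.α (C.neg z) * C.bb z * C.α (C.neg z)) * (C.mu z)⁻¹)
    (c := (C.mu z)⁻¹ * (C.mu z)⁻¹) (by rw [← mul_assoc]; rw [hconj]; group)
  calc C.α (C.neg z) * C.bb z * C.α (C.neg z)
      = ((C.α (C.neg z) * C.bb z * C.α (C.neg z)) * (C.mu z)⁻¹) * C.mu z := by group
    _ = ((C.mu z)⁻¹ * (C.mu z)⁻¹) * C.mu z := by rw [this]
    _ = (C.mu z)⁻¹ := by group

lemma bb_nu_form {z : X} (hz : C.unit z) :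
    C.bb z = C.α z * (C.mu z)⁻¹ * C.α z := by
  rw [← C.nu_eq hz, C.α_neg hz.2]
  group

end Ctx
end LMS12

namespace LMS12
namespace Ctx

variable {X : Type*} (C : Ctx X)

/-- `y·m` (integer multiples in `U i` coordinates). -/
def zm (y : X) (m : ℤ) : X := ((C.α y) ^ m) C.o

/-- `y·'m` (integer multiples in `U o` coordinates). -/
noncomputable def zd (y : X) (m : ℤ) : X := ((C.bb y) ^ m) C.i

lemma zm_not_i {y : X} (hy : ¬ C.r.r y C.i) (m : ℤ) : ¬ C.r.r (C.zm y m) C.i :=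
  C.U_img (zpow_mem (C.αmem hy) m) C.hoi

lemma zd_not_o {y : X} (hy : ¬ C.r.r y C.o) (m : ℤ) : ¬ C.r.r (C.zd y m) C.o :=
  C.U_img (zpow_mem (C.bbmem hy) m) C.hio

lemma α_zm {y : X} (hy : ¬ C.r.r y C.i) (m : ℤ) : C.α (C.zm y m) = (C.α y) ^ m :=
  (C.α_eq (C.zm_not_i hy m) (zpow_mem (C.αmem hy) m) rfl).symm

lemma bb_zd {y : X} (hy : ¬ C.r.r y C.o) (m : ℤ) : C.bb (C.zd y m) = (C.bb y) ^ m :=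
  (C.bb_eq (C.zd_not_o hy m) (zpow_mem (C.bbmem hy) m) rfl).symm

lemma zm_one {y : X} (hy : ¬ C.r.r y C.i) : C.zm y 1 = y := by
  unfold zm; rw [zpow_one, C.αo hy]

lemma zd_one {y : X} (hy : ¬ C.r.r y C.o) : C.zd y 1 = y := by
  unfold zd; rw [zpow_one, C.bbi hy]

lemma neg_zm {y : X} (hy : ¬ C.r.r y C.i) (m : ℤ) : C.neg (C.zm y m) = C.zm y (-m) := by
  show (C.α (C.zm y m))⁻¹ C.o = _
  rw [C.α_zm hy m, ← zpow_neg]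
  rfl

lemma zm_zm {y : X} (hy : ¬ C.r.r y C.i) (a b : ℤ) :
    C.zm (C.zm y a) b = C.zm y (a * b) := by
  show ((C.α (C.zm y a)) ^ b) C.o = ((C.α y) ^ (a * b)) C.o
  rw [C.α_zm hy a, ← zpow_mul]

lemma zd_zd {y : X} (hy : ¬ C.r.r y C.o) (a b : ℤ) :
    C.zd (C.zd y a) b = C.zd y (a * b) := by
  show ((C.bb (C.zd y a)) ^ b) C.i = ((C.bb y) ^ (a * b)) C.i
  rw [C.bb_zd hy a, ← zpow_mul]

lemma zm_nat {y : X} (k : ℕ) : C.zm y (k : ℤ) = ((C.α y) ^ k) C.o := by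
  unfold zm; rw [zpow_natCast]

lemma zd_τ {y : X} (hy : C.unit y) (m : ℤ) :
    C.zd y m = C.τ (C.zm (C.τ⁻¹ y) m) := by
  have hform := C.bb_τ_form hy
  have hpow : (C.bb y) ^ m = C.τ * (C.α (C.τ⁻¹ y)) ^ m * C.τ⁻¹ := by
    rw [hform]
    exact (MulAut.conj C.τ).toMonoidHom.map_zpow (C.α (C.τ⁻¹ y)) m ▸ by
      simp [MulAut.conj_apply, zpow_natCast]
  show ((C.bb y) ^ m) C.i = _
  rw [hpow, Equiv.Perm.mul_apply, Equiv.Perm.mul_apply, C.τinv_i]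
  rfl


lemma conj_zpow' (g a : Equiv.Perm X) (m : ℤ) :
    g * a ^ m * g⁻¹ = (g * a * g⁻¹) ^ m := by
  have h := map_zpow (MulAut.conj g) a m
  simpa [MulAut.conj_apply] using h

lemma conj_pow' (g a : Equiv.Perm X) (m : ℕ) :
    g * a ^ m * g⁻¹ = (g * a * g⁻¹) ^ m := by
  have h := map_pow (MulAut.conj g) a m
  simpa [MulAut.conj_apply] using h

/-- orbit formula: `μ_p (p·m) = (bb p)^{-m} i`. -/
lemma orb {p : X} (hp : C.unit p) (m : ℤ) :
    C.mu p (C.zm p m) = ((C.bb p) ^ (-m)) C.i := by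
  have hconj : C.mu p * (C.α p) ^ m * (C.mu p)⁻¹ = ((C.bb p)⁻¹) ^ m := by
    have h1 : C.mu p * C.α p * (C.mu p)⁻¹ = (C.bb p)⁻¹ := by
      rw [C.conj_α_mu hp hp.2, C.mu_z_z hp, C.bb_neg hp]
    rw [conj_zpow', h1]
  have : C.mu p (C.zm p m) = (C.mu p * (C.α p) ^ m * (C.mu p)⁻¹) (C.mu p C.o) := by
    show C.mu p (((C.α p) ^ m) C.o) = _
    simp [Equiv.Perm.mul_apply, Equiv.Perm.inv_apply_self]
  rw [this, hconj, C.mu_o hp, inv_zpow, ← zpow_neg]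

/-- the `φ` formula: `μ_w (y·m) = (bb (μ_w y))^m i`. -/
lemma phi {w : X} (hw : C.unit w) {y : X} (hy : ¬ C.r.r y C.i) (m : ℤ) :
    C.mu w (C.zm y m) = ((C.bb (C.mu w y)) ^ m) C.i := by
  have h1 : C.mu w * C.α y * (C.mu w)⁻¹ = C.bb (C.mu w y) := C.conj_α_mu hw hy
  have hconj : C.mu w * (C.α y) ^ m * (C.mu w)⁻¹ = (C.bb (C.mu w y)) ^ m := by
    rw [conj_zpow', h1]
  have : C.mu w (C.zm y m) = (C.mu w * (C.α y) ^ m * (C.mu w)⁻¹) (C.mu w C.o) := by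
    show C.mu w (((C.α y) ^ m) C.o) = _
    simp [Equiv.Perm.mul_apply, Equiv.Perm.inv_apply_self]
  rw [this, hconj, C.mu_o hw]

/-- `μ_w ((w·'m)) = w·(-m)`. -/
lemma orb' {w : X} (hw : C.unit w) (m : ℤ) :
    C.mu w (C.zd w m) = C.zm w (-m) := by
  have h1 : C.mu w * C.bb w * (C.mu w)⁻¹ = (C.α w)⁻¹ := by
    rw [C.conj_bb_mu hw hw.1, C.mu_z_z hw, C.α_neg hw.2]
  have hconj : C.mu w * (C.bb w) ^ m * (C.mu w)⁻¹ = ((C.α w)⁻¹) ^ m := by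
    rw [conj_zpow', h1]
  have h2 : C.mu w (C.zd w m) = (C.mu w * (C.bb w) ^ m * (C.mu w)⁻¹) (C.mu w C.i) := by
    show C.mu w (((C.bb w) ^ m) C.i) = _
    simp [Equiv.Perm.mul_apply, Equiv.Perm.inv_apply_self]
  rw [h2, hconj, C.mu_i hw]
  show ((C.α w)⁻¹ ^ m) C.o = ((C.α w) ^ (-m)) C.o
  rw [inv_zpow, ← zpow_neg]

/-- `U o` is abelian. -/
lemma Uo_abelian {a b : Equiv.Perm X} (ha : a ∈ C.U C.o) (hb : b ∈ C.U C.o) :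
    a * b = b * a := by
  have hmap : (C.U C.i).map (MulAut.conj C.τ).toMonoidHom = C.U C.o := by
    rw [C.hM.lm2 C.i C.τ C.hτmem, C.hτi]
  rw [← hmap] at ha hb
  obtain ⟨a', ha', rfl⟩ := Subgroup.mem_map.mp ha
  obtain ⟨b', hb', rfl⟩ := Subgroup.mem_map.mp hb
  rw [← map_mul, ← map_mul, C.habel a' ha' b' hb']

/-- FE2: the fundamental two-variable relation. -/
lemma FE2 {p q : X} (hp : C.unit p) (hq : C.unit q) :
    C.α p ((C.mu p)⁻¹ (C.α p q)) = C.α q ((C.mu q)⁻¹ (C.α p q)) := by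
  have hcomm : C.bb p q = C.bb q p := by
    have h := C.Uo_abelian (C.bbmem hp.1) (C.bbmem hq.1)
    have h1 : (C.bb p * C.bb q) C.i = (C.bb q * C.bb p) C.i := by rw [h]
    rw [Equiv.Perm.mul_apply, Equiv.Perm.mul_apply, C.bbi hp.1, C.bbi hq.1] at h1
    exact h1
  have e1 : C.bb p q = C.α p ((C.mu p)⁻¹ (C.α p q)) := by
    rw [C.bb_nu_form hp]
    rfl
  have e2 : C.bb q p = C.α q ((C.mu q)⁻¹ (C.α q p)) := by
    rw [C.bb_nu_form hq]
    rfl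
  rw [e1, e2, C.α_comm_pt hq.2 hp.2] at hcomm
  exact hcomm

/-- torsion-freeness transfers from `U i` to `U o`. -/
lemma TF_transfer {j : ℕ} (hTF : ∀ v ∈ C.U C.i, v ^ j = 1 → v = 1) :
    ∀ e ∈ C.U C.o, e ^ j = 1 → e = 1 := by
  intro e he hej
  have h1 : C.τ⁻¹ * e * C.τ ∈ C.U C.i := by
    have := C.conj_mem (x := C.o) (inv_mem C.hτmem) he
    rwa [C.τinv_o, inv_inv] at this
  have h2 : (C.τ⁻¹ * e * C.τ) ^ j = 1 := by
    have h := conj_pow' C.τ⁻¹ e j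
    rw [inv_inv] at h
    rw [← h, hej]; group
  have h3 := hTF _ h1 h2
  have : e = C.τ * (C.τ⁻¹ * e * C.τ) * C.τ⁻¹ := by group
  rw [this, h3]; group

end Ctx
end LMS12

namespace LMS12
namespace Ctx

variable {X : Type*} (C : Ctx X)

lemma commute_Ui {a b : Equiv.Perm X} (ha : a ∈ C.U C.i) (hb : b ∈ C.U C.i) :
    Commute a b := C.habel a ha b hb

lemma commute_Uo {a b : Equiv.Perm X} (ha : a ∈ C.U C.o) (hb : b ∈ C.U C.o) :
    Commute a b := C.Uo_abelian ha hb

lemma zm_inj_of_TF (j : ℕ) (hTF : ∀ v ∈ C.U C.i, v ^ j = 1 → v = 1)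
    {P P' : X} (hP : ¬ C.r.r P C.i) (hP' : ¬ C.r.r P' C.i)
    (h : C.zm P (j : ℤ) = C.zm P' (j : ℤ)) : P = P' := by
  have hgeq : (C.α P) ^ (j : ℤ) = (C.α P') ^ (j : ℤ) :=
    C.eq_of_Ui (zpow_mem (C.αmem hP) _) (zpow_mem (C.αmem hP') _) C.hoi h
  rw [zpow_natCast, zpow_natCast] at hgeq
  have hcomm : Commute (C.α P) (C.α P')⁻¹ :=
    (C.commute_Ui (C.αmem hP) (C.αmem hP')).inv_right
  have hx : ((C.α P) * (C.α P')⁻¹) ^ j = 1 := by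
    rw [hcomm.mul_pow, inv_pow, hgeq, mul_inv_cancel]
  have h1 : (C.α P) * (C.α P')⁻¹ = 1 :=
    hTF _ (mul_mem (C.αmem hP) (inv_mem (C.αmem hP'))) hx
  have h2 : C.α P = C.α P' := by
    rw [← mul_inv_eq_one]; exact h1
  rw [← C.αo hP, ← C.αo hP', h2]

lemma zd_inj_of_TF (j : ℕ) (hTF : ∀ v ∈ C.U C.i, v ^ j = 1 → v = 1)
    {P P' : X} (hP : ¬ C.r.r P C.o) (hP' : ¬ C.r.r P' C.o)
    (h : C.zd P (j : ℤ) = C.zd P' (j : ℤ)) : P = P' := by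
  have hTFo := C.TF_transfer hTF
  have hgeq : (C.bb P) ^ (j : ℤ) = (C.bb P') ^ (j : ℤ) :=
    C.eq_of_Uo (zpow_mem (C.bbmem hP) _) (zpow_mem (C.bbmem hP') _) C.hio h
  rw [zpow_natCast, zpow_natCast] at hgeq
  have hcomm : Commute (C.bb P) (C.bb P')⁻¹ :=
    (C.commute_Uo (C.bbmem hP) (C.bbmem hP')).inv_right
  have hx : ((C.bb P) * (C.bb P')⁻¹) ^ j = 1 := by
    rw [hcomm.mul_pow, inv_pow, hgeq, mul_inv_cancel]
  have h1 : (C.bb P) * (C.bb P')⁻¹ = 1 :=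
    hTFo _ (mul_mem (C.bbmem hP) (inv_mem (C.bbmem hP'))) hx
  have h2 : C.bb P = C.bb P' := by
    rw [← mul_inv_eq_one]; exact h1
  rw [← C.bbi hP, ← C.bbi hP', h2]

/-- a unit exists -/
lemma exists_unit : ∃ x : X, C.unit x := by
  obtain ⟨a, b, c, hab, hac, hbc⟩ := C.hM.big
  by_contra h
  push_neg at h
  have key : ∀ x : X, C.r.r x C.o ∨ C.r.r x C.i := by
    intro x
    by_contra hx
    push_neg at hx
    exact h x ⟨hx.1, hx.2⟩
  have pair : ∀ p q : X, ¬ C.r.r p q → ¬ (C.r.r p C.o ∧ C.r.r q C.o) ∧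
      ¬ (C.r.r p C.i ∧ C.r.r q C.i) := by
    intro p q hpq
    constructor
    · rintro ⟨h1, h2⟩; exact hpq (C.rtrans h1 (C.rsymm h2))
    · rintro ⟨h1, h2⟩; exact hpq (C.rtrans h1 (C.rsymm h2))
  rcases key a with ha | ha <;> rcases key b with hb | hb <;> rcases key c with hc | hc
  · exact (pair a b hab).1 ⟨ha, hb⟩
  · exact (pair a b hab).1 ⟨ha, hb⟩
  · exact (pair a c hac).1 ⟨ha, hc⟩
  · exact (pair b c hbc).2 ⟨hb, hc⟩
  · exact (pair b c hbc).1 ⟨hb, hc⟩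
  · exact (pair a c hac).2 ⟨ha, hc⟩
  · exact (pair a b hab).2 ⟨ha, hb⟩
  · exact (pair a b hab).2 ⟨ha, hb⟩

/-- kernel elements of `U i` act trivially on classes -/
lemma kernel_fix {u : Equiv.Perm X} (hu : u ∈ C.U C.i) (h : C.r.r (u C.o) C.o) :
    ∀ b : X, C.r.r (u b) b := by
  have := C.hM.lm1'_sharp C.i u hu 1 (one_mem _) C.o C.hoi
    (by rwa [Equiv.Perm.one_apply])
  intro b
  have hb := this b
  rwa [Equiv.Perm.one_apply] at hb

lemma kernel_unit {u : Equiv.Perm X} (hu : u ∈ C.U C.i) (h : C.r.r (u C.o) C.o)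
    {x : X} (hx : C.unit x) : C.unit (u x) := by
  have hfix := C.kernel_fix hu h x
  constructor
  · exact fun h' => hx.1 (C.rtrans (C.rsymm hfix) h')
  · exact fun h' => hx.2 (C.rtrans (C.rsymm hfix) h')

end Ctx
end LMS12

namespace LMS12
namespace Ctx

variable {X : Type*} (C : Ctx X)

/-- divisibility package at level `k` -/
def PKG (k : ℕ) : Prop :=
  (∀ v ∈ C.U C.i, v ^ k = 1 → v = 1) ∧
  (∀ y : X, C.unit y → C.zm (C.zd y (k : ℤ)) (k : ℤ) = y) ∧
  (∀ y : X, C.unit y → C.zd (C.zm y (k : ℤ)) (k : ℤ) = y)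

section Core

variable (n : ℕ) (hdiv : ∀ x : X, C.unit x → ∀ k : ℕ, 1 ≤ k → k ≤ n →
  C.unit (C.zm x (k : ℤ)))

include hdiv

lemma zd_unit {y : X} (hy : C.unit y) {m : ℕ} (h1 : 1 ≤ m) (h2 : m ≤ n) :
    C.unit (C.zd y (m : ℤ)) := by
  rw [C.zd_τ hy]
  exact C.τunit (hdiv _ (C.τinvunit hy) m h1 h2)

/-- the key computation (M): `μ_{y·k}(y) = y·(-k²)` -/
lemma core_M (k : ℕ) (hk2 : 2 ≤ k) (hkn : k ≤ n)
    (hTFprev : ∀ v ∈ C.U C.i, v ^ (k - 1) = 1 → v = 1)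
    (hINVAprev : ∀ y : X, C.unit y → C.zm (C.zd y ((k : ℤ) - 1)) ((k : ℤ) - 1) = y)
    {y : X} (hy : C.unit y) :
    C.mu (C.zm y (k : ℤ)) y = C.zm y (-((k : ℤ) * k)) := by
  have hcast : (((k - 1 : ℕ)) : ℤ) = (k : ℤ) - 1 := by omega
  set A := C.α y with hA
  set w := C.zm y (k : ℤ) with hw'
  have hw : C.unit w := hdiv y hy k (by omega) hkn
  have hnegw : C.unit (C.neg w) := C.neg_unit hw
  have hnegy : C.unit (C.neg y) := C.neg_unit hy
  have hαw : C.α w = A ^ (k : ℤ) := C.α_zm hy.2 k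
  -- the point s = y·(1-k)
  have hspt : C.α (C.neg w) y = C.zm y (1 - (k : ℤ)) := by
    rw [C.α_neg hw.2, hαw]
    show (A ^ (k : ℤ))⁻¹ y = (A ^ (1 - (k : ℤ))) C.o
    rw [← C.αo hy.2]
    show ((A ^ (k : ℤ))⁻¹ * A) C.o = (A ^ (1 - (k : ℤ))) C.o
    congr 1
    group
  -- FE2 instance with (p, q) = (neg w, y)
  have hFE := C.FE2 hnegw hy
  -- rewrite its right inner part via the orbit formula at -y
  have hzmeq : C.zm y (1 - (k : ℤ)) = C.zm (C.neg y) ((k : ℤ) - 1) := by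
    show (A ^ (1 - (k : ℤ))) C.o = ((C.α (C.neg y)) ^ ((k : ℤ) - 1)) C.o
    rw [C.α_neg hy.2]
    congr 1
    group
    rfl
  have hRHSin : (C.mu y)⁻¹ (C.zm y (1 - (k : ℤ))) = C.zd y ((k : ℤ) - 1) := by
    rw [C.mu_inv hy, hzmeq]
    have := C.orb hnegy ((k : ℤ) - 1)
    rw [this, C.bb_neg hy]
    show ((C.bb y)⁻¹ ^ (-((k : ℤ) - 1))) C.i = ((C.bb y) ^ ((k : ℤ) - 1)) C.i
    congr 1
    group
  -- rewrite its left inner part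
  have hLHSinv : (C.mu (C.neg w))⁻¹ = C.mu w := by
    rw [C.mu_inv hnegw, C.neg_neg hw.2]
  rw [hspt] at hFE
  rw [hLHSinv, hRHSin] at hFE
  -- hFE : α (neg w) (mu w (zm y (1-k))) = α y (zd y (k-1))
  -- so  mu w (zm y (1-k)) = A^(k+1) (zd y (k-1)) =: Pstar
  set D := C.zd y ((k : ℤ) - 1) with hD'
  have hD : C.unit D := by
    have := C.zd_unit n hdiv hy (m := k - 1) (by omega) (by omega)
    rwa [hcast] at this
  set Pstar := (A ^ ((k : ℤ) + 1)) D with hPstar'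
  have hEQ1 : C.mu w (C.zm y (1 - (k : ℤ))) = Pstar := by
    have h1 : C.α (C.neg w) = (A ^ (k : ℤ))⁻¹ := by rw [C.α_neg hw.2, hαw]
    have h2 : (A ^ (k : ℤ)) (C.α (C.neg w) (C.mu w (C.zm y (1 - (k : ℤ)))))
        = (A ^ (k : ℤ)) ((A ^ (k : ℤ))⁻¹ (C.mu w (C.zm y (1 - (k : ℤ))))) := by
      rw [h1]
    have h3 := congrArg (fun t => (A ^ (k : ℤ)) t) hFE
    rw [h1] at h3
    rw [Equiv.Perm.apply_inv_self] at h3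
    rw [h3]
    show (A ^ (k : ℤ)) (A D) = (A ^ ((k : ℤ) + 1)) D
    show ((A ^ (k : ℤ)) * A) D = _
    congr 1
    group
  -- phi formula
  set m₁ := C.mu w y with hm₁'
  have hm₁ : C.unit m₁ := C.mu_unit hw hy
  have hPHI : ((C.bb m₁) ^ (1 - (k : ℤ))) C.i = Pstar := by
    rw [← C.phi hw hy.2 (1 - (k : ℤ))]
    exact hEQ1
  -- the other side: M₂ and Q
  set M₂ := C.zm y ((k : ℤ) * k) with hM₂'
  have hM₂eq : M₂ = C.zm w (k : ℤ) := by rw [hM₂', hw', C.zm_zm hy.2]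
  have hM₂ : C.unit M₂ := by rw [hM₂eq]; exact hdiv w hw k (by omega) hkn
  set Q := C.neg M₂ with hQ'
  have hQu : C.unit Q := C.neg_unit hM₂
  have hbbQ : C.bb Q = (C.bb M₂)⁻¹ := by rw [hQ', C.bb_neg hM₂]
  set Rpt := C.zd M₂ ((k : ℤ) - 1) with hRpt'
  have hRu : C.unit Rpt := by
    have := C.zd_unit n hdiv hM₂ (m := k - 1) (by omega) (by omega)
    rwa [hcast] at this
  have hQside : ((C.bb Q) ^ (1 - (k : ℤ))) C.i = Rpt := by
    rw [hbbQ]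
    show ((C.bb M₂)⁻¹ ^ (1 - (k : ℤ))) C.i = ((C.bb M₂) ^ ((k : ℤ) - 1)) C.i
    congr 1
    group
  -- Rpt = Pstar
  have hRP : Rpt = Pstar := by
    have h1 : C.zm Rpt ((k : ℤ) - 1) = M₂ := hINVAprev M₂ hM₂
    have h2 : C.zm Pstar ((k : ℤ) - 1) = M₂ := by
      have hαP : C.α Pstar = A ^ ((k : ℤ) + 1) * C.α D :=
        C.α_apply (zpow_mem (C.αmem hy.2) _) hD.2
      have hcomm : Commute (A ^ ((k : ℤ) + 1)) (C.α D) :=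
        C.commute_Ui (zpow_mem (C.αmem hy.2) _) (C.αmem hD.2)
      show ((C.α Pstar) ^ ((k : ℤ) - 1)) C.o = M₂
      rw [hαP, hcomm.mul_zpow]
      show ((A ^ ((k : ℤ) + 1)) ^ ((k : ℤ) - 1)) (((C.α D) ^ ((k : ℤ) - 1)) C.o) = M₂
      have hDk : ((C.α D) ^ ((k : ℤ) - 1)) C.o = y := hINVAprev y hy
      rw [hDk, ← zpow_mul, ← C.αo hy.2]
      show ((A ^ (((k : ℤ) + 1) * ((k : ℤ) - 1))) * A) C.o = (A ^ ((k : ℤ) * k)) C.o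
      congr 1
      group
    have hPi : ¬ C.r.r Pstar C.i := by
      rw [hPstar']
      exact C.U_img (zpow_mem (C.αmem hy.2) _) hD.2
    have := C.zm_inj_of_TF (k - 1) hTFprev hRu.2 hPi
      (by rw [hcast, h1, h2])
    exact this
  -- conclude equality of group elements, then of points
  have hptseq : ((C.bb m₁) ^ (1 - (k : ℤ))) C.i = ((C.bb Q) ^ (1 - (k : ℤ))) C.i := by
    rw [hPHI, hQside, hRP]
  have hgrpeq : (C.bb m₁) ^ (1 - (k : ℤ)) = (C.bb Q) ^ (1 - (k : ℤ)) :=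
    C.eq_of_Uo (zpow_mem (C.bbmem hm₁.1) _) (zpow_mem (C.bbmem hQu.1) _) C.hio hptseq
  have hgrpeq2 : (C.bb m₁) ^ (k - 1 : ℕ) = (C.bb Q) ^ (k - 1 : ℕ) := by
    have h1 : ((C.bb m₁) ^ (1 - (k : ℤ)))⁻¹ = ((C.bb Q) ^ (1 - (k : ℤ)))⁻¹ := by
      rw [hgrpeq]
    rw [← zpow_neg, ← zpow_neg] at h1
    have h2 : -(1 - (k : ℤ)) = ((k - 1 : ℕ) : ℤ) := by omega
    rw [h2, zpow_natCast, zpow_natCast] at h1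
    exact h1
  have hcomm2 : Commute (C.bb m₁) (C.bb Q)⁻¹ :=
    (C.commute_Uo (C.bbmem hm₁.1) (C.bbmem hQu.1)).inv_right
  have hx : ((C.bb m₁) * (C.bb Q)⁻¹) ^ (k - 1) = 1 := by
    rw [hcomm2.mul_pow, inv_pow, hgrpeq2, mul_inv_cancel]
  have hTFo := C.TF_transfer hTFprev
  have h1 : (C.bb m₁) * (C.bb Q)⁻¹ = 1 :=
    hTFo _ (mul_mem (C.bbmem hm₁.1) (inv_mem (C.bbmem hQu.1))) hx
  have h2 : C.bb m₁ = C.bb Q := by rw [← mul_inv_eq_one]; exact h1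
  have h3 : m₁ = Q := C.bb_inj hm₁.1 hQu.1 h2
  rw [hQ', hM₂'] at h3
  rw [C.neg_zm hy.2] at h3
  exact h3

lemma core_INVB (k : ℕ) (hk2 : 2 ≤ k) (hkn : k ≤ n)
    (hTFprev : ∀ v ∈ C.U C.i, v ^ (k - 1) = 1 → v = 1)
    (hINVAprev : ∀ y : X, C.unit y → C.zm (C.zd y ((k : ℤ) - 1)) ((k : ℤ) - 1) = y)
    {y : X} (hy : C.unit y) :
    C.zd (C.zm y (k : ℤ)) (k : ℤ) = y := by
  set w := C.zm y (k : ℤ) with hw'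
  have hw : C.unit w := hdiv y hy k (by omega) hkn
  have hM := C.core_M n hdiv k hk2 hkn hTFprev hINVAprev hy
  have horb := C.orb' hw (k : ℤ)
  have h1 : C.zm w (-(k : ℤ)) = C.zm y (-((k : ℤ) * k)) := by
    rw [hw', C.zm_zm hy.2]
    ring_nf
  rw [h1] at horb
  -- horb : mu w (zd w k) = zm y (-(k*k)),  hM : mu w y = same
  have := horb.trans hM.symm
  exact (C.mu w).injective this

end Core

end Ctx
end LMS12

namespace LMS12
namespace Ctx

variable {X : Type*} (C : Ctx X)

section Core2

variable (n : ℕ) (hdiv : ∀ x : X, C.unit x → ∀ k : ℕ, 1 ≤ k → k ≤ n →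
  C.unit (C.zm x (k : ℤ)))

include hdiv

lemma core_TF (k : ℕ) (hk1 : 1 ≤ k) (hkn : k ≤ n)
    (hINVB : ∀ y : X, C.unit y → C.zd (C.zm y (k : ℤ)) (k : ℤ) = y) :
    ∀ v ∈ C.U C.i, v ^ k = 1 → v = 1 := by
  intro v hv hvk
  by_cases hro : C.r.r (v C.o) C.o
  · -- kernel case
    obtain ⟨x₀, hx₀⟩ := C.exists_unit
    have hvx : C.unit (v x₀) := C.kernel_unit hv hro hx₀
    have hαvx : C.α (v x₀) = v * C.α x₀ := C.α_apply hv hx₀.2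
    have hzm : C.zm (v x₀) (k : ℤ) = C.zm x₀ (k : ℤ) := by
      show ((C.α (v x₀)) ^ (k : ℤ)) C.o = ((C.α x₀) ^ (k : ℤ)) C.o
      rw [hαvx]
      have hcomm : Commute v (C.α x₀) := C.commute_Ui hv (C.αmem hx₀.2)
      rw [hcomm.mul_zpow]
      have hv1 : v ^ (k : ℤ) = 1 := by rw [zpow_natCast, hvk]
      rw [hv1, one_mul]
    have h1 := hINVB (v x₀) hvx
    have h2 := hINVB x₀ hx₀
    rw [hzm, h2] at h1
    -- h1 : x₀ = v x₀
    refine C.eq_of_Ui hv (one_mem _) hx₀.2 ?_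
    rw [Equiv.Perm.one_apply]
    exact h1.symm
  · -- unit ev case: contradiction
    have hc : C.unit (v C.o) := ⟨hro, C.U_img hv C.hoi⟩
    have hveq : v = C.α (v C.o) := C.α_eq hc.2 hv rfl
    have hdd := (hdiv (v C.o) hc k hk1 hkn).1
    exfalso
    apply hdd
    have hPt : C.zm (v C.o) (k : ℤ) = C.o := by
      show ((C.α (v C.o)) ^ (k : ℤ)) C.o = C.o
      rw [← hveq, zpow_natCast, hvk, Equiv.Perm.one_apply]
    rw [hPt]

lemma core_INVA (k : ℕ) (hk1 : 1 ≤ k) (hkn : k ≤ n)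
    (hTF : ∀ v ∈ C.U C.i, v ^ k = 1 → v = 1)
    (hINVB : ∀ y : X, C.unit y → C.zd (C.zm y (k : ℤ)) (k : ℤ) = y) :
    ∀ y : X, C.unit y → C.zm (C.zd y (k : ℤ)) (k : ℤ) = y := by
  intro y hy
  set R := C.zd y (k : ℤ) with hR'
  have hR : C.unit R := C.zd_unit n hdiv hy hk1 hkn
  have h1 := hINVB R hR
  -- h1 : zd (zm R k) k = R = zd y k
  have hzmR : C.unit (C.zm R (k : ℤ)) := hdiv R hR k hk1 hkn
  exact C.zd_inj_of_TF k hTF hzmR.1 hy.1 (by rw [h1])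

omit hdiv in
lemma pkg_one : C.PKG 1 := by
  refine ⟨fun v _ hv => by rwa [pow_one] at hv, ?_, ?_⟩
  · intro y hy
    rw [Nat.cast_one, C.zd_one hy.1, C.zm_one hy.2]
  · intro y hy
    rw [Nat.cast_one, C.zm_one hy.2, C.zd_one hy.1]

lemma pkg_all : ∀ k : ℕ, 1 ≤ k → k ≤ n → C.PKG k := by
  intro k
  induction k using Nat.strong_induction_on with
  | _ k IH =>
    intro hk1 hkn
    rcases Nat.lt_or_ge k 2 with hk | hk2
    · have : k = 1 := by omega
      rw [this]
      exact C.pkg_one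
    · -- k ≥ 2
      have hprev := IH (k - 1) (by omega) (by omega) (by omega)
      obtain ⟨hTFprev, hINVAprev, _⟩ := hprev
      have hcast : (((k - 1 : ℕ)) : ℤ) = (k : ℤ) - 1 := by omega
      rw [hcast] at hINVAprev
      have hINVB := fun y hy =>
        C.core_INVB n hdiv k hk2 hkn hTFprev hINVAprev (y := y) hy
      have hTF := C.core_TF n hdiv k (by omega) hkn hINVB
      have hINVA := C.core_INVA n hdiv k (by omega) hkn hTF hINVB
      exact ⟨hTF, hINVA, hINVB⟩

/-- final statement in context form -/
lemma final (k : ℕ) (hk1 : 1 ≤ k) (hkn : k ≤ n) :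
    ∀ u ∈ C.U C.i, ∃! v : Equiv.Perm X, v ∈ C.U C.i ∧ v ^ k = u := by
  obtain ⟨hTF, hINVA, hINVB⟩ := C.pkg_all n hdiv k hk1 hkn
  intro u hu
  -- root construction
  have hroot : ∀ p : X, C.unit p → ((C.α (C.zd p (k : ℤ))) ^ k = C.α p) := by
    intro p hp
    have hD : C.unit (C.zd p (k : ℤ)) := C.zd_unit n hdiv hp hk1 hkn
    refine C.α_eq hp.2 (pow_mem (C.αmem hD.2) k) ?_
    show ((C.α (C.zd p (k : ℤ))) ^ (k : ℕ)) C.o = p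
    rw [← C.zm_nat]
    exact hINVA p hp
  have hex : ∃ v, v ∈ C.U C.i ∧ v ^ k = u := by
    by_cases hro : C.r.r (u C.o) C.o
    · -- kernel case
      obtain ⟨x₀, hx₀⟩ := C.exists_unit
      have hp : C.unit (u x₀) := C.kernel_unit hu hro hx₀
      have hD₁ : C.unit (C.zd (u x₀) (k : ℤ)) := C.zd_unit n hdiv hp hk1 hkn
      have hD₂ : C.unit (C.zd x₀ (k : ℤ)) := C.zd_unit n hdiv hx₀ hk1 hkn
      refine ⟨C.α (C.zd (u x₀) (k : ℤ)) * (C.α (C.zd x₀ (k : ℤ)))⁻¹,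
        mul_mem (C.αmem hD₁.2) (inv_mem (C.αmem hD₂.2)), ?_⟩
      have hcomm : Commute (C.α (C.zd (u x₀) (k : ℤ))) (C.α (C.zd x₀ (k : ℤ)))⁻¹ :=
        (C.commute_Ui (C.αmem hD₁.2) (C.αmem hD₂.2)).inv_right
      rw [hcomm.mul_pow, inv_pow, hroot _ hp, hroot _ hx₀]
      have hα : C.α (u x₀) = u * C.α x₀ := C.α_apply hu hx₀.2
      rw [hα]
      group
    · -- unit case
      have hc : C.unit (u C.o) := ⟨hro, C.U_img hu C.hoi⟩
      have hueq : u = C.α (u C.o) := C.α_eq hc.2 hu rfl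
      exact ⟨C.α (C.zd (u C.o) (k : ℤ)),
        C.αmem (C.zd_unit n hdiv hc hk1 hkn).2, by rw [hroot _ hc, ← hueq]⟩
  obtain ⟨v, hv, hvk⟩ := hex
  refine ⟨v, ⟨hv, hvk⟩, ?_⟩
  rintro v' ⟨hv', hv'k⟩
  have hcomm : Commute v' v⁻¹ := (C.commute_Ui hv' hv).inv_right
  have hx : (v' * v⁻¹) ^ k = 1 := by
    rw [hcomm.mul_pow, inv_pow, hv'k, hvk, mul_inv_cancel]
  have h1 : v' * v⁻¹ = 1 := hTF _ (mul_mem hv' (inv_mem hv)) hx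
  rw [← mul_inv_eq_one]
  exact h1

end Core2

end Ctx
end LMS12

/-- if `M` is a special local Moufang set with `U ∞` abelian and
`x · k` is a unit for every unit `x` and every `1 ≤ k ≤ n`, then `U ∞` is uniquely
`k`-divisible for all `1 ≤ k ≤ n`.  Notation as in the paper: `(o, i) = (0, ∞)`,
`α y ∈ U ∞` is the unique element with `0 · α_y = y`, `x · k := 0 · α_x ^ k`,
and `M` special means `(-y)τ = -(yτ)` for units `y` and a μ-map `τ`. -/
theorem statement12 (r : Setoid X) (U : X → Subgroup (Equiv.Perm X))
    (hM : IsLocalMoufangSet r U) (o i : X) (hoi : ¬ r.r o i)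
    (α : X → Equiv.Perm X) (hα : ∀ y : X, ¬ r.r y i → α y ∈ U i ∧ α y o = y)
    (τ : Equiv.Perm X) (e : X) (heo : ¬ r.r e o) (hei : ¬ r.r e i)
    (hτ : IsMuMap U o i e τ)
    (hspecial : ∀ y : X, ¬ r.r y o → ¬ r.r y i → τ ((α y)⁻¹ o) = (α (τ y))⁻¹ o)
    (habel : ∀ a ∈ U i, ∀ b ∈ U i, a * b = b * a)
    (n : ℕ)
    (hdiv : ∀ x : X, ¬ r.r x o → ¬ r.r x i → ∀ k : ℕ, 1 ≤ k → k ≤ n →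
      ¬ r.r ((α x ^ k) o) o ∧ ¬ r.r ((α x ^ k) o) i) :
    ∀ k : ℕ, 1 ≤ k → k ≤ n → ∀ u ∈ U i,
      ∃! v : Equiv.Perm X, v ∈ U i ∧ v ^ k = u := by
  classical
  obtain ⟨a, haUi, hao, ⟨u', hu', v', hv', hform⟩, hτo, hτi⟩ := hτ
  have hτmem : τ ∈ ⨆ y : X, U y := by
    rw [hform]
    exact mul_mem (mul_mem ((le_iSup U o) hu') ((le_iSup U i) haUi)) ((le_iSup U o) hv')
  have hτpres : PreservesRel r τ := by
    rw [hform]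
    intro p q
    simp only [Equiv.Perm.mul_apply]
    exact ((hM.preserves o v' hv' p q).trans (hM.preserves i a haUi _ _)).trans
      (hM.preserves o u' hu' _ _)
  set C : LMS12.Ctx X :=
    ⟨r, U, hM, o, i, hoi, α, hα, τ, hτmem, hτpres, hτo, hτi, hspecial, habel⟩ with hC
  have hdiv' : ∀ x : X, C.unit x → ∀ k : ℕ, 1 ≤ k → k ≤ n →
      C.unit (C.zm x (k : ℤ)) := by
    intro x hx k h1 h2
    have hd := hdiv x hx.1 hx.2 k h1 h2
    constructor
    · rw [C.zm_nat]
      exact hd.1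
    · rw [C.zm_nat]
      exact hd.2
  intro k hk1 hkn u hu
  exact C.final n hdiv' k hk1 hkn u hu
end

section
/- Let (R,m) be a local ring. Then P¹(R̂) ≅ lim← P¹(R/mⁱ), the inverse limit being taken over the natural projections R/mⁱ → R/mʲ for i ≥ j, where R̂ = lim← R/mⁱ is the completion. -/
/-!
Statement 14: for a commutative local ring `(R, m)` with completion
`R̂ = lim← R/mⁱ`, the projective line satisfies `P¹(R̂) ≅ lim← P¹(R/mⁱ)`,
the isomorphism being induced by the projection maps.
-/

/-- The carrier of the projective line over `R`: pairs generating the unit ideal. -/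
def ProjCarrier (R : Type*) [CommRing R] : Type _ :=
  {p : R × R // Ideal.span {p.1, p.2} = ⊤}

/-- Unit rescaling on `ProjCarrier R`. -/
def projSetoid (R : Type*) [CommRing R] : Setoid (ProjCarrier R) where
  r p q := ∃ u : Rˣ, q.1.1 = u * p.1.1 ∧ q.1.2 = u * p.1.2
  iseqv := by
    refine ⟨fun p => ⟨1, by simp, by simp⟩, ?_, ?_⟩
    · rintro p q ⟨u, h1, h2⟩
      exact ⟨u⁻¹, by rw [h1, ← mul_assoc, Units.inv_mul, one_mul],
        by rw [h2, ← mul_assoc, Units.inv_mul, one_mul]⟩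
    · rintro p q s ⟨u, h1, h2⟩ ⟨w, h3, h4⟩
      exact ⟨w * u, by rw [h3, h1, Units.val_mul, mul_assoc],
        by rw [h4, h2, Units.val_mul, mul_assoc]⟩

/-- The projective line `P¹(R) = {[a, b] : aR + bR = R}` over a commutative ring. -/
def ProjLine (R : Type*) [CommRing R] : Type _ :=
  Quotient (projSetoid R)

/-- Functoriality of the projective line: `P¹(f)([a,b]) = [f a, f b]`. -/
def ProjLine.map {R S : Type*} [CommRing R] [CommRing S] (f : R →+* S) :
    ProjLine R → ProjLine S :=
  Quotient.map
    (fun p => ⟨(f p.1.1, f p.1.2), by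
      obtain ⟨u, v, huv⟩ := (Ideal.mem_span_pair).1
        (p.2 ▸ Submodule.mem_top (x := (1 : R)))
      rw [Ideal.eq_top_iff_one, Ideal.mem_span_pair]
      exact ⟨f u, f v, by rw [← map_mul, ← map_mul, ← map_add, huv, map_one]⟩⟩)
    (by
      rintro p q ⟨u, h1, h2⟩
      exact ⟨Units.map (f : R →* S) u, by simp [h1, h2]⟩)

/-- The completion `R̂ = lim← R/mⁱ` of `R` at an ideal `m`, realized as the subring of
compatible threads in `Π i, R ⧸ m ^ i`. -/
def adicInvLim (R : Type*) [CommRing R] (m : Ideal R) :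
    Subring (∀ i : ℕ, R ⧸ m ^ i) where
  carrier := {x | ∀ (i j : ℕ) (h : j ≤ i),
    Ideal.Quotient.factor (Ideal.pow_le_pow_right h) (x i) = x j}
  mul_mem' hx hy i j h := by
    simp only [Pi.mul_apply, map_mul, hx i j h, hy i j h]
  one_mem' i j h := by simp only [Pi.one_apply, map_one]
  add_mem' hx hy i j h := by
    simp only [Pi.add_apply, map_add, hx i j h, hy i j h]
  zero_mem' i j h := by simp only [Pi.zero_apply, map_zero]
  neg_mem' hx i j h := by simp only [Pi.neg_apply, map_neg, hx i j h]

namespace St14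

theorem ProjLine.map_map {A B C : Type*} [CommRing A] [CommRing B] [CommRing C]
    (f : A →+* B) (g : B →+* C) (q : ProjLine A) :
    ProjLine.map g (ProjLine.map f q) = ProjLine.map (g.comp f) q := by
  induction q using Quotient.ind
  rfl

variable {R : Type*} [CommRing R] [IsLocalRing R]

local notation "M" => IsLocalRing.maximalIdeal R

/-- the projection of the inverse limit to level `j`. -/
def pr (j : ℕ) : adicInvLim R M →+* R ⧸ M ^ j :=
  (Pi.evalRingHom (fun k : ℕ => R ⧸ M ^ k) j).comp (adicInvLim R M).subtype

theorem factor_comp_pr {i j : ℕ} (h : j ≤ i) :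
    (Ideal.Quotient.factor (Ideal.pow_le_pow_right h)).comp (pr i)
      = pr (R := R) j :=
  RingHom.ext fun x => x.2 i j h

instance : Subsingleton (R ⧸ M ^ 0) := by
  rw [pow_zero, Ideal.one_eq_top]
  exact Ideal.Quotient.subsingleton_iff.mpr rfl

theorem isUnit_mk_pow_iff {j : ℕ} (hj : 1 ≤ j) (r : R) :
    IsUnit (Ideal.Quotient.mk (M ^ j) r) ↔ IsUnit r := by
  constructor
  · intro h
    obtain ⟨b, hb⟩ := isUnit_iff_exists_inv.mp h
    obtain ⟨s, rfl⟩ := Ideal.Quotient.mk_surjective b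
    rw [← map_mul, ← map_one (Ideal.Quotient.mk (M ^ j)), Ideal.Quotient.mk_eq_mk_iff_sub_mem] at hb
    have hmem : r * s - 1 ∈ M := Ideal.pow_le_self (Nat.one_le_iff_ne_zero.mp hj) hb
    by_contra hr
    have hrM : r ∈ M := (IsLocalRing.mem_maximalIdeal r).mpr hr
    have : (1 : R) ∈ M := by
      have := sub_mem (Ideal.mul_mem_right s _ hrM) hmem
      simpa using this
    exact (IsLocalRing.maximalIdeal.isMaximal R).ne_top (Ideal.eq_top_of_isUnit_mem _ this isUnit_one)
  · exact fun h => h.map _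

theorem isUnit_of_factor {i j : ℕ} (hj : 1 ≤ j) (hji : j ≤ i) (y : R ⧸ M ^ i)
    (h : IsUnit (Ideal.Quotient.factor (Ideal.pow_le_pow_right hji) y)) :
    IsUnit y := by
  obtain ⟨r, rfl⟩ := Ideal.Quotient.mk_surjective y
  rw [Ideal.Quotient.factor_mk, isUnit_mk_pow_iff hj] at h
  exact (isUnit_mk_pow_iff (le_trans hj hji) r).mpr h

/-- An element of the inverse limit whose level-one component is a unit is a unit. -/
theorem isUnit_of_one (x : adicInvLim R M) (h : IsUnit (x.1 1)) : IsUnit x := by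
  have ha : ∀ j : ℕ, IsUnit (x.1 j) := by
    intro j
    rcases Nat.eq_zero_or_pos j with rfl | hj
    · exact (Subsingleton.elim (x.1 0) 1) ▸ isUnit_one
    · exact isUnit_of_factor le_rfl hj (x.1 j) (by rwa [x.2 j 1 hj])
  set y : ∀ j : ℕ, R ⧸ M ^ j := fun j => ↑(ha j).unit⁻¹ with hy
  have hmem : y ∈ adicInvLim R M := by
    intro i j h
    have h1 : Ideal.Quotient.factor (Ideal.pow_le_pow_right h) (y i) * x.1 j
        = 1 := by
      rw [← x.2 i j h, ← map_mul]
      simp [hy, IsUnit.val_inv_mul]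
    calc Ideal.Quotient.factor (Ideal.pow_le_pow_right h) (y i)
        = Ideal.Quotient.factor (Ideal.pow_le_pow_right h) (y i)
            * (x.1 j * y j) := by simp [hy, IsUnit.mul_val_inv]
      _ = (Ideal.Quotient.factor (Ideal.pow_le_pow_right h) (y i) * x.1 j)
            * y j := by ring
      _ = y j := by rw [h1, one_mul]
  refine IsUnit.of_mul_eq_one (a := x) ⟨y, hmem⟩ ?_
  ext j
  exact (ha j).mul_val_inv

theorem quot_isUnit_or {j : ℕ} (hj : 1 ≤ j) (a b : R ⧸ M ^ j)
    (h : Ideal.span {a, b} = ⊤) : IsUnit a ∨ IsUnit b := by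
  obtain ⟨u, v, huv⟩ := Ideal.mem_span_pair.mp (h ▸ Submodule.mem_top (x := (1 : R ⧸ M ^ j)))
  obtain ⟨ra, rfl⟩ := Ideal.Quotient.mk_surjective a
  obtain ⟨rb, rfl⟩ := Ideal.Quotient.mk_surjective b
  obtain ⟨s, rfl⟩ := Ideal.Quotient.mk_surjective u
  obtain ⟨t, rfl⟩ := Ideal.Quotient.mk_surjective v
  rw [isUnit_mk_pow_iff hj, isUnit_mk_pow_iff hj]
  by_contra hc
  push_neg at hc
  have hraM : ra ∈ M := (IsLocalRing.mem_maximalIdeal ra).mpr hc.1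
  have hrbM : rb ∈ M := (IsLocalRing.mem_maximalIdeal rb).mpr hc.2
  rw [← map_mul, ← map_mul, ← map_add, ← map_one (Ideal.Quotient.mk (M ^ j)),
    Ideal.Quotient.mk_eq_mk_iff_sub_mem] at huv
  have hmem : s * ra + t * rb - 1 ∈ M := Ideal.pow_le_self (Nat.one_le_iff_ne_zero.mp hj) huv
  have h1 : (1 : R) ∈ M := by
    have := sub_mem (add_mem (Ideal.mul_mem_left _ s hraM) (Ideal.mul_mem_left _ t hrbM)) hmem
    simpa using this
  exact (IsLocalRing.maximalIdeal.isMaximal R).ne_top (Ideal.eq_top_of_isUnit_mem _ h1 isUnit_one)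

theorem carrier_isUnit_or (p : ProjCarrier (adicInvLim R M)) :
    IsUnit p.1.1 ∨ IsUnit p.1.2 := by
  obtain ⟨u, v, huv⟩ := Ideal.mem_span_pair.mp
    (p.2 ▸ Submodule.mem_top (x := (1 : adicInvLim R M)))
  have h1 : Ideal.span {(p.1.1 : adicInvLim R M).1 1, (p.1.2 : adicInvLim R M).1 1} = ⊤ := by
    rw [Ideal.eq_top_iff_one, Ideal.mem_span_pair]
    exact ⟨u.1 1, v.1 1, congrFun (congrArg Subtype.val huv) 1⟩
  rcases quot_isUnit_or le_rfl _ _ h1 with h | h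
  · exact Or.inl (isUnit_of_one _ h)
  · exact Or.inr (isUnit_of_one _ h)

end St14

namespace St14
variable {R : Type*} [CommRing R] [IsLocalRing R]
local notation "M" => IsLocalRing.maximalIdeal R

/-- The forward map of the equivalence. -/
def E : ProjLine (adicInvLim R M) →
    {x : ∀ j : ℕ, ProjLine (R ⧸ M ^ j) //
      ∀ (i j : ℕ) (h : j ≤ i),
        ProjLine.map (Ideal.Quotient.factor (Ideal.pow_le_pow_right h)) (x i) = x j} :=
  fun q => ⟨fun j => ProjLine.map (pr j) q, fun i j h => by
    rw [ProjLine.map_map, factor_comp_pr h]⟩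

theorem rel_lift (a b c d : adicInvLim R M) (ha : IsUnit a)
    (hrel : ∀ j : ℕ, ∃ u : (R ⧸ M ^ j)ˣ, c.1 j = u * a.1 j ∧ d.1 j = u * b.1 j) :
    ∃ w : (adicInvLim R M)ˣ, c = ↑w * a ∧ d = ↑w * b := by
  have hc : IsUnit c := by
    obtain ⟨u, h1, _⟩ := hrel 1
    refine isUnit_of_one c ?_
    rw [h1]
    exact (Units.isUnit u).mul (ha.map (pr 1))
  have hkey : ∀ j, a.1 j * (↑ha.unit⁻¹ : adicInvLim R M).1 j = 1 := by
    intro j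
    exact congrFun (congrArg Subtype.val ha.mul_val_inv) j
  refine ⟨hc.unit * ha.unit⁻¹, ?_, ?_⟩
  · rw [Units.val_mul, mul_assoc, IsUnit.val_inv_mul, mul_one, IsUnit.unit_spec]
  · have hw : (↑(hc.unit * ha.unit⁻¹) : adicInvLim R M) = c * ↑ha.unit⁻¹ := by
      rw [Units.val_mul, IsUnit.unit_spec]
    rw [hw]
    refine Subtype.ext (funext fun j => ?_)
    obtain ⟨u, h1, h2⟩ := hrel j
    show d.1 j = c.1 j * (↑ha.unit⁻¹ : adicInvLim R M).1 j * b.1 j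
    calc d.1 j = ↑u * b.1 j := h2
      _ = ↑u * (a.1 j * (↑ha.unit⁻¹ : adicInvLim R M).1 j) * b.1 j := by
          rw [hkey j, mul_one]
      _ = (↑u * a.1 j) * (↑ha.unit⁻¹ : adicInvLim R M).1 j * b.1 j := by ring
      _ = c.1 j * (↑ha.unit⁻¹ : adicInvLim R M).1 j * b.1 j := by rw [h1]

theorem E_inj : Function.Injective (E (R := R)) := by
  refine fun q1 q2 => Quotient.inductionOn₂
    (motive := fun x y => E x = E y → x = y) q1 q2 fun p1 p2 h => ?_
  have hrel : ∀ j : ℕ, ∃ u : (R ⧸ M ^ j)ˣ,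
      (p2.1.1 : adicInvLim R M).1 j = u * (p1.1.1 : adicInvLim R M).1 j ∧
      (p2.1.2 : adicInvLim R M).1 j = u * (p1.1.2 : adicInvLim R M).1 j := by
    intro j
    have hj := congrFun (congrArg Subtype.val h) j
    exact Quotient.exact hj
  rcases carrier_isUnit_or p1 with ha | hb
  · obtain ⟨w, h1, h2⟩ := rel_lift p1.1.1 p1.1.2 p2.1.1 p2.1.2 ha hrel
    exact Quotient.sound ⟨w, h1, h2⟩
  · obtain ⟨w, h1, h2⟩ := rel_lift p1.1.2 p1.1.1 p2.1.2 p2.1.1 hb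
      (fun j => (hrel j).imp fun u hu => ⟨hu.2, hu.1⟩)
    exact Quotient.sound ⟨w, h2, h1⟩

theorem E_surj : Function.Surjective (E (R := R)) := by
  rintro ⟨x, hx⟩
  set p : ∀ j : ℕ, ProjCarrier (R ⧸ M ^ j) := fun j => (x j).out with hpdef
  have hpx : ∀ j, ⟦p j⟧ = x j := fun j => Quotient.out_eq _
  have hcompat : ∀ (i j : ℕ) (h : j ≤ i), ∃ u : (R ⧸ M ^ j)ˣ,
      (p j).1.1 = u * Ideal.Quotient.factor
        (Ideal.pow_le_pow_right h) ((p i).1.1) ∧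
      (p j).1.2 = u * Ideal.Quotient.factor
        (Ideal.pow_le_pow_right h) ((p i).1.2) := by
    intro i j h
    have hm := hx i j h
    rw [← hpx i, ← hpx j] at hm
    exact Quotient.exact hm
  rcases quot_isUnit_or le_rfl _ _ (p 1).2 with hA | hB
  · -- first coordinate is a unit
    have hAj : ∀ j, IsUnit (p j).1.1 := by
      intro j
      rcases Nat.eq_zero_or_pos j with rfl | hj
      · exact isUnit_of_subsingleton _
      · obtain ⟨u, h1, _⟩ := hcompat j 1 hj
        refine isUnit_of_factor le_rfl hj _ ?_
        have he : Ideal.Quotient.factor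
            (Ideal.pow_le_pow_right hj) ((p j).1.1) = ↑u⁻¹ * (p 1).1.1 := by
          rw [h1, ← mul_assoc, Units.inv_mul, one_mul]
        rw [he]
        exact (Units.isUnit u⁻¹).mul hA
    set t : ∀ j : ℕ, R ⧸ M ^ j := fun j => ↑(hAj j).unit⁻¹ * (p j).1.2 with htdef
    have htkey : ∀ j, (p j).1.1 * t j = (p j).1.2 := by
      intro j
      rw [htdef, ← mul_assoc, (hAj j).mul_val_inv, one_mul]
    have htmem : t ∈ adicInvLim R M := by
      intro i j h
      obtain ⟨u, h1, h2⟩ := hcompat i j h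
      have e1 : (p j).1.1 * Ideal.Quotient.factor
          (Ideal.pow_le_pow_right h) (t i) = (p j).1.2 := by
        rw [h1, mul_assoc, ← map_mul, htkey i, ← h2]
      exact (hAj j).mul_left_cancel (e1.trans (htkey j).symm)
    refine ⟨⟦⟨((1 : adicInvLim R M), ⟨t, htmem⟩), ?_⟩⟧, ?_⟩
    · rw [Ideal.eq_top_iff_one]
      exact Ideal.subset_span (Set.mem_insert _ _)
    · refine Subtype.ext (funext fun j => ?_)
      refine Eq.trans (Quotient.sound (a := p j) ?_).symm (hpx j)
      exact ⟨(hAj j).unit⁻¹, ((hAj j).val_inv_mul).symm, rfl⟩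
  · -- second coordinate is a unit
    have hBj : ∀ j, IsUnit (p j).1.2 := by
      intro j
      rcases Nat.eq_zero_or_pos j with rfl | hj
      · exact isUnit_of_subsingleton _
      · obtain ⟨u, _, h2⟩ := hcompat j 1 hj
        refine isUnit_of_factor le_rfl hj _ ?_
        have he : Ideal.Quotient.factor
            (Ideal.pow_le_pow_right hj) ((p j).1.2) = ↑u⁻¹ * (p 1).1.2 := by
          rw [h2, ← mul_assoc, Units.inv_mul, one_mul]
        rw [he]
        exact (Units.isUnit u⁻¹).mul hB
    set t : ∀ j : ℕ, R ⧸ M ^ j := fun j => ↑(hBj j).unit⁻¹ * (p j).1.1 with htdef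
    have htkey : ∀ j, (p j).1.2 * t j = (p j).1.1 := by
      intro j
      rw [htdef, ← mul_assoc, (hBj j).mul_val_inv, one_mul]
    have htmem : t ∈ adicInvLim R M := by
      intro i j h
      obtain ⟨u, h1, h2⟩ := hcompat i j h
      have e1 : (p j).1.2 * Ideal.Quotient.factor
          (Ideal.pow_le_pow_right h) (t i) = (p j).1.1 := by
        rw [h2, mul_assoc, ← map_mul, htkey i, ← h1]
      exact (hBj j).mul_left_cancel (e1.trans (htkey j).symm)
    refine ⟨⟦⟨(⟨t, htmem⟩, (1 : adicInvLim R M)), ?_⟩⟧, ?_⟩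
    · rw [Ideal.eq_top_iff_one]
      exact Ideal.subset_span (Set.mem_insert_of_mem _ rfl)
    · refine Subtype.ext (funext fun j => ?_)
      refine Eq.trans (Quotient.sound (a := p j) ?_).symm (hpx j)
      exact ⟨(hBj j).unit⁻¹, rfl, ((hBj j).val_inv_mul).symm⟩

end St14


/-- for a local ring `(R, m)` with completion `R̂ = lim← R/mⁱ`,
`P¹(R̂) ≅ lim← P¹(R/mⁱ)`: there is a bijection between `P¹(R̂)` and the inverse limit
of the sets `P¹(R/mⁱ)` (along the maps induced by the natural projections
`R/mⁱ → R/mʲ`, `i ≥ j`) whose components are the maps induced by the projections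
`R̂ → R/mʲ`. -/
theorem statement14 (R : Type*) [CommRing R] [IsLocalRing R] :
    ∃ e : ProjLine (adicInvLim R (IsLocalRing.maximalIdeal R)) ≃
        {x : ∀ j : ℕ, ProjLine (R ⧸ (IsLocalRing.maximalIdeal R) ^ j) //
          ∀ (i j : ℕ) (h : j ≤ i),
            ProjLine.map (Ideal.Quotient.factor (Ideal.pow_le_pow_right h)) (x i)
              = x j},
      ∀ (q : ProjLine (adicInvLim R (IsLocalRing.maximalIdeal R))) (j : ℕ),
        (e q).1 j = ProjLine.map
          ((Pi.evalRingHom (fun k : ℕ => R ⧸ (IsLocalRing.maximalIdeal R) ^ k) j).comp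
            (adicInvLim R (IsLocalRing.maximalIdeal R)).subtype) q :=
  ⟨Equiv.ofBijective St14.E ⟨St14.E_inj, St14.E_surj⟩, fun _ _ => rfl⟩
end

section
/- Let O be the valuation ring of a field K with discrete valuation, with uniformizer π, and fix a lattice L₀ = e₁O + e₂O in K². If L is a lattice not homothetic to L₀, maximal in its homothety class among lattices contained in L₀, and n = d([L₀],[L]), then L = (ae₁+be₂)O + πⁿL₀ for some a,b ∈ O with at least one of a, b invertible; conversely any lattice of this form with at least one of a,b invertible satisfies d([L₀],[L]) = n and is the unique lattice in its homothety class expressible this way. -/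
/-!
Statement 19: lattices over the valuation ring of a field with a discrete valuation.
We carry the discrete valuation as a surjective map `v : K → WithTop ℤ` satisfying
(DV0)-(DV2); the valuation ring is `O = {a : K | 0 ≤ v a}`, `π` is a uniformizer
(`v π = 1`).  Lattices in `K²` are `O`-spans of `K`-bases, realized as subsets of
`K × K`; homothety is scaling by a nonzero element of `K`.
-/

variable {K : Type*} [Field K]

/-- The valuation ring `O = {a : K | 0 ≤ v a}` of a discrete valuation, as a set. -/
def valRing (v : K → WithTop ℤ) : Set K := {a : K | 0 ≤ v a}

/-- The `O`-span of two vectors of `K²`. -/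
def span2 (v : K → WithTop ℤ) (a b : K × K) : Set (K × K) :=
  {p | ∃ s t : K, s ∈ valRing v ∧ t ∈ valRing v ∧ p = s • a + t • b}

/-- An `O`-lattice in `K²`: the `O`-span of a `K`-basis (a free rank-2 `O`-submodule
of `K²`). -/
def IsLattice (v : K → WithTop ℤ) (L : Set (K × K)) : Prop :=
  ∃ a b : K × K, LinearIndependent K ![a, b] ∧ L = span2 v a b

/-- Two subsets of `K²` are homothetic if one is a nonzero scalar multiple of the
other. -/
def Homothetic (L L' : Set (K × K)) : Prop :=
  ∃ c : K, c ≠ 0 ∧ (fun p : K × K => c • p) '' L = L'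

/-- The standard lattice `L₀ = e₁ O + e₂ O`. -/
def L0 (v : K → WithTop ℤ) : Set (K × K) := span2 v (1, 0) (0, 1)

/-- The lattice `(a e₁ + b e₂) O + πⁿ L₀`. -/
def formLat (v : K → WithTop ℤ) (π : K) (a b : K) (n : ℕ) : Set (K × K) :=
  {p | ∃ s : K, s ∈ valRing v ∧ ∃ q ∈ L0 v, p = s • ((a, b) : K × K) + (π ^ n) • q}

section helpers

variable (v : K → WithTop ℤ)
variable (hv0 : ∀ a : K, v a = ⊤ ↔ a = 0)
variable (hvmul : ∀ a b : K, v (a * b) = v a + v b)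
variable (hvadd : ∀ a b : K, min (v a) (v b) ≤ v (a + b))

include hv0 hvmul in
lemma v_one : v 1 = 0 := by
  have h1 : v 1 ≠ ⊤ := by simp only [ne_eq, hv0]; exact one_ne_zero
  have h2 : v 1 = v 1 + v 1 := by rw [← hvmul, one_mul]
  lift v 1 to ℤ using h1 with x
  have : (x:ℤ) = x + x := by exact_mod_cast h2
  have : x = 0 := by omega
  exact_mod_cast this

include hv0 hvmul in
lemma v_neg (a : K) : v (-a) = v a := by
  have hm1 : v (-1 : K) = 0 := by
    have h2 : v (-1 : K) + v (-1 : K) = 0 := by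
      rw [← hvmul]; norm_num; exact v_one v hv0 hvmul
    rcases eq_or_ne (v (-1 : K)) ⊤ with h | h
    · rw [h] at h2; simp at h2
    · lift v (-1:K) to ℤ using h with x
      have : (x:ℤ) + x = 0 := by exact_mod_cast h2
      have : x = 0 := by omega
      exact_mod_cast this
  rw [show -a = -1 * a by ring, hvmul, hm1, zero_add]

include hv0 hvmul in
lemma v_pow (π : K) (hπ : v π = 1) (k : ℕ) : v (π ^ k) = (k : ℤ) := by
  induction k with
  | zero => simpa using v_one v hv0 hvmul
  | succ k ih =>
    rw [pow_succ, hvmul, ih, hπ]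
    push_cast
    rfl

include hv0 in
lemma v_ne_top {a : K} (ha : a ≠ 0) : v a ≠ ⊤ := by simp only [ne_eq, hv0]; exact ha

include hv0 hvmul in
lemma v_inv0 {a : K} (ha : v a = 0) : v a⁻¹ = 0 := by
  have ha0 : a ≠ 0 := by intro h; rw [h, (hv0 0).mpr rfl] at ha; simp at ha
  have h2 : v a⁻¹ + v a = 0 := by rw [← hvmul, inv_mul_cancel₀ ha0]; exact v_one v hv0 hvmul
  rw [ha, add_zero] at h2
  exact h2

include hv0 hvmul in
lemma v_div_mem {x y : K} (hy : y ≠ 0) (h : v y ≤ v x) : x / y ∈ valRing v := by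
  show 0 ≤ v (x / y)
  rcases eq_or_ne x 0 with rfl | hx
  · rw [zero_div, (hv0 0).mpr rfl]; exact le_top
  · have hxy : x / y ≠ 0 := div_ne_zero hx hy
    have hvx : v x = v y + v (x / y) := by
      rw [← hvmul, mul_div_cancel₀ x hy]
    have hyt : v y ≠ ⊤ := v_ne_top v hv0 hy
    rw [hvx] at h
    have := (WithTop.add_le_add_iff_left hyt (y := 0) (z := v (x/y))).mp (by simpa using h)
    simpa using this

include hv0 in
lemma O_zero : (0:K) ∈ valRing v := by
  show 0 ≤ v 0; rw [(hv0 0).mpr rfl]; exact le_top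

include hv0 hvmul in
lemma O_one : (1:K) ∈ valRing v := by
  show 0 ≤ v 1; rw [v_one v hv0 hvmul]

include hvmul in
lemma O_mul {a b : K} (ha : a ∈ valRing v) (hb : b ∈ valRing v) : a * b ∈ valRing v := by
  show 0 ≤ v (a * b); rw [hvmul]; exact add_nonneg ha hb

include hvadd in
lemma O_add {a b : K} (ha : a ∈ valRing v) (hb : b ∈ valRing v) : a + b ∈ valRing v := by
  show 0 ≤ v (a + b); exact le_trans (le_min ha hb) (hvadd a b)

include hv0 hvmul in
lemma O_neg {a : K} (ha : a ∈ valRing v) : -a ∈ valRing v := by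
  show 0 ≤ v (-a); rw [v_neg v hv0 hvmul]; exact ha

lemma memL0 (p : K × K) : p ∈ L0 v ↔ 0 ≤ v p.1 ∧ 0 ≤ v p.2 := by
  constructor
  · rintro ⟨s, t, hs, ht, rfl⟩
    simp only [Prod.smul_mk, smul_eq_mul, Prod.mk_add_mk, mul_one, mul_zero, add_zero, zero_add]
    exact ⟨hs, ht⟩
  · rintro ⟨h1, h2⟩
    exact ⟨p.1, p.2, h1, h2, by simp⟩

include hvmul in
lemma L0_smul {s : K} (hs : s ∈ valRing v) {p : K × K} (hp : p ∈ L0 v) : s • p ∈ L0 v := by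
  rw [memL0] at hp ⊢
  constructor <;> simp only [Prod.smul_fst, Prod.smul_snd, smul_eq_mul, hvmul] <;>
    exact add_nonneg hs (by tauto)

include hv0 hvmul hvadd in
lemma formLat_sub_L0 {π a b : K} {n : ℕ} (ha : a ∈ valRing v) (hb : b ∈ valRing v)
    (hπO : π ∈ valRing v) : formLat v π a b n ⊆ L0 v := by
  rintro p ⟨s, hs, q, hq, rfl⟩
  rw [memL0] at hq ⊢
  have hπn : (π ^ n) ∈ valRing v := by
    induction n with
    | zero => rw [pow_zero]; exact O_one v hv0 hvmul
    | succ n ih => rw [pow_succ]; exact O_mul v hvmul ih hπO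
  constructor
  · show 0 ≤ v (s * a + π ^ n * q.1)
    exact O_add v hvadd (O_mul v hvmul hs ha) (O_mul v hvmul hπn hq.1)
  · show 0 ≤ v (s * b + π ^ n * q.2)
    exact O_add v hvadd (O_mul v hvmul hs hb) (O_mul v hvmul hπn hq.2)

end helpers

section helpers2

variable (v : K → WithTop ℤ)
variable (hv0 : ∀ a : K, v a = ⊤ ↔ a = 0)
variable (hvmul : ∀ a b : K, v (a * b) = v a + v b)
variable (hvadd : ∀ a b : K, min (v a) (v b) ≤ v (a + b))

include hv0 hvmul in
lemma mem_span2_left (a b : K × K) : a ∈ span2 v a b :=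
  ⟨1, 0, O_one v hv0 hvmul, O_zero v hv0, by simp⟩

include hv0 hvmul in
lemma mem_span2_right (a b : K × K) : b ∈ span2 v a b :=
  ⟨0, 1, O_zero v hv0, O_one v hv0 hvmul, by simp⟩

include hvmul hvadd in
lemma span2_closed {a b x y : K × K} (hx : x ∈ span2 v a b) (hy : y ∈ span2 v a b)
    {s t : K} (hs : s ∈ valRing v) (ht : t ∈ valRing v) : s • x + t • y ∈ span2 v a b := by
  obtain ⟨s₁, t₁, hs₁, ht₁, rfl⟩ := hx
  obtain ⟨s₂, t₂, hs₂, ht₂, rfl⟩ := hy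
  refine ⟨s * s₁ + t * s₂, s * t₁ + t * t₂,
    O_add v hvadd (O_mul v hvmul hs hs₁) (O_mul v hvmul ht hs₂),
    O_add v hvadd (O_mul v hvmul hs ht₁) (O_mul v hvmul ht ht₂), ?_⟩
  module

include hvmul in
lemma formLat_smul {π a b : K} {n : ℕ} {s : K} (hs : s ∈ valRing v) {p : K × K}
    (hp : p ∈ formLat v π a b n) : s • p ∈ formLat v π a b n := by
  obtain ⟨t, ht, q, hq, rfl⟩ := hp
  exact ⟨s * t, O_mul v hvmul hs ht, s • q, L0_smul v hvmul hs hq, by module⟩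

lemma lin2 {u w : K × K} (h : u.1 * w.2 - u.2 * w.1 ≠ 0) : LinearIndependent K ![u, w] := by
  rw [LinearIndependent.pair_iff]
  intro s t hst
  have h1 : s * u.1 + t * w.1 = 0 := congrArg Prod.fst hst
  have h2 : s * u.2 + t * w.2 = 0 := congrArg Prod.snd hst
  constructor
  · have : s * (u.1 * w.2 - u.2 * w.1) = 0 := by linear_combination w.2 * h1 - w.1 * h2
    exact (mul_eq_zero.mp this).resolve_right h
  · have : t * (u.1 * w.2 - u.2 * w.1) = 0 := by linear_combination (-u.2) * h1 + u.1 * h2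
    exact (mul_eq_zero.mp this).resolve_right h

include hv0 hvmul hvadd in
lemma core1 (π : K) (hπ : v π = 1)
    (L : Set (K × K)) (n : ℕ)
    (hsub : L ⊆ L0 v)
    (hclosed : ∀ x ∈ L, ∀ y ∈ L, ∀ s t : K, s ∈ valRing v → t ∈ valRing v → s • x + t • y ∈ L)
    (hin : ∀ p ∈ L0 v, (π ^ n) • p ∈ L)
    (hmin : ∀ m : ℕ, m < n → ¬ ∀ p ∈ L0 v, (π ^ m) • p ∈ L)
    (u : K × K) (hu : u ∈ L) (hu1 : v u.1 = 0) :
    L = formLat v π u.1 u.2 n := by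
  have hπ0 : π ≠ 0 := by intro h; rw [h, (hv0 0).mpr rfl] at hπ; simp at hπ
  have ha0 : u.1 ≠ 0 := by intro h; rw [h, (hv0 0).mpr rfl] at hu1; simp at hu1
  have hπn0 : π ^ n ≠ 0 := pow_ne_zero n hπ0
  have hu2O : 0 ≤ v u.2 := ((memL0 v u).mp (hsub hu)).2
  apply Set.Subset.antisymm
  · intro p hp
    obtain ⟨hp1, hp2⟩ := (memL0 v p).mp (hsub hp)
    set c := p.1 / u.1 with hc_def
    have hcO : c ∈ valRing v := v_div_mem v hv0 hvmul ha0 (by rw [hu1]; exact hp1)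
    have hcu : c * u.1 = p.1 := div_mul_cancel₀ p.1 ha0
    set d := p.2 - c * u.2 with hd_def
    have hq : ((0:K), d) ∈ L := by
      have h := hclosed p hp u hu 1 (-c) (O_one v hv0 hvmul) (O_neg v hv0 hvmul hcO)
      have heq : (1:K) • p + (-c) • u = ((0:K), d) := by
        rw [Prod.ext_iff]
        constructor
        · show 1 * p.1 + (-c) * u.1 = 0
          linear_combination -hcu
        · show 1 * p.2 + (-c) * u.2 = d
          rw [hd_def]; ring
      rwa [heq] at h
    have hdO : 0 ≤ v d := by
      rw [show d = p.2 + -(c * u.2) by rw [hd_def]; ring]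
      exact O_add v hvadd hp2 (O_neg v hv0 hvmul (O_mul v hvmul hcO hu2O))
    have hdn : ((n:ℤ) : WithTop ℤ) ≤ v d := by
      by_contra hlt
      push_neg at hlt
      have hd0 : d ≠ 0 := by
        intro h
        rw [h, (hv0 0).mpr rfl] at hlt
        exact absurd hlt (by simp)
      have hdne : v d ≠ ⊤ := ne_top_of_lt hlt
      lift v d to ℤ using hdne with z hz
      have hz0 : 0 ≤ z := by exact_mod_cast hdO
      have hzn : z < (n:ℤ) := by exact_mod_cast hlt
      set m := z.toNat with hm_def
      have hmz : (m : ℤ) = z := Int.toNat_of_nonneg hz0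
      have hvd : v d = ((m : ℤ) : WithTop ℤ) := by rw [← hz, hmz]
      have hmn : m < n := by omega
      apply hmin m hmn
      intro r hr
      obtain ⟨hr1, hr2⟩ := (memL0 v r).mp hr
      set s := π ^ m * r.1 / u.1 with hs_def
      have hsu : s * u.1 = π ^ m * r.1 := div_mul_cancel₀ _ ha0
      have hsO : s ∈ valRing v := v_div_mem v hv0 hvmul ha0 (by
        rw [hu1, hvmul, v_pow v hv0 hvmul π hπ]
        exact add_nonneg (by exact_mod_cast Int.natCast_nonneg m) hr1)
      have hvs : ((m:ℤ) : WithTop ℤ) ≤ v s := by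
        have h2 : v s = v (π ^ m * r.1) := by rw [← hsu, hvmul, hu1, add_zero]
        rw [h2, hvmul, v_pow v hv0 hvmul π hπ]
        exact le_add_of_nonneg_right hr1
      set t := (π ^ m * r.2 - s * u.2) / d with ht_def
      have htd : t * d = π ^ m * r.2 - s * u.2 := div_mul_cancel₀ _ hd0
      have htO : t ∈ valRing v := v_div_mem v hv0 hvmul hd0 (by
        rw [hvd, show π ^ m * r.2 - s * u.2 = π ^ m * r.2 + -(s * u.2) by ring]
        refine le_trans (le_min ?_ ?_) (hvadd _ _)
        · rw [hvmul, v_pow v hv0 hvmul π hπ]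
          exact le_add_of_nonneg_right hr2
        · rw [v_neg v hv0 hvmul, hvmul]
          exact le_trans hvs (le_add_of_nonneg_right hu2O))
      have heq : s • u + t • ((0:K), d) = (π ^ m) • r := by
        rw [Prod.ext_iff]
        constructor
        · show s * u.1 + t * 0 = π ^ m * r.1
          rw [mul_zero, add_zero, hsu]
        · show s * u.2 + t * d = π ^ m * r.2
          rw [htd]; ring
      rw [← heq]
      exact hclosed u hu _ hq s t hsO htO
    refine ⟨c, hcO, ((0:K), d / π ^ n), ?_, ?_⟩
    · rw [memL0]
      refine ⟨by rw [(hv0 0).mpr rfl]; exact le_top, ?_⟩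
      exact v_div_mem v hv0 hvmul hπn0 (by rw [v_pow v hv0 hvmul π hπ]; exact hdn)
    · rw [Prod.ext_iff]
      constructor
      · show p.1 = c * u.1 + π ^ n * 0
        rw [mul_zero, add_zero, hcu]
      · show p.2 = c * u.2 + π ^ n * (d / π ^ n)
        rw [mul_comm (π ^ n), div_mul_cancel₀ _ hπn0, hd_def]; ring
  · rintro p ⟨s, hs, q, hq, rfl⟩
    have h2 := hclosed u hu _ (hin q hq) s 1 hs (O_one v hv0 hvmul)
    simpa using h2

include hv0 hvmul hvadd in
lemma core1' (π : K) (hπ : v π = 1)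
    (L : Set (K × K)) (n : ℕ)
    (hsub : L ⊆ L0 v)
    (hclosed : ∀ x ∈ L, ∀ y ∈ L, ∀ s t : K, s ∈ valRing v → t ∈ valRing v → s • x + t • y ∈ L)
    (hin : ∀ p ∈ L0 v, (π ^ n) • p ∈ L)
    (hmin : ∀ m : ℕ, m < n → ¬ ∀ p ∈ L0 v, (π ^ m) • p ∈ L)
    (u : K × K) (hu : u ∈ L) (hu2 : v u.2 = 0) :
    L = formLat v π u.1 u.2 n := by
  have hπ0 : π ≠ 0 := by intro h; rw [h, (hv0 0).mpr rfl] at hπ; simp at hπ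
  have hb0 : u.2 ≠ 0 := by intro h; rw [h, (hv0 0).mpr rfl] at hu2; simp at hu2
  have hπn0 : π ^ n ≠ 0 := pow_ne_zero n hπ0
  have hu1O : 0 ≤ v u.1 := ((memL0 v u).mp (hsub hu)).1
  apply Set.Subset.antisymm
  · intro p hp
    obtain ⟨hp1, hp2⟩ := (memL0 v p).mp (hsub hp)
    set c := p.2 / u.2 with hc_def
    have hcO : c ∈ valRing v := v_div_mem v hv0 hvmul hb0 (by rw [hu2]; exact hp2)
    have hcu : c * u.2 = p.2 := div_mul_cancel₀ p.2 hb0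
    set d := p.1 - c * u.1 with hd_def
    have hq : (d, (0:K)) ∈ L := by
      have h := hclosed p hp u hu 1 (-c) (O_one v hv0 hvmul) (O_neg v hv0 hvmul hcO)
      have heq : (1:K) • p + (-c) • u = (d, (0:K)) := by
        rw [Prod.ext_iff]
        constructor
        · show 1 * p.1 + (-c) * u.1 = d
          rw [hd_def]; ring
        · show 1 * p.2 + (-c) * u.2 = 0
          linear_combination -hcu
      rwa [heq] at h
    have hdO : 0 ≤ v d := by
      rw [show d = p.1 + -(c * u.1) by rw [hd_def]; ring]
      exact O_add v hvadd hp1 (O_neg v hv0 hvmul (O_mul v hvmul hcO hu1O))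
    have hdn : ((n:ℤ) : WithTop ℤ) ≤ v d := by
      by_contra hlt
      push_neg at hlt
      have hd0 : d ≠ 0 := by
        intro h
        rw [h, (hv0 0).mpr rfl] at hlt
        exact absurd hlt (by simp)
      have hdne : v d ≠ ⊤ := ne_top_of_lt hlt
      lift v d to ℤ using hdne with z hz
      have hz0 : 0 ≤ z := by exact_mod_cast hdO
      have hzn : z < (n:ℤ) := by exact_mod_cast hlt
      set m := z.toNat with hm_def
      have hmz : (m : ℤ) = z := Int.toNat_of_nonneg hz0
      have hvd : v d = ((m : ℤ) : WithTop ℤ) := by rw [← hz, hmz]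
      have hmn : m < n := by omega
      apply hmin m hmn
      intro r hr
      obtain ⟨hr1, hr2⟩ := (memL0 v r).mp hr
      set s := π ^ m * r.2 / u.2 with hs_def
      have hsu : s * u.2 = π ^ m * r.2 := div_mul_cancel₀ _ hb0
      have hsO : s ∈ valRing v := v_div_mem v hv0 hvmul hb0 (by
        rw [hu2, hvmul, v_pow v hv0 hvmul π hπ]
        exact add_nonneg (by exact_mod_cast Int.natCast_nonneg m) hr2)
      have hvs : ((m:ℤ) : WithTop ℤ) ≤ v s := by
        have h2 : v s = v (π ^ m * r.2) := by rw [← hsu, hvmul, hu2, add_zero]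
        rw [h2, hvmul, v_pow v hv0 hvmul π hπ]
        exact le_add_of_nonneg_right hr2
      set t := (π ^ m * r.1 - s * u.1) / d with ht_def
      have htd : t * d = π ^ m * r.1 - s * u.1 := div_mul_cancel₀ _ hd0
      have htO : t ∈ valRing v := v_div_mem v hv0 hvmul hd0 (by
        rw [hvd, show π ^ m * r.1 - s * u.1 = π ^ m * r.1 + -(s * u.1) by ring]
        refine le_trans (le_min ?_ ?_) (hvadd _ _)
        · rw [hvmul, v_pow v hv0 hvmul π hπ]
          exact le_add_of_nonneg_right hr1
        · rw [v_neg v hv0 hvmul, hvmul]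
          exact le_trans hvs (le_add_of_nonneg_right hu1O))
      have heq : s • u + t • ((d, (0:K)) : K × K) = (π ^ m) • r := by
        rw [Prod.ext_iff]
        constructor
        · show s * u.1 + t * d = π ^ m * r.1
          rw [htd]; ring
        · show s * u.2 + t * 0 = π ^ m * r.2
          rw [mul_zero, add_zero, hsu]
      rw [← heq]
      exact hclosed u hu _ hq s t hsO htO
    refine ⟨c, hcO, (d / π ^ n, (0:K)), ?_, ?_⟩
    · rw [memL0]
      refine ⟨?_, by rw [(hv0 0).mpr rfl]; exact le_top⟩
      exact v_div_mem v hv0 hvmul hπn0 (by rw [v_pow v hv0 hvmul π hπ]; exact hdn)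
    · rw [Prod.ext_iff]
      constructor
      · show p.1 = c * u.1 + π ^ n * (d / π ^ n)
        rw [mul_comm (π ^ n), div_mul_cancel₀ _ hπn0, hd_def]; ring
      · show p.2 = c * u.2 + π ^ n * 0
        rw [mul_zero, add_zero, hcu]
  · rintro p ⟨s, hs, q, hq, rfl⟩
    have h2 := hclosed u hu _ (hin q hq) s 1 hs (O_one v hv0 hvmul)
    simpa using h2

end helpers2

section helpers3

variable (v : K → WithTop ℤ)
variable (hv0 : ∀ a : K, v a = ⊤ ↔ a = 0)
variable (hvmul : ∀ a b : K, v (a * b) = v a + v b)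
variable (hvadd : ∀ a b : K, min (v a) (v b) ≤ v (a + b))

lemma wt_one_le {x : WithTop ℤ} (h0 : 0 ≤ x) (hne : x ≠ 0) : 1 ≤ x := by
  induction x using WithTop.recTopCoe with
  | top => exact le_top
  | coe z =>
    have h1 : (0:ℤ) ≤ z := by exact_mod_cast h0
    have h2 : z ≠ 0 := by exact_mod_cast hne
    exact_mod_cast (by omega : (1:ℤ) ≤ z)

include hv0 hvmul in
lemma O_pow {π : K} (hπO : π ∈ valRing v) (n : ℕ) : π ^ n ∈ valRing v := by
  induction n with
  | zero => rw [pow_zero]; exact O_one v hv0 hvmul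
  | succ n ih => rw [pow_succ]; exact O_mul v hvmul ih hπO

include hv0 hvmul hvadd in
lemma formLat_eq_span2_a (π : K) (hπO : π ∈ valRing v) {a b : K} (hb : b ∈ valRing v)
    (ha : v a = 0) (n : ℕ) :
    formLat v π a b n = span2 v (a, b) (0, π ^ n) := by
  have ha0 : a ≠ 0 := by intro h; rw [h, (hv0 0).mpr rfl] at ha; simp at ha
  apply Set.Subset.antisymm
  · rintro p ⟨s, hs, q, hq, rfl⟩
    obtain ⟨hq1, hq2⟩ := (memL0 v q).mp hq
    have hπnO : π ^ n ∈ valRing v := O_pow v hv0 hvmul hπO n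
    have hd1 : π ^ n * q.1 / a ∈ valRing v := v_div_mem v hv0 hvmul ha0 (by
      rw [ha]; exact O_mul v hvmul hπnO hq1)
    have hd2 : q.1 * b / a ∈ valRing v := v_div_mem v hv0 hvmul ha0 (by
      rw [ha]; exact O_mul v hvmul hq1 hb)
    refine ⟨s + π ^ n * q.1 / a, q.2 - q.1 * b / a, O_add v hvadd hs hd1, ?_, ?_⟩
    · rw [sub_eq_add_neg]
      exact O_add v hvadd hq2 (O_neg v hv0 hvmul hd2)
    · rw [Prod.ext_iff]
      constructor
      · show s * a + π ^ n * q.1 = (s + π ^ n * q.1 / a) * a + (q.2 - q.1 * b / a) * 0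
        field_simp
        ring
      · show s * b + π ^ n * q.2 = (s + π ^ n * q.1 / a) * b + (q.2 - q.1 * b / a) * π ^ n
        field_simp
        ring
  · rintro _ ⟨s, t, hs, ht, rfl⟩
    refine ⟨s, hs, ((0:K), t), (memL0 v _).mpr ⟨O_zero v hv0, ht⟩, ?_⟩
    rw [Prod.ext_iff]
    constructor
    · show s * a + t * 0 = s * a + π ^ n * 0
      ring
    · show s * b + t * π ^ n = s * b + π ^ n * t
      ring

include hv0 hvmul hvadd in
lemma formLat_eq_span2_b (π : K) (hπO : π ∈ valRing v) {a b : K} (ha : a ∈ valRing v)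
    (hbv : v b = 0) (n : ℕ) :
    formLat v π a b n = span2 v (a, b) (π ^ n, 0) := by
  have hb0 : b ≠ 0 := by intro h; rw [h, (hv0 0).mpr rfl] at hbv; simp at hbv
  apply Set.Subset.antisymm
  · rintro p ⟨s, hs, q, hq, rfl⟩
    obtain ⟨hq1, hq2⟩ := (memL0 v q).mp hq
    have hπnO : π ^ n ∈ valRing v := O_pow v hv0 hvmul hπO n
    have hd1 : π ^ n * q.2 / b ∈ valRing v := v_div_mem v hv0 hvmul hb0 (by
      rw [hbv]; exact O_mul v hvmul hπnO hq2)
    have hd2 : q.2 * a / b ∈ valRing v := v_div_mem v hv0 hvmul hb0 (by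
      rw [hbv]; exact O_mul v hvmul hq2 ha)
    refine ⟨s + π ^ n * q.2 / b, q.1 - q.2 * a / b, O_add v hvadd hs hd1, ?_, ?_⟩
    · rw [sub_eq_add_neg]
      exact O_add v hvadd hq1 (O_neg v hv0 hvmul hd2)
    · rw [Prod.ext_iff]
      constructor
      · show s * a + π ^ n * q.1 = (s + π ^ n * q.2 / b) * a + (q.1 - q.2 * a / b) * π ^ n
        field_simp
        ring
      · show s * b + π ^ n * q.2 = (s + π ^ n * q.2 / b) * b + (q.1 - q.2 * a / b) * 0
        field_simp
        ring
  · rintro _ ⟨s, t, hs, ht, rfl⟩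
    refine ⟨s, hs, (t, (0:K)), (memL0 v _).mpr ⟨ht, O_zero v hv0⟩, ?_⟩
    rw [Prod.ext_iff]
    constructor
    · show s * a + t * π ^ n = s * a + π ^ n * t
      ring
    · show s * b + t * 0 = s * b + π ^ n * 0
      ring

end helpers3

/-- let `O` be the valuation ring of a field `K` with a discrete
valuation `v` and uniformizer `π`, and `L₀` the standard lattice in `K²`.
(1) If `L` is a lattice not homothetic to `L₀`, maximal in its homothety class among
lattices contained in `L₀`, and `n = d([L₀],[L])` (i.e. `n` is minimal with
`πⁿ L₀ ⊆ L`), then `L = (a e₁ + b e₂) O + πⁿ L₀` for some `a, b ∈ O` with at least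
one of `a, b` invertible in `O` (i.e. of valuation `0`).
(2) Conversely, any set of this form (with at least one of `a, b` of valuation `0`)
which is not homothetic to `L₀` is a lattice at distance `n` from `L₀` (it is
contained in `L₀`, maximal in its class there, and `n` is minimal with
`πⁿ L₀ ⊆ L`), and it is the unique lattice in its homothety class expressible in
this way. -/
theorem statement19 (v : K → WithTop ℤ)
    (hv0 : ∀ a : K, v a = ⊤ ↔ a = 0)
    (hvmul : ∀ a b : K, v (a * b) = v a + v b)
    (hvadd : ∀ a b : K, min (v a) (v b) ≤ v (a + b))
    (hvsurj : Function.Surjective v)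
    (π : K) (hπ : v π = 1) :
    (∀ (L : Set (K × K)) (n : ℕ), IsLattice v L → ¬ Homothetic L (L0 v) →
      L ⊆ L0 v →
      (∀ c : K, c ≠ 0 → (fun p : K × K => c • p) '' L ⊆ L0 v →
        (fun p : K × K => c • p) '' L ⊆ L) →
      (∀ p ∈ L0 v, (π ^ n) • p ∈ L) →
      (∀ m : ℕ, m < n → ¬ ∀ p ∈ L0 v, (π ^ m) • p ∈ L) →
      ∃ a b : K, a ∈ valRing v ∧ b ∈ valRing v ∧ (v a = 0 ∨ v b = 0) ∧
        L = formLat v π a b n) ∧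
    (∀ (a b : K) (n : ℕ), a ∈ valRing v → b ∈ valRing v → (v a = 0 ∨ v b = 0) →
      ¬ Homothetic (formLat v π a b n) (L0 v) →
      IsLattice v (formLat v π a b n) ∧
      formLat v π a b n ⊆ L0 v ∧
      (∀ c : K, c ≠ 0 → (fun p : K × K => c • p) '' (formLat v π a b n) ⊆ L0 v →
        (fun p : K × K => c • p) '' (formLat v π a b n) ⊆ formLat v π a b n) ∧
      (∀ p ∈ L0 v, (π ^ n) • p ∈ formLat v π a b n) ∧
      (∀ m : ℕ, m < n → ¬ ∀ p ∈ L0 v, (π ^ m) • p ∈ formLat v π a b n) ∧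
      (∀ (a' b' : K) (m : ℕ), a' ∈ valRing v → b' ∈ valRing v →
        (v a' = 0 ∨ v b' = 0) →
        Homothetic (formLat v π a b n) (formLat v π a' b' m) →
        formLat v π a' b' m = formLat v π a b n)) := by
  have hπ0 : π ≠ 0 := by intro h; rw [h, (hv0 0).mpr rfl] at hπ; simp at hπ
  have hπO : π ∈ valRing v := by show 0 ≤ v π; rw [hπ]; exact zero_le_one
  have hL0e1 : ((1:K),(0:K)) ∈ L0 v := (memL0 v _).mpr ⟨O_one v hv0 hvmul, O_zero v hv0⟩
  have hL0e2 : ((0:K),(1:K)) ∈ L0 v := (memL0 v _).mpr ⟨O_zero v hv0, O_one v hv0 hvmul⟩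
  constructor
  · rintro L n ⟨x, w, hind, rfl⟩ hnh hsub hmax hin hmin
    have hclosed : ∀ p ∈ span2 v x w, ∀ q ∈ span2 v x w, ∀ s t : K,
        s ∈ valRing v → t ∈ valRing v → s • p + t • q ∈ span2 v x w :=
      fun p hp q hq s t hs ht => span2_closed v hvmul hvadd hp hq hs ht
    have hx := mem_span2_left v hv0 hvmul x w
    have hw := mem_span2_right v hv0 hvmul x w
    obtain ⟨hx1, hx2⟩ := (memL0 v x).mp (hsub hx)
    obtain ⟨hw1, hw2⟩ := (memL0 v w).mp (hsub hw)
    by_cases h1 : v x.1 = 0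
    · exact ⟨x.1, x.2, hx1, hx2, Or.inl h1,
        core1 v hv0 hvmul hvadd π hπ _ n hsub hclosed hin hmin x hx h1⟩
    by_cases h2 : v x.2 = 0
    · exact ⟨x.1, x.2, hx1, hx2, Or.inr h2,
        core1' v hv0 hvmul hvadd π hπ _ n hsub hclosed hin hmin x hx h2⟩
    by_cases h3 : v w.1 = 0
    · exact ⟨w.1, w.2, hw1, hw2, Or.inl h3,
        core1 v hv0 hvmul hvadd π hπ _ n hsub hclosed hin hmin w hw h3⟩
    by_cases h4 : v w.2 = 0
    · exact ⟨w.1, w.2, hw1, hw2, Or.inr h4,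
        core1' v hv0 hvmul hvadd π hπ _ n hsub hclosed hin hmin w hw h4⟩
    · exfalso
      have hx1' : 1 ≤ v x.1 := wt_one_le hx1 h1
      have hx2' : 1 ≤ v x.2 := wt_one_le hx2 h2
      have hw1' : 1 ≤ v w.1 := wt_one_le hw1 h3
      have hw2' : 1 ≤ v w.2 := wt_one_le hw2 h4
      have hπi0 : π⁻¹ ≠ 0 := inv_ne_zero hπ0
      have hπinv : v π⁻¹ + 1 = 0 := by
        rw [← hπ, ← hvmul, inv_mul_cancel₀ hπ0]
        exact v_one v hv0 hvmul
      have himg : (fun p : K × K => π⁻¹ • p) '' (span2 v x w) ⊆ L0 v := by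
        rintro _ ⟨p, ⟨s, t, hs, ht, rfl⟩, rfl⟩
        rw [memL0]
        constructor
        · show 0 ≤ v (π⁻¹ * (s * x.1 + t * w.1))
          rw [hvmul]
          have hv1 : (1 : WithTop ℤ) ≤ v (s * x.1 + t * w.1) := by
            refine le_trans (le_min ?_ ?_) (hvadd _ _)
            · rw [hvmul]; exact le_trans hx1' (le_add_of_nonneg_left hs)
            · rw [hvmul]; exact le_trans hw1' (le_add_of_nonneg_left ht)
          calc (0 : WithTop ℤ) = v π⁻¹ + 1 := hπinv.symm
          _ ≤ v π⁻¹ + v (s * x.1 + t * w.1) := add_le_add (le_refl _) hv1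
        · show 0 ≤ v (π⁻¹ * (s * x.2 + t * w.2))
          rw [hvmul]
          have hv1 : (1 : WithTop ℤ) ≤ v (s * x.2 + t * w.2) := by
            refine le_trans (le_min ?_ ?_) (hvadd _ _)
            · rw [hvmul]; exact le_trans hx2' (le_add_of_nonneg_left hs)
            · rw [hvmul]; exact le_trans hw2' (le_add_of_nonneg_left ht)
          calc (0 : WithTop ℤ) = v π⁻¹ + 1 := hπinv.symm
          _ ≤ v π⁻¹ + v (s * x.2 + t * w.2) := add_le_add (le_refl _) hv1
      have hdown : ∀ p ∈ span2 v x w, π⁻¹ • p ∈ span2 v x w := by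
        intro p hp
        exact hmax π⁻¹ hπi0 himg ⟨p, hp, rfl⟩
      have hiter : ∀ m : ℕ, ∀ p : K × K, (π ^ m) • p ∈ span2 v x w → p ∈ span2 v x w := by
        intro m
        induction m with
        | zero => intro p hp; simpa using hp
        | succ m ih =>
          intro p hp
          have h1' : (π ^ m) • (π • p) ∈ span2 v x w := by
            rw [smul_smul, ← pow_succ]
            exact hp
          have h2' : π • p ∈ span2 v x w := ih _ h1'
          have h3' := hdown _ h2'
          rwa [smul_smul, inv_mul_cancel₀ hπ0, one_smul] at h3'
      have he1 : ((1:K),(0:K)) ∈ span2 v x w := hiter n _ (hin _ hL0e1)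
      have he2 : ((0:K),(1:K)) ∈ span2 v x w := hiter n _ (hin _ hL0e2)
      have hL0sub : L0 v ⊆ span2 v x w := by
        intro p hp
        obtain ⟨hp1, hp2⟩ := (memL0 v p).mp hp
        have hc := hclosed _ he1 _ he2 p.1 p.2 hp1 hp2
        have heq : p.1 • (((1:K),(0:K)) : K × K) + p.2 • (((0:K),(1:K)) : K × K) = p := by
          rw [Prod.ext_iff]
          constructor
          · show p.1 * 1 + p.2 * 0 = p.1
            ring
          · show p.1 * 0 + p.2 * 1 = p.2
            ring
        rwa [heq] at hc
      exact hnh ⟨1, one_ne_zero, by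
        rw [show (fun p : K × K => (1:K) • p) = id from funext fun p => one_smul K p,
          Set.image_id]
        exact Set.Subset.antisymm hsub hL0sub⟩
  · rintro a b n ha hb hab hnh
    have hπn0 : π ^ n ≠ 0 := pow_ne_zero n hπ0
    have habF : ((a,b) : K × K) ∈ formLat v π a b n :=
      ⟨1, O_one v hv0 hvmul, ((0:K),(0:K)), (memL0 v _).mpr ⟨O_zero v hv0, O_zero v hv0⟩, by
        rw [Prod.ext_iff]
        constructor
        · show a = 1 * a + π ^ n * 0; ring
        · show b = 1 * b + π ^ n * 0; ring⟩
    refine ⟨?_, formLat_sub_L0 v hv0 hvmul hvadd ha hb hπO, ?_, ?_, ?_, ?_⟩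
    · rcases hab with ha0 | hb0
      · refine ⟨(a,b), ((0:K), π ^ n), lin2 ?_, formLat_eq_span2_a v hv0 hvmul hvadd π hπO hb ha0 n⟩
        show a * π ^ n - b * 0 ≠ 0
        have ha0' : a ≠ 0 := by intro h; rw [h, (hv0 0).mpr rfl] at ha0; simp at ha0
        simpa using mul_ne_zero ha0' hπn0
      · refine ⟨(a,b), (π ^ n, (0:K)), lin2 ?_, formLat_eq_span2_b v hv0 hvmul hvadd π hπO ha hb0 n⟩
        show a * 0 - b * π ^ n ≠ 0
        have hb0' : b ≠ 0 := by intro h; rw [h, (hv0 0).mpr rfl] at hb0; simp at hb0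
        simpa using mul_ne_zero hb0' hπn0
    · intro c hc0 himg
      have h1 : c • ((a,b) : K × K) ∈ L0 v := himg ⟨_, habF, rfl⟩
      have hca : 0 ≤ v (c * a) := ((memL0 v _).mp h1).1
      have hcb : 0 ≤ v (c * b) := ((memL0 v _).mp h1).2
      have hcO : c ∈ valRing v := by
        rcases hab with ha0 | hb0
        · show 0 ≤ v c
          rw [show v c = v (c * a) by rw [hvmul, ha0, add_zero]]
          exact hca
        · show 0 ≤ v c
          rw [show v c = v (c * b) by rw [hvmul, hb0, add_zero]]
          exact hcb
      rintro _ ⟨p, hp, rfl⟩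
      exact formLat_smul v hvmul hcO hp
    · intro p hp
      refine ⟨0, O_zero v hv0, p, hp, ?_⟩
      rw [Prod.ext_iff]
      constructor
      · show π ^ n * p.1 = 0 * a + π ^ n * p.1; ring
      · show π ^ n * p.2 = 0 * b + π ^ n * p.2; ring
    · intro m hmn hall
      rcases hab with ha0 | hb0
      · obtain ⟨s, hs, q, hq, heq⟩ := hall ((0:K),(1:K)) hL0e2
        obtain ⟨hq1, hq2⟩ := (memL0 v q).mp hq
        have h1 : π ^ m * 0 = s * a + π ^ n * q.1 := congrArg Prod.fst heq
        have h2 : π ^ m * 1 = s * b + π ^ n * q.2 := congrArg Prod.snd heq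
        have hsa : s * a = -(π ^ n * q.1) := by linear_combination -h1
        have hvs : ((n:ℤ) : WithTop ℤ) ≤ v s := by
          rw [show v s = v (s * a) by rw [hvmul, ha0, add_zero], hsa,
            v_neg v hv0 hvmul, hvmul, v_pow v hv0 hvmul π hπ]
          exact le_add_of_nonneg_right hq1
        have hm' : ((n:ℤ) : WithTop ℤ) ≤ v (π ^ m) := by
          rw [mul_one] at h2
          rw [h2]
          refine le_trans (le_min ?_ ?_) (hvadd _ _)
          · rw [hvmul]; exact le_trans hvs (le_add_of_nonneg_right hb)
          · rw [hvmul, v_pow v hv0 hvmul π hπ]; exact le_add_of_nonneg_right hq2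
        rw [v_pow v hv0 hvmul π hπ] at hm'
        have : (n:ℤ) ≤ (m:ℤ) := by exact_mod_cast hm'
        omega
      · obtain ⟨s, hs, q, hq, heq⟩ := hall ((1:K),(0:K)) hL0e1
        obtain ⟨hq1, hq2⟩ := (memL0 v q).mp hq
        have h1 : π ^ m * 1 = s * a + π ^ n * q.1 := congrArg Prod.fst heq
        have h2 : π ^ m * 0 = s * b + π ^ n * q.2 := congrArg Prod.snd heq
        have hsb : s * b = -(π ^ n * q.2) := by linear_combination -h2
        have hvs : ((n:ℤ) : WithTop ℤ) ≤ v s := by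
          rw [show v s = v (s * b) by rw [hvmul, hb0, add_zero], hsb,
            v_neg v hv0 hvmul, hvmul, v_pow v hv0 hvmul π hπ]
          exact le_add_of_nonneg_right hq2
        have hm' : ((n:ℤ) : WithTop ℤ) ≤ v (π ^ m) := by
          rw [mul_one] at h1
          rw [h1]
          refine le_trans (le_min ?_ ?_) (hvadd _ _)
          · rw [hvmul]; exact le_trans hvs (le_add_of_nonneg_right ha)
          · rw [hvmul, v_pow v hv0 hvmul π hπ]; exact le_add_of_nonneg_right hq1
        rw [v_pow v hv0 hvmul π hπ] at hm'
        have : (n:ℤ) ≤ (m:ℤ) := by exact_mod_cast hm'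
        omega
    · rintro a' b' m ha' hb' hab' ⟨c, hc0, hceq⟩
      have hsub' : formLat v π a' b' m ⊆ L0 v := formLat_sub_L0 v hv0 hvmul hvadd ha' hb' hπO
      have hsubF : formLat v π a b n ⊆ L0 v := formLat_sub_L0 v hv0 hvmul hvadd ha hb hπO
      have h1 : c • ((a,b) : K × K) ∈ formLat v π a' b' m := hceq ▸ Set.mem_image_of_mem _ habF
      have hca : 0 ≤ v (c * a) := ((memL0 v _).mp (hsub' h1)).1
      have hcb : 0 ≤ v (c * b) := ((memL0 v _).mp (hsub' h1)).2
      have hc1 : 0 ≤ v c := by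
        rcases hab with ha0 | hb0
        · rw [show v c = v (c * a) by rw [hvmul, ha0, add_zero]]; exact hca
        · rw [show v c = v (c * b) by rw [hvmul, hb0, add_zero]]; exact hcb
      have hab'F' : ((a',b') : K × K) ∈ formLat v π a' b' m :=
        ⟨1, O_one v hv0 hvmul, ((0:K),(0:K)), (memL0 v _).mpr ⟨O_zero v hv0, O_zero v hv0⟩, by
          rw [Prod.ext_iff]
          constructor
          · show a' = 1 * a' + π ^ m * 0; ring
          · show b' = 1 * b' + π ^ m * 0; ring⟩
      rw [← hceq] at hab'F'
      obtain ⟨p, hpF, hpc⟩ := hab'F'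
      obtain ⟨hp1, hp2⟩ := (memL0 v p).mp (hsubF hpF)
      have hc2 : v c ≤ 0 := by
        rcases hab' with h | h
        · have e1 : c * p.1 = a' := congrArg Prod.fst hpc
          have e2 : v c + v p.1 = 0 := by rw [← hvmul, e1, h]
          calc v c ≤ v c + v p.1 := le_add_of_nonneg_right hp1
          _ = 0 := e2
        · have e1 : c * p.2 = b' := congrArg Prod.snd hpc
          have e2 : v c + v p.2 = 0 := by rw [← hvmul, e1, h]
          calc v c ≤ v c + v p.2 := le_add_of_nonneg_right hp2
          _ = 0 := e2
      have hvc : v c = 0 := le_antisymm hc2 hc1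
      have hvcinv : v c⁻¹ = 0 := v_inv0 v hv0 hvmul hvc
      apply Set.Subset.antisymm
      · rw [← hceq]
        rintro _ ⟨r, hr, rfl⟩
        exact formLat_smul v hvmul (show c ∈ valRing v from by show 0 ≤ v c; rw [hvc]) hr
      · intro r hr
        have h3 : c • r ∈ formLat v π a' b' m := hceq ▸ Set.mem_image_of_mem _ hr
        have h4 := formLat_smul v hvmul
          (show c⁻¹ ∈ valRing v from by show 0 ≤ v c⁻¹; rw [hvcinv]) h3
        rwa [smul_smul, inv_mul_cancel₀ hc0, one_smul] at h4
end
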